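/- arXiv:2301.05956 — 6 statements merged into one kernel-verified Lean document; each statement's English description precedes it below -/
import Mathlib

section
/- Let n, m ≥ 1 and let L₁,…,L_n and M₁,…,M_m be linear orders such that a linear order occurs (up to order isomorphism) among the nonempty orders in the list L₁,…,L_n if and only if it occurs among the nonempty orders in the list M₁,…,M_m. Then Ξ(L₁,…,L_n) ≅ Ξ(M₁,…,M_m). In particular, the shuffle is invariant under permuting its arguments, repeating arguments, and inserting or deleting copies of the empty order 𝟎 (as long as at least one argument remains). -/
/-- A subset of `ℚ` that is dense in the order of `ℚ`. -/
def DenseQ (D : Set ℚ) : Prop := ∀ a b : ℚ, a < b → ∃ q ∈ D, a < q ∧ q < b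

noncomputable section ShuffleAux

open Order

theorem DenseQ.between_finsets {D : Set ℚ} (hD : DenseQ D) (lo hi : Finset ℚ)
    (h : ∀ x ∈ lo, ∀ y ∈ hi, x < y) :
    ∃ m ∈ D, (∀ x ∈ lo, x < m) ∧ ∀ y ∈ hi, m < y := by
  by_cases nlo : lo.Nonempty <;> by_cases nhi : hi.Nonempty
  · obtain ⟨m, hm, h1, h2⟩ :=
      hD (lo.max' nlo) (hi.min' nhi) (h _ (lo.max'_mem nlo) _ (hi.min'_mem nhi))
    exact ⟨m, hm, fun x hx => (Finset.le_max' lo x hx).trans_lt h1,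
      fun y hy => h2.trans_le (hi.min'_le y hy)⟩
  · obtain ⟨m, hm, h1, -⟩ := hD (lo.max' nlo) (lo.max' nlo + 1) (by linarith)
    exact ⟨m, hm, fun x hx => (Finset.le_max' lo x hx).trans_lt h1,
      fun y hy => absurd ⟨y, hy⟩ nhi⟩
  · obtain ⟨m, hm, -, h2⟩ := hD (hi.min' nhi - 1) (hi.min' nhi) (by linarith)
    exact ⟨m, hm, fun x hx => absurd ⟨x, hx⟩ nlo,
      fun y hy => h2.trans_le (hi.min'_le y hy)⟩
  · obtain ⟨m, hm, -, -⟩ := hD 0 1 one_pos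
    exact ⟨m, hm, fun x hx => absurd ⟨x, hx⟩ nlo, fun y hy => absurd ⟨y, hy⟩ nhi⟩

variable {C : Type*}

/-- Colored finite partial order isomorphisms of `ℚ`. -/
def CPI (c d : ℚ → C) : Type _ :=
  { f : Finset (ℚ × ℚ) //
    (∀ p ∈ f, c p.1 = d p.2) ∧
      ∀ p ∈ f, ∀ q ∈ f, cmp p.1 q.1 = cmp p.2 q.2 }

namespace CPI

variable {c d : ℚ → C}

instance (c d : ℚ → C) : Inhabited (CPI c d) :=
  ⟨⟨∅, fun p hp => absurd hp (Finset.notMem_empty _),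
     fun p hp => absurd hp (Finset.notMem_empty _)⟩⟩

instance (c d : ℚ → C) : Preorder (CPI c d) := Subtype.preorder _

theorem exists_across (hcd : ∀ q : ℚ, DenseQ (d ⁻¹' {c q})) (F : CPI c d) (a : ℚ) :
    ∃ b : ℚ, d b = c a ∧ ∀ p ∈ F.val, cmp p.1 a = cmp p.2 b := by
  by_cases h : ∃ b, (a, b) ∈ F.val
  · obtain ⟨b, hb⟩ := h
    exact ⟨b, (F.prop.1 _ hb).symm, fun p hp => F.prop.2 _ hp _ hb⟩
  have key : ∀ x ∈ (F.val.filter fun p : ℚ × ℚ => p.1 < a).image Prod.snd,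
      ∀ y ∈ (F.val.filter fun p : ℚ × ℚ => a < p.1).image Prod.snd, x < y := by
    intro x hx y hy
    rw [Finset.mem_image] at hx hy
    rcases hx with ⟨p, hp1, rfl⟩
    rcases hy with ⟨q, hq1, rfl⟩
    rw [Finset.mem_filter] at hp1 hq1
    rw [← lt_iff_lt_of_cmp_eq_cmp (F.prop.2 _ hp1.1 _ hq1.1)]
    exact lt_trans hp1.2 hq1.2
  obtain ⟨b, hbD, hb1, hb2⟩ := (hcd a).between_finsets _ _ key
  refine ⟨b, hbD, ?_⟩
  rintro ⟨p1, p2⟩ hp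
  have hne : p1 ≠ a := fun he => h ⟨p2, he ▸ hp⟩
  rcases lt_or_gt_of_ne hne with hl | hr
  · have h2 : p1 < a ∧ p2 < b :=
      ⟨hl, hb1 _ (Finset.mem_image.mpr ⟨(p1, p2), Finset.mem_filter.mpr ⟨hp, hl⟩, rfl⟩)⟩
    rw [← cmp_eq_lt_iff, ← cmp_eq_lt_iff] at h2
    exact h2.1.trans h2.2.symm
  · have h2 : a < p1 ∧ b < p2 :=
      ⟨hr, hb2 _ (Finset.mem_image.mpr ⟨(p1, p2), Finset.mem_filter.mpr ⟨hp, hr⟩, rfl⟩)⟩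
    rw [← cmp_eq_gt_iff, ← cmp_eq_gt_iff] at h2
    exact h2.1.trans h2.2.symm

/-- Extendability on the left. -/
def definedAtLeft (hcd : ∀ q : ℚ, DenseQ (d ⁻¹' {c q})) (a : ℚ) :
    Cofinal (CPI c d) where
  carrier := {F | ∃ b : ℚ, (a, b) ∈ F.val}
  isCofinal F := by
    obtain ⟨b, hbc, hb⟩ := exists_across hcd F a
    refine ⟨⟨insert (a, b) F.val, fun p hp => ?_, fun p hp q hq => ?_⟩,
      ⟨b, Finset.mem_insert_self _ _⟩, Finset.subset_insert _ _⟩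
    · rcases Finset.mem_insert.1 hp with rfl | hp
      · exact hbc.symm
      · exact F.prop.1 _ hp
    · rcases Finset.mem_insert.1 hp with rfl | hp <;> rcases Finset.mem_insert.1 hq with rfl | hq
      · simp only [cmp_self_eq_eq]
      · rw [cmp_eq_cmp_symm]; exact hb _ hq
      · exact hb _ hp
      · exact F.prop.2 _ hp _ hq

theorem mem_swap {f : Finset (ℚ × ℚ)} {p : ℚ × ℚ} :
    p ∈ f.image Prod.swap ↔ p.swap ∈ f := by
  constructor
  · intro h
    obtain ⟨q, hq, rfl⟩ := Finset.mem_image.1 h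
    simpa using hq
  · intro h
    exact Finset.mem_image.2 ⟨p.swap, h, Prod.swap_swap p⟩

/-- Swapping a colored partial isomorphism. -/
def comm (F : CPI c d) : CPI d c :=
  ⟨F.val.image Prod.swap,
    fun p hp => (F.prop.1 p.swap (mem_swap.1 hp)).symm,
    fun p hp q hq => (F.prop.2 p.swap (mem_swap.1 hp) q.swap (mem_swap.1 hq)).symm⟩

/-- Extendability on the right. -/
def definedAtRight (hdc : ∀ q : ℚ, DenseQ (c ⁻¹' {d q})) (b : ℚ) :
    Cofinal (CPI c d) where
  carrier := {F | ∃ a : ℚ, (a, b) ∈ F.val}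
  isCofinal F := by
    obtain ⟨F', ⟨a, ha⟩, hsub⟩ := (definedAtLeft hdc b).isCofinal F.comm
    refine ⟨F'.comm, ⟨a, ?_⟩, fun x hx => ?_⟩
    · exact mem_swap.2 ha
    · exact mem_swap.2 (hsub (mem_swap.2 (by simpa using hx)))

end CPI

/-- The colored back-and-forth theorem on `ℚ`. -/
theorem exists_colored_orderIso (c d : ℚ → C)
    (hcd : ∀ q : ℚ, DenseQ (d ⁻¹' {c q})) (hdc : ∀ q : ℚ, DenseQ (c ⁻¹' {d q})) :
    ∃ φ : ℚ ≃o ℚ, ∀ q : ℚ, d (φ q) = c q := by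
  classical
  let to_cofinal : ℚ ⊕ ℚ → Cofinal (CPI c d) := fun p =>
    Sum.recOn p (fun a => CPI.definedAtLeft hcd a) (fun b => CPI.definedAtRight hdc b)
  let I : Ideal (CPI c d) := idealOfCofinals default to_cofinal
  have hFa : ∀ a : ℚ, ∃ b : ℚ, ∃ F ∈ I, (a, b) ∈ F.val := by
    intro a
    obtain ⟨F, ⟨b, hb⟩, hFI⟩ := cofinal_meets_idealOfCofinals default to_cofinal (Sum.inl a)
    exact ⟨b, F, hFI, hb⟩
  have hGb : ∀ b : ℚ, ∃ a : ℚ, ∃ F ∈ I, (a, b) ∈ F.val := by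
    intro b
    obtain ⟨F, ⟨a, ha⟩, hFI⟩ := cofinal_meets_idealOfCofinals default to_cofinal (Sum.inr b)
    exact ⟨a, F, hFI, ha⟩
  choose fm hfm using hFa
  choose gm hgm using hGb
  have cmp_eq : ∀ a b : ℚ, cmp a (gm b) = cmp (fm a) b := by
    intro a b
    obtain ⟨F, hFI, haF⟩ := hfm a
    obtain ⟨G, hGI, hbG⟩ := hgm b
    obtain ⟨H, _, hFH, hGH⟩ := I.directed _ hFI _ hGI
    exact H.prop.2 (a, fm a) (hFH haF) (gm b, b) (hGH hbG)
  refine ⟨OrderIso.ofCmpEqCmp fm gm cmp_eq, fun q => ?_⟩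
  obtain ⟨F, _, hqF⟩ := hfm q
  exact (F.prop.1 (q, fm q) hqF).symm

/-- A subtype of `ℚ` containing a dense subset of `ℚ` is order isomorphic to `ℚ`. -/
theorem orderIsoQ_of_denseQ {P : ℚ → Prop} {D : Set ℚ} (hD : DenseQ D)
    (hsub : ∀ q ∈ D, P q) : Nonempty ({q : ℚ // P q} ≃o ℚ) := by
  haveI : Nonempty {q : ℚ // P q} := by
    obtain ⟨q, hq, -⟩ := hD 0 1 one_pos
    exact ⟨⟨q, hsub q hq⟩⟩
  haveI : DenselyOrdered {q : ℚ // P q} := ⟨by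
    rintro ⟨a, ha⟩ ⟨b, hb⟩ hab
    obtain ⟨q, hq, h1, h2⟩ := hD a b (Subtype.mk_lt_mk.1 hab)
    exact ⟨⟨q, hsub q hq⟩, Subtype.mk_lt_mk.2 h1, Subtype.mk_lt_mk.2 h2⟩⟩
  haveI : NoMaxOrder {q : ℚ // P q} := ⟨by
    rintro ⟨a, ha⟩
    obtain ⟨q, hq, h1, -⟩ := hD a (a + 1) (by linarith)
    exact ⟨⟨q, hsub q hq⟩, Subtype.mk_lt_mk.2 h1⟩⟩
  haveI : NoMinOrder {q : ℚ // P q} := ⟨by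
    rintro ⟨a, ha⟩
    obtain ⟨q, hq, -, h2⟩ := hD (a - 1) a (by linarith)
    exact ⟨⟨q, hsub q hq⟩, Subtype.mk_lt_mk.2 h2⟩⟩
  exact Order.iso_of_countable_dense _ _

/-- Congruence of lexicographic sigma orders. -/
noncomputable def sigmaLexCongr {ι κ : Type*} [LinearOrder ι] [LinearOrder κ]
    {F : ι → Type*} {G : κ → Type*} [∀ i, LinearOrder (F i)] [∀ k, LinearOrder (G k)]
    (e : ι ≃o κ) (h : ∀ i, F i ≃o G (e i)) : (Σₗ i, F i) ≃o (Σₗ k, G k) :=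
  StrictMono.orderIsoOfSurjective
    (fun x => toLex ⟨e (ofLex x).1, h _ (ofLex x).2⟩)
    (by
      intro x y hxy
      cases hxy with
      | left a b hij => exact Sigma.Lex.left _ _ (e.lt_iff_lt.2 hij)
      | right a b hab => exact Sigma.Lex.right _ _ ((h _).lt_iff_lt.2 hab))
    (by
      rintro ⟨k, y⟩
      obtain ⟨i, rfl⟩ := e.surjective k
      refine ⟨toLex (⟨i, (h i).symm y⟩ : Σ i, F i), ?_⟩
      show toLex (⟨e i, (h i) ((h i).symm y)⟩ : Σ k, G k) = _
      rw [OrderIso.apply_symm_apply]; rfl)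

/-- Dropping the empty fibers of a lexicographic sigma order. -/
noncomputable def sigmaLexSubtypeIso {ι : Type*} [LinearOrder ι] (F : ι → Type*)
    [∀ i, LinearOrder (F i)] :
    (Σₗ i : {i : ι // Nonempty (F i)}, F i.1) ≃o (Σₗ i, F i) :=
  StrictMono.orderIsoOfSurjective
    (fun x => toLex ⟨(ofLex x).1.1, (ofLex x).2⟩)
    (by
      intro x y hxy
      cases hxy with
      | left a b hij => exact Sigma.Lex.left _ _ (Subtype.coe_lt_coe.2 hij)
      | right a b hab => exact Sigma.Lex.right _ _ hab)
    (by
      rintro ⟨i, x⟩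
      exact ⟨toLex ⟨⟨i, ⟨x⟩⟩, x⟩, rfl⟩)

end ShuffleAux

/-- the shuffle only depends on the multiset of isomorphism classes of the
nonempty orders in the list (whence it is invariant under permuting arguments, repeating
arguments, and inserting or deleting copies of the empty order `𝟎`). -/
theorem shuffle_well_defined {n m : ℕ} (hn : 1 ≤ n) (hm : 1 ≤ m)
    (L : Fin n → Type*) (M : Fin m → Type*)
    [∀ i, LinearOrder (L i)] [∀ j, LinearOrder (M j)]
    (f : ℚ → Fin n) (g : ℚ → Fin m)
    (hf : ∀ i : Fin n, DenseQ (f ⁻¹' {i}))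
    (hg : ∀ j : Fin m, DenseQ (g ⁻¹' {j}))
    (hLM : ∀ i : Fin n, Nonempty (L i) → ∃ j : Fin m, Nonempty (L i ≃o M j))
    (hML : ∀ j : Fin m, Nonempty (M j) → ∃ i : Fin n, Nonempty (M j ≃o L i)) :
    Nonempty ((Σₗ q : ℚ, L (f q)) ≃o (Σₗ q : ℚ, M (g q))) := by
  classical
  by_cases hne : ∃ i : Fin n, Nonempty (L i)
  · -- main case
    obtain ⟨i₀, hi₀⟩ := hne
    obtain ⟨j₀, hj₀e⟩ := hLM i₀ hi₀
    have hj₀ : Nonempty (M j₀) := hj₀e.elim fun e => ⟨e hi₀.some⟩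
    -- isomorphisms of the nonempty parts with ℚ
    obtain ⟨e₀⟩ := orderIsoQ_of_denseQ (P := fun q => Nonempty (L (f q))) (hf i₀)
      (fun q hq => by
        have h : f q = i₀ := hq
        show Nonempty (L (f q))
        rw [h]; exact hi₀)
    obtain ⟨e₁⟩ := orderIsoQ_of_denseQ (P := fun q => Nonempty (M (g q))) (hg j₀)
      (fun q hq => by
        have h : g q = j₀ := hq
        show Nonempty (M (g q))
        rw [h]; exact hj₀)
    -- class representatives
    set SL : Fin n → Finset (Fin m) :=
      fun i => Finset.univ.filter fun j => Nonempty (L i ≃o M j) with hSLdef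
    set SM : Fin m → Finset (Fin m) :=
      fun j => Finset.univ.filter fun j' => Nonempty (M j ≃o M j') with hSMdef
    have hSM : ∀ j, (SM j).Nonempty := fun j =>
      ⟨j, by simp only [hSMdef, Finset.mem_filter, Finset.mem_univ, true_and]
             exact ⟨OrderIso.refl _⟩⟩
    have hSL : ∀ i, Nonempty (L i) → (SL i).Nonempty := by
      intro i h
      obtain ⟨j, hj⟩ := hLM i h
      exact ⟨j, by simp only [hSLdef, Finset.mem_filter, Finset.mem_univ, true_and]
                   exact hj⟩
    have hSLM : ∀ i j, Nonempty (L i ≃o M j) → SL i = SM j := by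
      rintro i j ⟨e⟩
      ext j'
      simp only [hSLdef, hSMdef, Finset.mem_filter, Finset.mem_univ, true_and]
      exact ⟨fun ⟨e'⟩ => ⟨e.symm.trans e'⟩, fun ⟨e'⟩ => ⟨e.trans e'⟩⟩
    have min'_congr : ∀ (s t : Finset (Fin m)) (hs : s.Nonempty) (ht : t.Nonempty),
        s = t → s.min' hs = t.min' ht := by
      rintro s t hs ht rfl; rfl
    -- the colorings
    set c : ℚ → Fin m := fun r => (SL (f (e₀.symm r).1)).min' (hSL _ (e₀.symm r).2) with hcdef
    set d : ℚ → Fin m := fun r => (SM (g (e₁.symm r).1)).min' (hSM _) with hddef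
    have memSL : ∀ (i : Fin n) (j : Fin m), j ∈ SL i → Nonempty (L i ≃o M j) := by
      intro i j hj
      simpa only [hSLdef, Finset.mem_filter, Finset.mem_univ, true_and] using hj
    have memSM : ∀ (j j' : Fin m), j' ∈ SM j → Nonempty (M j ≃o M j') := by
      intro j j' hj
      simpa only [hSMdef, Finset.mem_filter, Finset.mem_univ, true_and] using hj
    -- density of colors
    have hcd : ∀ r : ℚ, DenseQ (d ⁻¹' {c r}) := by
      intro r
      have hLi : Nonempty (L (f (e₀.symm r).1)) := (e₀.symm r).2
      set i := f (e₀.symm r).1 with hidef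
      set j := (SL i).min' (hSL i hLi) with hjdef
      have hMj : Nonempty (L i ≃o M j) := memSL _ _ (Finset.min'_mem _ _)
      have hMjne : Nonempty (M j) := hMj.elim fun e => ⟨e hLi.some⟩
      have hSLij : SL i = SM j := hSLM i j hMj
      have hcol : ∀ s : ℚ, g (e₁.symm s).1 = j → d s = c r := by
        intro s hs
        show (SM (g (e₁.symm s).1)).min' _ = (SL i).min' _
        exact min'_congr _ _ _ _ (by rw [hs, ← hSLij])
      intro a b hab
      obtain ⟨q, hq, h1, h2⟩ := hg j (e₁.symm a).1 (e₁.symm b).1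
        (Subtype.coe_lt_coe.2 (e₁.symm.lt_iff_lt.2 hab))
      have hq' : g q = j := hq
      have hqQ : Nonempty (M (g q)) := by rw [hq']; exact hMjne
      refine ⟨e₁ ⟨q, hqQ⟩, ?_, ?_, ?_⟩
      · show d (e₁ ⟨q, hqQ⟩) = c r
        refine hcol _ ?_
        rw [e₁.symm_apply_apply]
        exact hq'
      · calc a = e₁ (e₁.symm a) := (e₁.apply_symm_apply a).symm
          _ < e₁ ⟨q, hqQ⟩ := e₁.lt_iff_lt.2 (Subtype.mk_lt_mk.2 h1)
      · calc e₁ ⟨q, hqQ⟩ < e₁ (e₁.symm b) := e₁.lt_iff_lt.2 (Subtype.mk_lt_mk.2 h2)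
          _ = b := e₁.apply_symm_apply b
    have hdc : ∀ r : ℚ, DenseQ (c ⁻¹' {d r}) := by
      intro r
      have hMj : Nonempty (M (g (e₁.symm r).1)) := (e₁.symm r).2
      set j := g (e₁.symm r).1 with hjdef
      obtain ⟨i, hij⟩ := hML j hMj
      have hLi : Nonempty (L i) := hij.elim fun e => ⟨e hMj.some⟩
      have hji : Nonempty (L i ≃o M j) := hij.elim fun e => ⟨e.symm⟩
      have hSLij : SL i = SM j := hSLM i j hji
      have hcol : ∀ s : ℚ, f (e₀.symm s).1 = i → c s = d r := by
        intro s hs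
        show (SL (f (e₀.symm s).1)).min' _ = (SM j).min' _
        exact min'_congr _ _ _ _ (by rw [hs, hSLij])
      intro a b hab
      obtain ⟨q, hq, h1, h2⟩ := hf i (e₀.symm a).1 (e₀.symm b).1
        (Subtype.coe_lt_coe.2 (e₀.symm.lt_iff_lt.2 hab))
      have hq' : f q = i := hq
      have hqQ : Nonempty (L (f q)) := by rw [hq']; exact hLi
      refine ⟨e₀ ⟨q, hqQ⟩, ?_, ?_, ?_⟩
      · show c (e₀ ⟨q, hqQ⟩) = d r
        refine hcol _ ?_
        rw [e₀.symm_apply_apply]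
        exact hq'
      · calc a = e₀ (e₀.symm a) := (e₀.apply_symm_apply a).symm
          _ < e₀ ⟨q, hqQ⟩ := e₀.lt_iff_lt.2 (Subtype.mk_lt_mk.2 h1)
      · calc e₀ ⟨q, hqQ⟩ < e₀ (e₀.symm b) := e₀.lt_iff_lt.2 (Subtype.mk_lt_mk.2 h2)
          _ = b := e₀.apply_symm_apply b
    obtain ⟨φ, hφ⟩ := exists_colored_orderIso c d hcd hdc
    -- fiber isomorphisms
    have fib : ∀ r : ℚ,
        Nonempty (L (f (e₀.symm r).1) ≃o M (g (e₁.symm (φ r)).1)) := by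
      intro r
      have hLi : Nonempty (L (f (e₀.symm r).1)) := (e₀.symm r).2
      set i := f (e₀.symm r).1 with hidef
      set j := g (e₁.symm (φ r)).1 with hjdef
      have h1 : d (φ r) = c r := hφ r
      have h2 : (SM j).min' (hSM j) = (SL i).min' (hSL i hLi) := h1
      have hk1 : (SL i).min' (hSL i hLi) ∈ SL i := Finset.min'_mem _ _
      have hk2 : (SL i).min' (hSL i hLi) ∈ SM j := h2 ▸ Finset.min'_mem _ _
      obtain ⟨eL⟩ := memSL _ _ hk1
      obtain ⟨eM⟩ := memSM _ _ hk2
      exact ⟨eL.trans eM.symm⟩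
    refine ⟨?_⟩
    have Φ₁ : (Σₗ q : ℚ, L (f q)) ≃o
        (Σₗ q : {q : ℚ // Nonempty (L (f q))}, L (f q.1)) :=
      (sigmaLexSubtypeIso (fun q => L (f q))).symm
    have Φ₂ : (Σₗ r : ℚ, L (f (e₀.symm r).1)) ≃o
        (Σₗ q : {q : ℚ // Nonempty (L (f q))}, L (f q.1)) :=
      sigmaLexCongr e₀.symm (fun r => OrderIso.refl _)
    have Φ₃ : (Σₗ r : ℚ, L (f (e₀.symm r).1)) ≃o
        (Σₗ s : ℚ, M (g (e₁.symm s).1)) :=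
      sigmaLexCongr φ (fun r => Classical.choice (fib r))
    have Φ₄ : (Σₗ s : ℚ, M (g (e₁.symm s).1)) ≃o
        (Σₗ q : {q : ℚ // Nonempty (M (g q))}, M (g q.1)) :=
      sigmaLexCongr e₁.symm (fun s => OrderIso.refl _)
    have Φ₅ : (Σₗ q : {q : ℚ // Nonempty (M (g q))}, M (g q.1)) ≃o
        (Σₗ q : ℚ, M (g q)) := sigmaLexSubtypeIso (fun q => M (g q))
    exact (((Φ₁.trans Φ₂.symm).trans Φ₃).trans Φ₄).trans Φ₅
  · -- everything is empty
    have hL : ∀ q : ℚ, IsEmpty (L (f q)) := fun q =>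
      not_nonempty_iff.1 fun h => hne ⟨f q, h⟩
    have hM : ∀ q : ℚ, IsEmpty (M (g q)) := by
      intro q
      by_contra h
      rw [not_isEmpty_iff] at h
      obtain ⟨i, hi⟩ := hML (g q) h
      exact hne ⟨i, hi.elim fun e => ⟨e h.some⟩⟩
    haveI h1 : IsEmpty (Σₗ q : ℚ, L (f q)) := ⟨fun x => (hL (ofLex x).1).false (ofLex x).2⟩
    haveI h2 : IsEmpty (Σₗ q : ℚ, M (g q)) := ⟨fun x => (hM (ofLex x).1).false (ofLex x).2⟩
    exact ⟨⟨Equiv.equivOfIsEmpty _ _, fun {a b} => isEmptyElim a⟩⟩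
end

section
/- For every n ≥ 1, all linear orders L₁,…,L_n, every 1 ≤ j ≤ n, and every decomposition L_j ≅ L_{j1} + L_{j2} into an order sum, one has (L_{j2} + Ξ(L₁,…,L_n) + L_{j1}) · ζ ≅ Ξ(L₁,…,L_n). -/
open Sum Function Order

noncomputable section
namespace SZ
variable {ι κ : Type*} [LinearOrder ι] [LinearOrder κ]

/-- reindexing a lex sigma along an order iso with fiberwise isos -/
def sigmaCongr {F : ι → Type*} {G : κ → Type*} [∀ i, LinearOrder (F i)] [∀ k, LinearOrder (G k)]
    (e : ι ≃o κ) (g : ∀ i, F i ≃o G (e i)) : (Σₗ i, F i) ≃o (Σₗ k, G k) := by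
  refine StrictMono.orderIsoOfSurjective (fun p => ⟨e p.1, g p.1 p.2⟩) ?_ ?_
  · rintro ⟨i, x⟩ ⟨i', x'⟩ h
    erw [Sigma.Lex.lt_def] at h ⊢
    obtain h | ⟨h, hx⟩ := h
    · exact Or.inl (by simpa using h)
    · dsimp at h; subst h
      exact Or.inr ⟨rfl, by simpa using (g i).strictMono hx⟩
  · rintro ⟨k, y⟩
    obtain ⟨i, rfl⟩ := e.surjective k
    exact ⟨⟨i, (g i).symm y⟩, by simp; rfl⟩

def sigmaAssoc {J : ι → Type*} [∀ i, LinearOrder (J i)]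
    (F : ∀ i, J i → Type*) [∀ i j, LinearOrder (F i j)] :
    (Σₗ p : (Σₗ i, J i), F p.1 p.2) ≃o (Σₗ i, Σₗ j : J i, F i j) := by
  refine StrictMono.orderIsoOfSurjective (fun p => ⟨p.1.1, ⟨p.1.2, p.2⟩⟩) ?_ ?_
  · rintro ⟨p, x⟩ ⟨p', x'⟩ h
    erw [Sigma.Lex.lt_def] at h ⊢
    obtain h | ⟨h, hx⟩ := h
    · dsimp at h
      obtain ⟨i, j⟩ := p
      obtain ⟨i', j'⟩ := p'
      erw [Sigma.Lex.lt_def] at h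
      obtain h | ⟨h, hj⟩ := h
      · exact Or.inl h
      · dsimp at h; subst h
        exact Or.inr ⟨rfl, Sigma.Lex.lt_def.2 (Or.inl hj)⟩
    · dsimp at h; subst h; dsimp at hx
      exact Or.inr ⟨rfl, Sigma.Lex.lt_def.2 (Or.inr ⟨rfl, hx⟩)⟩
  · rintro ⟨i, j, x⟩
    exact ⟨⟨⟨i, j⟩, x⟩, rfl⟩

def sigmaSumDistrib {α β : Type*} [LinearOrder α] [LinearOrder β]
    (F : (α ⊕ₗ β) → Type*) [∀ x, LinearOrder (F x)] :
    (Σₗ x : α ⊕ₗ β, F x) ≃o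
      ((Σₗ a : α, F (toLex (inl a))) ⊕ₗ (Σₗ b : β, F (toLex (inr b)))) := by
  refine StrictMono.orderIsoOfSurjective
    (fun p => Sum.rec (motive := fun s => F (toLex s) → _)
      (fun a x => toLex (inl ⟨a, x⟩)) (fun b x => toLex (inr ⟨b, x⟩)) (ofLex p.1) p.2) ?_ ?_
  · rintro ⟨x, v⟩ ⟨y, w⟩ h
    erw [Sigma.Lex.lt_def] at h
    obtain h | ⟨h, hv⟩ := h
    · dsimp at h
      obtain a | b := x <;> obtain a' | b' := y
      · exact Sum.Lex.inl_lt_inl_iff.2 (Sigma.Lex.lt_def.2 (Or.inl (by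
          simpa using Sum.Lex.inl_lt_inl_iff.1 h)))
      · exact Sum.Lex.inl_lt_inr _ _
      · exact absurd h (Sum.Lex.not_inr_lt_inl)
      · exact Sum.Lex.inr_lt_inr_iff.2 (Sigma.Lex.lt_def.2 (Or.inl (by
          simpa using Sum.Lex.inr_lt_inr_iff.1 h)))
    · dsimp at h; subst h
      obtain a | b := x
      · exact Sum.Lex.inl_lt_inl_iff.2 (Sigma.Lex.lt_def.2 (Or.inr ⟨rfl, hv⟩))
      · exact Sum.Lex.inr_lt_inr_iff.2 (Sigma.Lex.lt_def.2 (Or.inr ⟨rfl, hv⟩))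
  · rintro (⟨a, x⟩ | ⟨b, x⟩)
    · exact ⟨⟨toLex (inl a), x⟩, rfl⟩
    · exact ⟨⟨toLex (inr b), x⟩, rfl⟩

def sigmaConst (X : Type*) [LinearOrder X] : (Σₗ _ : ι, X) ≃o ι ×ₗ X := by
  refine StrictMono.orderIsoOfSurjective (fun p => toLex (p.1, p.2)) ?_ ?_
  · rintro ⟨i, x⟩ ⟨i', x'⟩ h
    erw [Sigma.Lex.lt_def] at h
    rw [Prod.Lex.lt_iff]
    obtain h | ⟨h, hx⟩ := h
    · exact Or.inl h
    · dsimp at h; subst h; exact Or.inr ⟨rfl, hx⟩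
  · rintro ⟨i, x⟩
    exact ⟨⟨i, x⟩, rfl⟩




def zshift (A B : Type*) [LinearOrder A] [LinearOrder B] :
    (Σₗ _ : ℤ, (A ⊕ₗ B)) ≃o (Σₗ _ : ℤ, (B ⊕ₗ A)) := by
  refine StrictMono.orderIsoOfSurjective
    (fun p => Sum.rec (fun a => ⟨p.1, toLex (inr a)⟩) (fun b => ⟨p.1 + 1, toLex (inl b)⟩)
      (ofLex p.2)) ?_ ?_
  · rintro ⟨k, x⟩ ⟨m, y⟩ h
    erw [Sigma.Lex.lt_def] at h
    obtain h | ⟨h, hx⟩ := h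
    · dsimp at h
      obtain a | b := x <;> obtain a' | b' := y <;> (dsimp only; rw [Sigma.Lex.lt_def])
      · exact Or.inl h
      · exact Or.inl (show (k:ℤ) < m + 1 by omega)
      · rcases lt_or_eq_of_le (Int.add_one_le_iff.2 h) with h' | h'
        · exact Or.inl h'
        · exact Or.inr ⟨h', by cases h'; exact Sum.Lex.inl_lt_inr _ _⟩
      · exact Or.inl (show (k:ℤ) + 1 < m + 1 by omega)
    · dsimp at h; subst h
      obtain a | b := x <;> obtain a' | b' := y <;> (dsimp only; rw [Sigma.Lex.lt_def])
      · exact Or.inr ⟨rfl, Sum.Lex.inr_lt_inr_iff.2 (Sum.Lex.inl_lt_inl_iff.1 hx)⟩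
      · exact Or.inl (show (k:ℤ) < k + 1 by omega)
      · exact absurd hx Sum.Lex.not_inr_lt_inl
      · exact Or.inr ⟨rfl, Sum.Lex.inl_lt_inl_iff.2 (Sum.Lex.inr_lt_inr_iff.1 hx)⟩
  · rintro ⟨k, (b | a)⟩
    · exact ⟨⟨k - 1, toLex (inr b)⟩, by dsimp; congr 1; omega⟩
    · exact ⟨⟨k, toLex (inl a)⟩, rfl⟩




def sumCongr {A B C D : Type*} [LinearOrder A] [LinearOrder B] [LinearOrder C] [LinearOrder D]
    (e1 : A ≃o C) (e2 : B ≃o D) : (A ⊕ₗ B) ≃o (C ⊕ₗ D) := by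
  refine StrictMono.orderIsoOfSurjective
    (fun x => Sum.rec (fun a => toLex (inl (e1 a))) (fun b => toLex (inr (e2 b))) (ofLex x)) ?_ ?_
  · rintro (a | b) (a' | b') h
    · exact Sum.Lex.inl_lt_inl_iff.2 (e1.strictMono (Sum.Lex.inl_lt_inl_iff.1 h))
    · exact Sum.Lex.inl_lt_inr _ _
    · exact absurd h Sum.Lex.not_inr_lt_inl
    · exact Sum.Lex.inr_lt_inr_iff.2 (e2.strictMono (Sum.Lex.inr_lt_inr_iff.1 h))
  · rintro (c | d)
    · exact ⟨toLex (inl (e1.symm c)), by simp; rfl⟩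
    · exact ⟨toLex (inr (e2.symm d)), by simp; rfl⟩

def sigmaUnit (H : Unit → Type*) [∀ u, LinearOrder (H u)] : (Σₗ u : Unit, H u) ≃o H () := by
  refine StrictMono.orderIsoOfSurjective (fun p => p.2) ?_ ?_
  · rintro ⟨u, x⟩ ⟨u', y⟩ h
    erw [Sigma.Lex.lt_def] at h
    obtain h | ⟨h, hx⟩ := h
    · exact absurd h (lt_irrefl _)
    · exact hx
  · exact fun x => ⟨⟨(), x⟩, rfl⟩


variable {α β : Type*} [LinearOrder α] [LinearOrder β] {n : ℕ}

/-- A coloring each of whose color classes is dense and unbounded. -/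
structure DenseColoring (c : α → Fin n) : Prop where
  between : ∀ (i : Fin n) (x y : α), x < y → ∃ m, c m = i ∧ x < m ∧ m < y
  above : ∀ (i : Fin n) (x : α), ∃ m, c m = i ∧ x < m
  below : ∀ (i : Fin n) (x : α), ∃ m, c m = i ∧ m < x
  exis : ∀ i : Fin n, ∃ m, c m = i

theorem DenseColoring.between_finsets {c : α → Fin n} (hc : DenseColoring c) (i : Fin n)
    (lo hi : Finset α) (lo_lt_hi : ∀ x ∈ lo, ∀ y ∈ hi, x < y) :
    ∃ m : α, c m = i ∧ (∀ x ∈ lo, x < m) ∧ ∀ y ∈ hi, m < y := by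
  by_cases nlo : lo.Nonempty <;> by_cases nhi : hi.Nonempty
  · obtain ⟨m, hm, h1, h2⟩ := hc.between i _ _
      (lo_lt_hi _ (Finset.max'_mem _ nlo) _ (Finset.min'_mem _ nhi))
    exact ⟨m, hm, fun x hx => (Finset.le_max' lo x hx).trans_lt h1,
      fun y hy => h2.trans_le (Finset.min'_le hi y hy)⟩
  · obtain ⟨m, hm, h1⟩ := hc.above i (Finset.max' lo nlo)
    exact ⟨m, hm, fun x hx => (Finset.le_max' lo x hx).trans_lt h1,
      fun y hy => absurd ⟨y, hy⟩ nhi⟩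
  · obtain ⟨m, hm, h1⟩ := hc.below i (Finset.min' hi nhi)
    exact ⟨m, hm, fun x hx => absurd ⟨x, hx⟩ nlo,
      fun y hy => h1.trans_le (Finset.min'_le hi y hy)⟩
  · obtain ⟨m, hm⟩ := hc.exis i
    exact ⟨m, hm, fun x hx => absurd ⟨x, hx⟩ nlo, fun y hy => absurd ⟨y, hy⟩ nhi⟩

variable (c : α → Fin n) (d : β → Fin n)

/-- Colored partial isomorphisms. -/
def CPI : Type _ :=
  { f : Finset (α × β) //
    (∀ p ∈ f, ∀ q ∈ f, cmp (Prod.fst p) (Prod.fst q) = cmp (Prod.snd p) (Prod.snd q)) ∧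
      ∀ p ∈ f, d (Prod.snd p) = c (Prod.fst p) }

namespace CPI

instance : Inhabited (CPI c d) :=
  ⟨⟨∅, fun _p h => (Finset.notMem_empty _ h).elim, fun _p h => (Finset.notMem_empty _ h).elim⟩⟩

instance : Preorder (CPI c d) := Subtype.preorder _

variable {c d}

theorem exists_across (hd : DenseColoring d) (f : CPI c d) (a : α) :
    ∃ b : β, d b = c a ∧ ∀ p ∈ f.val, cmp (Prod.fst p) a = cmp (Prod.snd p) b := by
  by_cases h : ∃ b, (a, b) ∈ f.val
  · obtain ⟨b, hb⟩ := h
    exact ⟨b, f.prop.2 _ hb, fun p hp => f.prop.1 _ hp _ hb⟩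
  have key :
    ∀ x ∈ (f.val.filter fun p : α × β => p.fst < a).image Prod.snd,
      ∀ y ∈ (f.val.filter fun p : α × β => a < p.fst).image Prod.snd, x < y := by
    intro x hx y hy
    rw [Finset.mem_image] at hx hy
    rcases hx with ⟨p, hp1, rfl⟩
    rcases hy with ⟨q, hq1, rfl⟩
    rw [Finset.mem_filter] at hp1 hq1
    rw [← lt_iff_lt_of_cmp_eq_cmp (f.prop.1 _ hp1.1 _ hq1.1)]
    exact lt_trans hp1.right hq1.right
  obtain ⟨b, hbc, hb1, hb2⟩ := hd.between_finsets (c a) _ _ key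
  refine ⟨b, hbc, ?_⟩
  rintro ⟨p1, p2⟩ hp
  have hne : p1 ≠ a := fun he => h ⟨p2, he ▸ hp⟩
  cases' lt_or_gt_of_ne hne with hl hr
  · have : p1 < a ∧ p2 < b :=
      ⟨hl, hb1 _ (Finset.mem_image.mpr ⟨(p1, p2), Finset.mem_filter.mpr ⟨hp, hl⟩, rfl⟩)⟩
    rw [← cmp_eq_lt_iff, ← cmp_eq_lt_iff] at this
    exact this.1.trans this.2.symm
  · have : a < p1 ∧ b < p2 :=
      ⟨hr, hb2 _ (Finset.mem_image.mpr ⟨(p1, p2), Finset.mem_filter.mpr ⟨hp, hr⟩, rfl⟩)⟩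
    rw [← cmp_eq_gt_iff, ← cmp_eq_gt_iff] at this
    exact this.1.trans this.2.symm

/-- Swap the two sides of a colored partial iso. -/
protected def comm (f : CPI c d) : CPI d c :=
  ⟨f.val.image (Equiv.prodComm _ _), by
    constructor
    · intro p hp q hq
      rw [← Finset.mem_coe, Finset.coe_image, Equiv.image_eq_preimage_symm] at hp hq
      exact (f.prop.1 _ hp _ hq).symm
    · intro p hp
      rw [← Finset.mem_coe, Finset.coe_image, Equiv.image_eq_preimage_symm] at hp
      exact (f.prop.2 _ hp).symm⟩

variable (c d)

/-- Partial isos defined at a point `a : α`. -/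
def definedAtLeft (hd : DenseColoring d) (a : α) : Cofinal (CPI c d) where
  carrier := {f | ∃ b : β, (a, b) ∈ f.val}
  isCofinal f := by
    obtain ⟨b, hbc, a_b⟩ := exists_across hd f a
    refine ⟨⟨insert (a, b) f.val, ?_, ?_⟩, ⟨b, Finset.mem_insert_self _ _⟩,
      Finset.subset_insert _ _⟩
    · intro p hp q hq
      rw [Finset.mem_insert] at hp hq
      rcases hp with (rfl | pf) <;> rcases hq with (rfl | qf)
      · simp only [cmp_self_eq_eq]
      · rw [cmp_eq_cmp_symm]; exact a_b _ qf
      · exact a_b _ pf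
      · exact f.prop.1 _ pf _ qf
    · intro p hp
      rw [Finset.mem_insert] at hp
      rcases hp with rfl | pf
      · exact hbc
      · exact f.prop.2 _ pf

/-- Partial isos defined at `b : β`. -/
def definedAtRight (hc : DenseColoring c) (b : β) : Cofinal (CPI c d) where
  carrier := {f | ∃ a, (a, b) ∈ f.val}
  isCofinal f := by
    rcases (definedAtLeft d c hc b).isCofinal f.comm with ⟨f', ⟨a, ha⟩, hl⟩
    refine ⟨f'.comm, ⟨a, ?_⟩, ?_⟩
    · change (a, b) ∈ f'.val.image _
      rwa [← Finset.mem_coe, Finset.coe_image, Equiv.image_eq_preimage_symm]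
    · intro p hp
      have hmem : (Equiv.prodComm α β) p ∈ f'.val := hl (Finset.mem_image_of_mem _ hp)
      change p ∈ f'.val.image (Equiv.prodComm β α)
      exact Finset.mem_image.2 ⟨_, hmem, by simp⟩

end CPI

open CPI in
theorem exists_colored_iso [Countable α] [Countable β] {c : α → Fin n} {d : β → Fin n}
    (hc : DenseColoring c) (hd : DenseColoring d) :
    ∃ e : α ≃o β, ∀ a, d (e a) = c a := by
  cases nonempty_encodable α
  cases nonempty_encodable β
  let to_cofinal : α ⊕ β → Cofinal (CPI c d) := fun p =>
    Sum.recOn p (definedAtLeft c d hd) (definedAtRight c d hc)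
  let our_ideal : Ideal (CPI c d) := idealOfCofinals default to_cofinal
  have hF : ∀ a : α, ∃ b, ∃ f ∈ our_ideal, (a, b) ∈ Subtype.val f := by
    intro a
    rcases cofinal_meets_idealOfCofinals default to_cofinal (Sum.inl a) with ⟨f, ⟨b, hb⟩, hf⟩
    exact ⟨b, f, hf, hb⟩
  have hG : ∀ b : β, ∃ a, ∃ f ∈ our_ideal, (a, b) ∈ Subtype.val f := by
    intro b
    rcases cofinal_meets_idealOfCofinals default to_cofinal (Sum.inr b) with ⟨f, ⟨a, ha⟩, hf⟩
    exact ⟨a, f, hf, ha⟩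
  choose F hF using hF
  choose G hG using hG
  have key : ∀ a b, cmp a (G b) = cmp (F a) b := by
    intro a b
    rcases hF a with ⟨f, hf, ha⟩
    rcases hG b with ⟨g, hg, hb⟩
    rcases our_ideal.directed _ hf _ hg with ⟨m, _, fm, gm⟩
    exact m.prop.1 (a, _) (fm ha) (_, b) (gm hb)
  refine ⟨OrderIso.ofCmpEqCmp F G key, ?_⟩
  intro a
  rcases hF a with ⟨f, hf, ha⟩
  exact f.prop.2 _ ha




def icoIso {a b : ℚ} (h : a < b) : (Unit ⊕ₗ ↥(Set.Ioo a b)) ≃o ↥(Set.Ico a b) := by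
  refine StrictMono.orderIsoOfSurjective
    (fun x => Sum.rec (fun _ => ⟨a, ⟨le_refl _, h⟩⟩)
      (fun r => ⟨r.val, ⟨r.2.1.le, r.2.2⟩⟩) (ofLex x)) ?_ ?_
  · rintro (u | r) (u' | r') hlt
    · exact absurd (Sum.Lex.inl_lt_inl_iff.1 hlt) (lt_irrefl _)
    · exact Subtype.mk_lt_mk.2 r'.2.1
    · exact absurd hlt Sum.Lex.not_inr_lt_inl
    · exact Subtype.mk_lt_mk.2 (Subtype.coe_lt_coe.2 (Sum.Lex.inr_lt_inr_iff.1 hlt))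
  · rintro ⟨q, hq1, hq2⟩
    rcases eq_or_lt_of_le hq1 with h' | h'
    · exact ⟨toLex (inl ()), Subtype.ext h'⟩
    · exact ⟨toLex (inr ⟨q, ⟨h', hq2⟩⟩), rfl⟩

theorem icoIso_inl {a b : ℚ} (h : a < b) : ((icoIso h (toLex (inl ()))) : ℚ) = a := rfl

theorem icoIso_inr {a b : ℚ} (h : a < b) (r : ↥(Set.Ioo a b)) :
    ((icoIso h (toLex (inr r))) : ℚ) = r.val := rfl

def castIso {n : ℕ} (L : Fin n → Type*) [∀ i, LinearOrder (L i)] {i i' : Fin n} (h : i = i') :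
    L i ≃o L i' := by subst h; exact OrderIso.refl _

end SZ
end

open SZ Sum Order in
/-- if `L_j ≅ L_{j1} + L_{j2}` then
`(L_{j2} + Ξ(L₁,…,Lₙ) + L_{j1}) · ζ ≅ Ξ(L₁,…,Lₙ)`. -/
theorem shuffle_zeta {n : ℕ} (hn : 1 ≤ n) (L : Fin n → Type*) [∀ i, LinearOrder (L i)]
    (f : ℚ → Fin n) (hf : ∀ i : Fin n, DenseQ (f ⁻¹' {i})) (j : Fin n)
    (L1 L2 : Type*) [LinearOrder L1] [LinearOrder L2]
    (hj : Nonempty (L j ≃o (L1 ⊕ₗ L2))) :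
    Nonempty ((ℤ ×ₗ (L2 ⊕ₗ ((Σₗ q : ℚ, L (f q)) ⊕ₗ L1))) ≃o (Σₗ q : ℚ, L (f q))) := by
  classical
  obtain ⟨eLj⟩ := hj
  -- pick the fence posts z k of color j
  have hz : ∀ k : ℤ, ∃ q : ℚ, f q = j ∧ (k : ℚ) < q ∧ q < (k : ℚ) + 1 := by
    intro k
    obtain ⟨q, hq, h1, h2⟩ := hf j (k : ℚ) ((k : ℚ) + 1) (by linarith)
    exact ⟨q, hq, h1, h2⟩
  choose z hzj hz1 hz2 using hz
  have zmono : StrictMono z := by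
    intro k m hkm
    calc z k < (k : ℚ) + 1 := hz2 k
    _ ≤ (m : ℚ) := by exact_mod_cast Int.add_one_le_iff.2 hkm
    _ < z m := hz1 m
  -- index of the interval containing q
  have hidx : ∀ q : ℚ, ∃ k : ℤ, z k ≤ q ∧ ∀ m : ℤ, z m ≤ q → m ≤ k := by
    intro q
    have hbdd : ∀ m : ℤ, z m ≤ q → m ≤ ⌈q⌉ := by
      intro m hm
      have h1 : (m : ℚ) < q := lt_of_lt_of_le (hz1 m) hm
      have h2 : (m : ℚ) ≤ (⌈q⌉ : ℚ) := h1.le.trans (Int.le_ceil q)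
      exact_mod_cast h2
    have hinh : z (⌊q⌋ - 1) ≤ q := by
      have h3 := hz2 (⌊q⌋ - 1)
      have h2 : ((⌊q⌋ - 1 : ℤ) : ℚ) + 1 ≤ q := by
        push_cast
        linarith [Int.floor_le q]
      linarith
    obtain ⟨k, h1, h2⟩ := Int.exists_greatest_of_bdd ⟨⌈q⌉, hbdd⟩ ⟨⌊q⌋ - 1, hinh⟩
    exact ⟨k, h1, h2⟩
  choose idx hix1 hix2 using hidx
  have hix3 : ∀ q, q < z (idx q + 1) := by
    intro q
    by_contra h
    push_neg at h
    have := hix2 q _ h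
    omega
  have idx_uniq : ∀ (q : ℚ) (k : ℤ), z k ≤ q → q < z (k + 1) → idx q = k := by
    intro q k h1 h2
    have hk : k ≤ idx q := hix2 q k h1
    rcases lt_or_eq_of_le hk with h | h
    · exact absurd ((zmono.monotone (by omega : k + 1 ≤ idx q)).trans (hix1 q)) (not_le.2 h2)
    · exact h.symm
  -- the interval-decomposition iso
  have hrec : ∀ (k k' : ℤ) (h : k = k') (x : ↥(Set.Ico (z k) (z (k + 1)))),
      ((h ▸ x : ↥(Set.Ico (z k') (z (k' + 1)))) : ℚ) = (x : ℚ) := by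
    rintro k k' rfl x; rfl
  have he0 : ∃ e : ℚ ≃o Σₗ k : ℤ, ↥(Set.Ico (z k) (z (k + 1))),
      ∀ q : ℚ, (((e q).2 : ℚ) = q) := by
    refine ⟨StrictMono.orderIsoOfSurjective
      (fun q => ⟨idx q, ⟨q, ⟨hix1 q, hix3 q⟩⟩⟩) ?_ ?_, fun q => rfl⟩
    · intro q q' hqq
      have hmono : idx q ≤ idx q' := by
        by_contra h
        push_neg at h
        have h2 : z (idx q' + 1) ≤ z (idx q) := zmono.monotone (by omega)
        exact absurd ((hix3 q').trans_le (h2.trans (hix1 q))) (not_lt.2 hqq.le)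
      erw [Sigma.Lex.lt_def]
      rcases lt_or_eq_of_le hmono with h | h
      · exact Or.inl h
      · refine Or.inr ⟨h, ?_⟩
        rw [← Subtype.coe_lt_coe]
        rw [show ((h ▸ (⟨q, ⟨hix1 q, hix3 q⟩⟩ : ↥(Set.Ico (z (idx q)) (z (idx q + 1))))
          : ↥(Set.Ico (z (idx q')) (z (idx q' + 1)))) : ℚ) = q from hrec _ _ h _]
        exact hqq
    · rintro ⟨k, ⟨q, hq⟩⟩
      have h := idx_uniq q k hq.1 hq.2
      subst h
      exact ⟨q, rfl⟩
  obtain ⟨e0, he0⟩ := he0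
  -- the global coloring is dense
  have hQcol : DenseColoring f := by
    constructor
    · intro i x y hxy
      obtain ⟨q, hq, h1, h2⟩ := hf i x y hxy
      exact ⟨q, hq, h1, h2⟩
    · intro i x
      obtain ⟨q, hq, h1, h2⟩ := hf i x (x + 1) (by linarith)
      exact ⟨q, hq, h1⟩
    · intro i x
      obtain ⟨q, hq, h1, h2⟩ := hf i (x - 1) x (by linarith)
      exact ⟨q, hq, h2⟩
    · intro i
      obtain ⟨q, hq, h1, h2⟩ := hf i 0 1 one_pos
      exact ⟨q, hq⟩
  -- the coloring on each open interval is dense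
  have hkcol : ∀ k : ℤ,
      DenseColoring (fun r : ↥(Set.Ioo (z k) (z (k + 1))) => f r.val) := by
    intro k
    constructor
    · rintro i ⟨x, hx⟩ ⟨y, hy⟩ hxy
      obtain ⟨q, hq, h1, h2⟩ := hf i x y (Subtype.mk_lt_mk.1 hxy)
      exact ⟨⟨q, ⟨hx.1.trans h1, h2.trans hy.2⟩⟩, hq,
        Subtype.mk_lt_mk.2 h1, Subtype.mk_lt_mk.2 h2⟩
    · rintro i ⟨x, hx⟩
      obtain ⟨q, hq, h1, h2⟩ := hf i x (z (k + 1)) hx.2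
      exact ⟨⟨q, ⟨hx.1.trans h1, h2⟩⟩, hq, Subtype.mk_lt_mk.2 h1⟩
    · rintro i ⟨x, hx⟩
      obtain ⟨q, hq, h1, h2⟩ := hf i (z k) x hx.1
      exact ⟨⟨q, ⟨h1, h2.trans hx.2⟩⟩, hq, Subtype.mk_lt_mk.2 h2⟩
    · intro i
      obtain ⟨q, hq, h1, h2⟩ := hf i (z k) (z (k + 1)) (zmono (by omega))
      exact ⟨⟨q, ⟨h1, h2⟩⟩, hq⟩
  -- colored Cantor isos between ℚ and each open interval
  have hekx : ∀ k : ℤ, ∃ e : ℚ ≃o ↥(Set.Ioo (z k) (z (k + 1))),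
      ∀ q, f (e q).val = f q := fun k => exists_colored_iso hQcol (hkcol k)
  choose ek hek using hekx
  -- the Ico ≃ point + Ioo decomposition
  have hwk : ∀ k : ℤ, ∃ w : (Unit ⊕ₗ ↥(Set.Ioo (z k) (z (k + 1)))) ≃o
      ↥(Set.Ico (z k) (z (k + 1))),
      (((w (toLex (inl ()))) : ℚ) = z k) ∧ ∀ r, ((w (toLex (inr r))) : ℚ) = r.val :=
    fun k => ⟨icoIso (zmono (by omega)), icoIso_inl _, icoIso_inr _⟩
  choose w hw1 hw2 using hwk
  -- each Ico-block is isomorphic to L1 + (L2 + Ξ)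
  have hk : ∀ k : ℤ, (Σₗ r : ↥(Set.Ico (z k) (z (k + 1))), L (f r.val)) ≃o
      (L1 ⊕ₗ (L2 ⊕ₗ (Σₗ q : ℚ, L (f q)))) := by
    intro k
    refine ((sigmaCongr (F := fun x => L (f ((w k x) : ℚ)))
      (G := fun r => L (f r.val)) (w k) (fun x => OrderIso.refl _)).symm.trans
      ((sigmaSumDistrib (fun x => L (f ((w k x) : ℚ)))).trans
      ((sumCongr ?_ ?_).trans (OrderIso.sumLexAssoc L1 L2 _))))
    · -- left part: single block ≃ L1 ⊕ₗ L2
      exact (sigmaUnit (fun u => L (f ((w k (toLex (inl u))) : ℚ)))).trans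
        ((castIso L (by rw [hw1 k]; exact hzj k)).trans eLj)
    · -- right part: shuffle over the open interval ≃ Ξ
      exact (sigmaCongr (G := fun r : ↥(Set.Ioo (z k) (z (k + 1))) => L (f r.val))
          (OrderIso.refl _) (fun r => castIso L (congrArg f (hw2 k r)))).trans
        (sigmaCongr (G := fun r : ↥(Set.Ioo (z k) (z (k + 1))) => L (f r.val))
          (ek k) (fun q => castIso L (hek k q).symm)).symm
  -- the main decomposition of the shuffle
  have main : (Σₗ q : ℚ, L (f q)) ≃o
      Σₗ _ : ℤ, (L1 ⊕ₗ (L2 ⊕ₗ (Σₗ q : ℚ, L (f q)))) :=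
    ((sigmaCongr (G := fun p : Σₗ k : ℤ, ↥(Set.Ico (z k) (z (k + 1))) => L (f (p.2 : ℚ)))
        e0 (fun q => castIso L (congrArg f (he0 q).symm))).trans
      (sigmaAssoc (fun (k : ℤ) (r : ↥(Set.Ico (z k) (z (k + 1)))) => L (f (r : ℚ))))).trans
      (sigmaCongr (OrderIso.refl ℤ) (fun k => hk k))
  exact ⟨((sigmaConst (ι := ℤ) (L2 ⊕ₗ ((Σₗ q : ℚ, L (f q)) ⊕ₗ L1))).symm.trans
    ((sigmaCongr (OrderIso.refl ℤ)
      (fun _ => (OrderIso.sumLexAssoc L2 (Σₗ q : ℚ, L (f q)) L1).symm)).trans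
    ((zshift (L2 ⊕ₗ (Σₗ q : ℚ, L (f q))) L1).trans main.symm)))⟩
end

section
/- (Recursive reconstruction lemma.) Fix n ∈ ℕ. For each j ∈ {0,1,…,n+1} let L_j be a function from ℤ to linear orders such that: L₀(k) ∈ dLO_fd¹¹ for every k ≥ 0 and L₀(k) = 𝟎 for every k < 0; L_{n+1}(k) ∈ dLO_fd¹¹ for every k ≤ 0 and L_{n+1}(k) = 𝟎 for every k > 0; L_j(k) ∈ dLO_fd¹¹ for every k ∈ ℤ and every 1 ≤ j ≤ n; for each 0 ≤ j ≤ n there exist s_j ≥ 0 and p_j > 0 with L_j(s_j + p_j + k) ≅ L_j(s_j + k) for every k ∈ ℕ; and for each 1 ≤ j ≤ n+1 there exist s'_j ≤ 0 and p'_j > 0 with L_j(s'_j − p'_j − k) ≅ L_j(s'_j − k) for every k ∈ ℕ. Then L := Σ_{k∈ℤ} L₀(k) + Ξ(Σ_{k∈ℤ} L₁(k), …, Σ_{k∈ℤ} L_n(k)) + Σ_{k∈ℤ} L_{n+1}(k) belongs to dLO_fd¹¹ (for n = 0 the middle shuffle term is 𝟎). -/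
/-- Bundled linear orders (in `Type 0`). -/
structure BLinOrd : Type 1 where
  carrier : Type
  [str : LinearOrder carrier]

attribute [instance] BLinOrd.str

/-- The bundled linear order on a given type. -/
def BLinOrd.of (α : Type) [LinearOrder α] : BLinOrd := ⟨α⟩

/-- The class of finite description linear orders: the smallest class of linear orders
containing `𝟎` and `𝟏` that is closed under order isomorphism, binary order sums,
the anti-lexicographic products `L·ω` and `L·ω*`, and shuffles of finite nonempty lists
of its members (realized via a coloring `f : ℚ → Fin n` with order-dense fibers; note that
such an `f` exists only when `n ≥ 1`). -/
inductive LOfd : BLinOrd → Prop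
  | empty : LOfd (BLinOrd.of (Fin 0))
  | one : LOfd (BLinOrd.of (Fin 1))
  | iso {X Y : BLinOrd} : LOfd X → Nonempty (X.carrier ≃o Y.carrier) → LOfd Y
  | add {X Y : BLinOrd} : LOfd X → LOfd Y → LOfd (BLinOrd.of (X.carrier ⊕ₗ Y.carrier))
  | mulOmega {X : BLinOrd} : LOfd X → LOfd (BLinOrd.of (ℕ ×ₗ X.carrier))
  | mulOmegaStar {X : BLinOrd} : LOfd X → LOfd (BLinOrd.of (ℕᵒᵈ ×ₗ X.carrier))
  | shuffle {n : ℕ} (L : Fin n → BLinOrd) (f : ℚ → Fin n) :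
      (∀ j, LOfd (L j)) → (∀ j : Fin n, DenseQ (f ⁻¹' {j})) →
      LOfd (BLinOrd.of (Σₗ q : ℚ, (L (f q)).carrier))

/-- A linear order is discrete if every non-maximal element has an immediate successor
and every non-minimal element has an immediate predecessor. -/
def IsDiscreteLO (α : Type*) [LinearOrder α] : Prop :=
  (∀ a : α, (∃ b, a < b) → ∃ b, a ⋖ b) ∧ (∀ a : α, (∃ b, b < a) → ∃ b, b ⋖ a)

/-- Bounded discrete finite description linear orders: discrete members of `LOfd` with a
minimum element and a maximum element. -/
def dLOfd11 (X : BLinOrd) : Prop :=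
  LOfd X ∧ IsDiscreteLO X.carrier ∧
    (∃ a : X.carrier, ∀ x, a ≤ x) ∧ (∃ a : X.carrier, ∀ x, x ≤ a)

/-- `S` is (isomorphic to) the shuffle `Ξ(L 0, …, L (n-1))` of the finite list `L` of
linear orders: for `n = 0` the shuffle is the empty order, and for `n ≥ 1` it is
`Σ_{q ∈ ℚ} L (f q)` for a (any) coloring `f : ℚ → Fin n` all of whose fibers are dense
in `ℚ`. -/
def IsShuffleOf (S : BLinOrd) {n : ℕ} (L : Fin n → BLinOrd) : Prop :=
  (n = 0 ∧ IsEmpty S.carrier) ∨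
    ∃ f : ℚ → Fin n, (∀ j : Fin n, DenseQ (f ⁻¹' {j})) ∧
      Nonempty (S.carrier ≃o Σₗ q : ℚ, (L (f q)).carrier)

open Function OrderDual

/-- Order iso between two empty linear orders. -/
def isoOfEmpty {α β : Type*} [LinearOrder α] [LinearOrder β] (ha : IsEmpty α)
    (hb : IsEmpty β) : α ≃o β where
  toFun a := (ha.false a).elim
  invFun b := (hb.false b).elim
  left_inv a := (ha.false a).elim
  right_inv b := (hb.false b).elim
  map_rel_iff' {a} := (ha.false a).elim

lemma LOfd_of_isEmpty (X : BLinOrd) (h : IsEmpty X.carrier) : LOfd X :=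
  LOfd.iso LOfd.empty ⟨isoOfEmpty (inferInstanceAs (IsEmpty (Fin 0))) h⟩

section Cov
variable {α β : Type*} [LinearOrder α] [LinearOrder β]

lemma covLexInl {a b : α} (h : a ⋖ b) :
    (toLex (Sum.inl a) : α ⊕ₗ β) ⋖ toLex (Sum.inl b) := by
  constructor
  · exact Sum.Lex.inl_lt_inl_iff.2 h.1
  · rintro (c | c) hc hc'
    · exact h.2 (Sum.Lex.inl_lt_inl_iff.1 hc) (Sum.Lex.inl_lt_inl_iff.1 hc')
    · exact Sum.Lex.not_inr_lt_inl hc'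

lemma covLexInr {a b : β} (h : a ⋖ b) :
    (toLex (Sum.inr a) : α ⊕ₗ β) ⋖ toLex (Sum.inr b) := by
  constructor
  · exact Sum.Lex.inr_lt_inr_iff.2 h.1
  · rintro (c | c) hc hc'
    · exact Sum.Lex.not_inr_lt_inl hc
    · exact h.2 (Sum.Lex.inr_lt_inr_iff.1 hc) (Sum.Lex.inr_lt_inr_iff.1 hc')

lemma covLexMid {a : α} {b : β} (ha : ∀ x : α, x ≤ a) (hb : ∀ y : β, b ≤ y) :
    (toLex (Sum.inl a) : α ⊕ₗ β) ⋖ toLex (Sum.inr b) := by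
  constructor
  · exact Sum.Lex.inl_lt_inr a b
  · rintro (c | c) hc hc'
    · exact absurd (Sum.Lex.inl_lt_inl_iff.1 hc) (not_lt.2 (ha c))
    · exact absurd (Sum.Lex.inr_lt_inr_iff.1 hc') (not_lt.2 (hb c))

end Cov

section SigmaCov
variable {I : Type} [LinearOrder I] (M : I → BLinOrd)

lemma sigmaCovSame {i : I} {x y : (M i).carrier} (h : x ⋖ y) :
    (toLex ⟨i, x⟩ : Σₗ k : I, (M k).carrier) ⋖ toLex ⟨i, y⟩ := by
  constructor
  · exact Sigma.Lex.lt_def.2 (Or.inr ⟨rfl, h.1⟩)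
  · rintro ⟨k, w⟩ hc hc'
    cases hc with
    | left _ _ h1 =>
      cases hc' with
      | left _ _ h2 => exact absurd (h1.trans h2) (lt_irrefl _)
      | right _ _ h2 => exact absurd h1 (lt_irrefl _)
    | right _ _ h1 =>
      cases hc' with
      | left _ _ h2 => exact absurd h2 (lt_irrefl _)
      | right _ _ h2 => exact h.2 h1 h2

lemma sigmaCovNext {i j : I} (hij : i ⋖ j) {x : (M i).carrier} {y : (M j).carrier}
    (hx : ∀ w : (M i).carrier, w ≤ x) (hy : ∀ w : (M j).carrier, y ≤ w) :
    (toLex ⟨i, x⟩ : Σₗ k : I, (M k).carrier) ⋖ toLex ⟨j, y⟩ := by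
  constructor
  · exact Sigma.Lex.lt_def.2 (Or.inl hij.1)
  · rintro ⟨k, w⟩ hc hc'
    cases hc with
    | left _ _ h1 =>
      cases hc' with
      | left _ _ h2 => exact hij.2 h1 h2
      | right _ _ h2 => exact absurd h2 (not_lt.2 (hy _))
    | right _ _ h1 => exact absurd h1 (not_lt.2 (hx _))

end SigmaCov
section Machinery
open OrderDual

/-- Peeling the first summand off an `ℕ`-indexed lex sum. -/
lemma peelNatIso (M : ℕ → BLinOrd) :
    Nonempty (((M 0).carrier ⊕ₗ Σₗ k : ℕ, (M (k + 1)).carrier) ≃o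
      (Σₗ k : ℕ, (M k).carrier)) := by
  let g : ((M 0).carrier ⊕ₗ Σₗ k : ℕ, (M (k + 1)).carrier) → (Σₗ k : ℕ, (M k).carrier) :=
    fun z => match z with
      | Sum.inl x => ⟨0, x⟩
      | Sum.inr ⟨k, x⟩ => ⟨k + 1, x⟩
  have hmono : StrictMono g := by
    rintro (x | ⟨k, x⟩) (y | ⟨k', y⟩) h
    · exact Sigma.Lex.right _ _ (Sum.Lex.inl_lt_inl_iff.1 h)
    · exact Sigma.Lex.left _ _ (Nat.succ_pos k')
    · exact absurd h (Sum.Lex.not_inr_lt_inl)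
    · cases Sum.Lex.inr_lt_inr_iff.1 h with
      | left a b h1 => exact Sigma.Lex.left _ _ (by omega)
      | right a b h1 => exact Sigma.Lex.right _ _ h1
  have hsurj : Function.Surjective g := by
    rintro ⟨(_ | k), x⟩
    · exact ⟨toLex (Sum.inl x), rfl⟩
    · exact ⟨toLex (Sum.inr ⟨k, x⟩), rfl⟩
  exact ⟨StrictMono.orderIsoOfSurjective g hmono hsurj⟩

/-- Peeling the last summand off an `ℕᵒᵈ`-indexed lex sum. -/
lemma peelNatDualIso (M : ℕ → BLinOrd) :
    Nonempty (((Σₗ k : ℕᵒᵈ, (M (ofDual k + 1)).carrier) ⊕ₗ (M 0).carrier) ≃o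
      (Σₗ k : ℕᵒᵈ, (M (ofDual k)).carrier)) := by
  let g : ((Σₗ k : ℕᵒᵈ, (M (ofDual k + 1)).carrier) ⊕ₗ (M 0).carrier) →
      (Σₗ k : ℕᵒᵈ, (M (ofDual k)).carrier) :=
    fun z => match z with
      | Sum.inl ⟨k, x⟩ => ⟨toDual (ofDual k + 1), x⟩
      | Sum.inr x => ⟨toDual 0, x⟩
  have hmono : StrictMono g := by
    rintro (⟨k, x⟩ | x) (⟨k', y⟩ | y) h
    · cases Sum.Lex.inl_lt_inl_iff.1 h with
      | left a b h1 =>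
        have h2 : ofDual k' < ofDual k := h1
        exact Sigma.Lex.left _ _ (show (ofDual k' + 1) < (ofDual k + 1) from by omega)
      | right a b h1 => exact Sigma.Lex.right _ _ h1
    · exact Sigma.Lex.left _ _ (show (0 : ℕ) < ofDual k + 1 from by omega)
    · exact absurd h (Sum.Lex.not_inr_lt_inl)
    · exact Sigma.Lex.right _ _ (Sum.Lex.inr_lt_inr_iff.1 h)
  have hsurj : Function.Surjective g := by
    rintro ⟨k, x⟩
    rcases Nat.eq_zero_or_pos (ofDual k) with h | h
    · revert x
      rw [show k = toDual 0 from h]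
      intro x
      exact ⟨toLex (Sum.inr x), rfl⟩
    · revert x
      rw [show k = toDual (ofDual k - 1 + 1) from
        congrArg toDual (by omega : ofDual k = ofDual k - 1 + 1)]
      intro x
      exact ⟨toLex (Sum.inl ⟨toDual (ofDual k - 1), x⟩), rfl⟩
  exact ⟨StrictMono.orderIsoOfSurjective g hmono hsurj⟩

/-- Peeling the first summand off a `Fin (m+1)`-indexed lex sum. -/
lemma finPeelIso {m : ℕ} (N : Fin (m + 1) → BLinOrd) :
    Nonempty (((N 0).carrier ⊕ₗ Σₗ i : Fin m, (N i.succ).carrier) ≃o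
      (Σₗ i : Fin (m + 1), (N i).carrier)) := by
  let g : ((N 0).carrier ⊕ₗ Σₗ i : Fin m, (N i.succ).carrier) →
      (Σₗ i : Fin (m + 1), (N i).carrier) :=
    fun z => match z with
      | Sum.inl x => ⟨0, x⟩
      | Sum.inr ⟨i, x⟩ => ⟨i.succ, x⟩
  have hmono : StrictMono g := by
    rintro (x | ⟨i, x⟩) (y | ⟨i', y⟩) h
    · exact Sigma.Lex.right _ _ (Sum.Lex.inl_lt_inl_iff.1 h)
    · exact Sigma.Lex.left _ _ (Fin.succ_pos i')
    · exact absurd h (Sum.Lex.not_inr_lt_inl)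
    · cases Sum.Lex.inr_lt_inr_iff.1 h with
      | left a b h1 => exact Sigma.Lex.left _ _ (Fin.succ_lt_succ_iff.2 h1)
      | right a b h1 => exact Sigma.Lex.right _ _ h1
  have hsurj : Function.Surjective g := by
    rintro ⟨i, x⟩
    induction i using Fin.cases with
    | zero => exact ⟨toLex (Sum.inl x), rfl⟩
    | succ j => exact ⟨toLex (Sum.inr ⟨j, x⟩), rfl⟩
  exact ⟨StrictMono.orderIsoOfSurjective g hmono hsurj⟩

/-- Finite lex sums of finite description orders are finite description. -/
lemma FinLOfd (m : ℕ) (N : Fin m → BLinOrd) (h : ∀ i, LOfd (N i)) :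
    LOfd (BLinOrd.of (Σₗ i : Fin m, (N i).carrier)) := by
  induction m with
  | zero => exact LOfd_of_isEmpty _ ⟨fun z => (ofLex z).1.elim0⟩
  | succ m ih =>
    obtain ⟨g⟩ := finPeelIso N
    exact LOfd.iso (LOfd.add (h 0) (ih (fun i => N i.succ) (fun i => h i.succ))) ⟨g⟩

/-- Transporting fibers along the period. -/
lemma periodShift (M : ℕ → BLinOrd) (p : ℕ)
    (e : ∀ k, Nonempty ((M (p + k)).carrier ≃o (M k).carrier)) :
    ∀ (q r : ℕ), Nonempty ((M r).carrier ≃o (M (p * q + r)).carrier) := by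
  intro q r
  induction q with
  | zero =>
    rw [show p * 0 + r = r by ring]
    exact ⟨OrderIso.refl _⟩
  | succ q ih =>
    obtain ⟨g⟩ := ih
    obtain ⟨h⟩ := e (p * q + r)
    rw [show p * (q + 1) + r = p + (p * q + r) by ring]
    exact ⟨g.trans h.symm⟩

/-- A purely periodic `ℕ`-indexed lex sum is `X ⬝ ω`. -/
lemma natPeriodicIso (M : ℕ → BLinOrd) (p : ℕ) (hp : 0 < p)
    (e : ∀ k, Nonempty ((M (p + k)).carrier ≃o (M k).carrier)) :
    Nonempty ((ℕ ×ₗ Σₗ i : Fin p, (M ↑i).carrier) ≃o (Σₗ k : ℕ, (M k).carrier)) := by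
  have E : ∀ (q r : ℕ), (M r).carrier ≃o (M (p * q + r)).carrier :=
    fun q r => (periodShift M p e q r).some
  let g : (ℕ ×ₗ Σₗ i : Fin p, (M ↑i).carrier) → (Σₗ k : ℕ, (M k).carrier) :=
    fun z => ⟨p * z.1 + ↑z.2.1, E z.1 ↑z.2.1 z.2.2⟩
  have hmono : StrictMono g := by
    rintro ⟨q, i, x⟩ ⟨q', i', y⟩ h
    rcases Prod.Lex.lt_iff.1 h with h1 | ⟨rfl, h2⟩
    · have hlt : p * q + ↑i < p * q' + ↑i' := by
        have := i.isLt; have := i'.isLt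
        have hqq : q < q' := h1
        have h4 : p * (q + 1) ≤ p * q' := Nat.mul_le_mul_left p hqq
        have h5 : p * (q + 1) = p * q + p := by ring
        omega
      exact Sigma.Lex.left _ _ hlt
    · cases h2 with
      | left a b h1 =>
        have h2 : (↑i : ℕ) < ↑i' := h1
        have hlt : p * q + ↑i < p * q + ↑i' := by omega
        exact Sigma.Lex.left _ _ hlt
      | right a b h1 =>
        exact Sigma.Lex.right _ _ ((E q ↑i).strictMono h1)
  have hsurj : Function.Surjective g := by
    rintro ⟨k, x⟩
    obtain ⟨q, r, hr, rfl⟩ : ∃ q r, r < p ∧ p * q + r = k :=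
      ⟨k / p, k % p, Nat.mod_lt _ hp, Nat.div_add_mod k p⟩
    exact ⟨toLex (q, toLex ⟨⟨r, hr⟩, (E q r).symm x⟩),
      congrArg (fun t => (⟨p * q + r, t⟩ : Σₗ k : ℕ, (M k).carrier))
        ((E q r).apply_symm_apply x)⟩
  exact ⟨StrictMono.orderIsoOfSurjective g hmono hsurj⟩

/-- A purely periodic `ℕᵒᵈ`-indexed lex sum is `X ⬝ ω*`. -/
lemma natPeriodicDualIso (M : ℕ → BLinOrd) (p : ℕ) (hp : 0 < p)
    (e : ∀ k, Nonempty ((M (p + k)).carrier ≃o (M k).carrier)) :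
    Nonempty ((ℕᵒᵈ ×ₗ Σₗ i : Fin p, (M (p - 1 - ↑i)).carrier) ≃o
      (Σₗ k : ℕᵒᵈ, (M (ofDual k)).carrier)) := by
  have E : ∀ (q r : ℕ), (M r).carrier ≃o (M (p * q + r)).carrier :=
    fun q r => (periodShift M p e q r).some
  let g : (ℕᵒᵈ ×ₗ Σₗ i : Fin p, (M (p - 1 - ↑i)).carrier) →
      (Σₗ k : ℕᵒᵈ, (M (ofDual k)).carrier) :=
    fun z => ⟨toDual (p * ofDual z.1 + (p - 1 - ↑z.2.1)), E (ofDual z.1) (p - 1 - ↑z.2.1) z.2.2⟩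
  have hmono : StrictMono g := by
    rintro ⟨q, i, x⟩ ⟨q', i', y⟩ h
    rcases Prod.Lex.lt_iff.1 h with h1 | ⟨rfl, h2⟩
    · have h1' : ofDual q' < ofDual q := h1
      have hlt : p * ofDual q' + (p - 1 - ↑i') < p * ofDual q + (p - 1 - ↑i) := by
        have := i.isLt; have := i'.isLt
        have h4 : p * (ofDual q' + 1) ≤ p * ofDual q := Nat.mul_le_mul_left p h1'
        have h5 : p * (ofDual q' + 1) = p * ofDual q' + p := by ring
        omega
      exact Sigma.Lex.left _ _ hlt
    · cases h2 with
      | left a b h1 =>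
        have h2 : (↑i : ℕ) < ↑i' := h1
        have hlt : p * ofDual q + (p - 1 - ↑i') < p * ofDual q + (p - 1 - ↑i) := by
          have := i'.isLt; omega
        exact Sigma.Lex.left _ _ hlt
      | right a b h1 =>
        exact Sigma.Lex.right _ _ ((E (ofDual q) _).strictMono h1)
  have hsurj : Function.Surjective g := by
    rintro ⟨k, x⟩
    obtain ⟨q, r, hr, rfl⟩ : ∃ q r, r < p ∧ toDual (p * q + (p - 1 - r)) = k := by
      refine ⟨ofDual k / p, p - 1 - ofDual k % p, by omega, ?_⟩
      have h1 := Nat.div_add_mod (ofDual k) p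
      have h2 := Nat.mod_lt (ofDual k) hp
      have h3 : p - 1 - (p - 1 - ofDual k % p) = ofDual k % p := by omega
      change p * (ofDual k / p) + (p - 1 - (p - 1 - ofDual k % p)) = ofDual k
      rw [h3]
      exact h1
    exact ⟨toLex (toDual q, toLex ⟨⟨r, hr⟩, (E q (p - 1 - r)).symm x⟩),
      congrArg (fun t => (⟨toDual (p * q + (p - 1 - r)), t⟩ :
          Σₗ k : ℕᵒᵈ, (M (ofDual k)).carrier))
        ((E q (p - 1 - r)).apply_symm_apply x)⟩
  exact ⟨StrictMono.orderIsoOfSurjective g hmono hsurj⟩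

/-- Eventually periodic `ℕ`-indexed lex sums of f.d. orders are f.d. -/
lemma NatLOfd (s : ℕ) (M : ℕ → BLinOrd) (hM : ∀ k, LOfd (M k)) (p : ℕ) (hp : 0 < p)
    (hper : ∀ k : ℕ, Nonempty ((M (s + p + k)).carrier ≃o (M (s + k)).carrier)) :
    LOfd (BLinOrd.of (Σₗ k : ℕ, (M k).carrier)) := by
  induction s generalizing M with
  | zero =>
    have e : ∀ k, Nonempty ((M (p + k)).carrier ≃o (M k).carrier) := by
      intro k
      have := hper k
      rwa [show 0 + p + k = p + k by omega, show 0 + k = k by omega] at this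
    obtain ⟨g⟩ := natPeriodicIso M p hp e
    exact LOfd.iso (LOfd.mulOmega (FinLOfd p (fun i => M ↑i) (fun i => hM ↑i))) ⟨g⟩
  | succ s ih =>
    obtain ⟨g⟩ := peelNatIso M
    refine LOfd.iso (LOfd.add (hM 0)
      (ih (fun k => M (k + 1)) (fun k => hM (k + 1)) ?_)) ⟨g⟩
    intro k
    have := hper k
    rwa [show s + 1 + p + k = s + p + k + 1 by omega,
      show s + 1 + k = s + k + 1 by omega] at this

/-- Eventually periodic `ℕᵒᵈ`-indexed lex sums of f.d. orders are f.d. -/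
lemma NatDualLOfd (s : ℕ) (M : ℕ → BLinOrd) (hM : ∀ k, LOfd (M k)) (p : ℕ) (hp : 0 < p)
    (hper : ∀ k : ℕ, Nonempty ((M (s + p + k)).carrier ≃o (M (s + k)).carrier)) :
    LOfd (BLinOrd.of (Σₗ k : ℕᵒᵈ, (M (ofDual k)).carrier)) := by
  induction s generalizing M with
  | zero =>
    have e : ∀ k, Nonempty ((M (p + k)).carrier ≃o (M k).carrier) := by
      intro k
      have := hper k
      rwa [show 0 + p + k = p + k by omega, show 0 + k = k by omega] at this
    obtain ⟨g⟩ := natPeriodicDualIso M p hp e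
    exact LOfd.iso (LOfd.mulOmegaStar
      (FinLOfd p (fun i : Fin p => M (p - 1 - (i : ℕ))) (fun i => hM _))) ⟨g⟩
  | succ s ih =>
    obtain ⟨g⟩ := peelNatDualIso M
    refine LOfd.iso (LOfd.add
      (ih (fun k => M (k + 1)) (fun k => hM (k + 1)) ?_) (hM 0)) ⟨g⟩
    intro k
    have := hper k
    rwa [show s + 1 + p + k = s + p + k + 1 by omega,
      show s + 1 + k = s + k + 1 by omega] at this

end Machinery
section ZPart
open OrderDual

/-- Splitting a `ℤ`-indexed lex sum into negative and nonnegative parts. -/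
lemma zSplitIso (M : ℤ → BLinOrd) :
    Nonempty (((Σₗ k : ℕᵒᵈ, (M (-1 - (ofDual k : ℕ))).carrier) ⊕ₗ
      (Σₗ k : ℕ, (M (k : ℕ)).carrier)) ≃o (Σₗ k : ℤ, (M k).carrier)) := by
  let g : ((Σₗ k : ℕᵒᵈ, (M (-1 - (ofDual k : ℕ))).carrier) ⊕ₗ
      (Σₗ k : ℕ, (M (k : ℕ)).carrier)) → (Σₗ k : ℤ, (M k).carrier) :=
    fun z => match z with
      | Sum.inl ⟨k, x⟩ => ⟨-1 - (ofDual k : ℕ), x⟩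
      | Sum.inr ⟨k, x⟩ => ⟨(k : ℕ), x⟩
  have hmono : StrictMono g := by
    rintro (⟨k, x⟩ | ⟨k, x⟩) (⟨k', y⟩ | ⟨k', y⟩) h
    · cases Sum.Lex.inl_lt_inl_iff.1 h with
      | left a b h1 =>
        have h2 : ofDual k' < ofDual k := h1
        exact Sigma.Lex.left _ _ (by omega)
      | right a b h1 => exact Sigma.Lex.right _ _ h1
    · exact Sigma.Lex.left _ _ (by omega)
    · exact absurd h (Sum.Lex.not_inr_lt_inl)
    · cases Sum.Lex.inr_lt_inr_iff.1 h with
      | left a b h1 => exact Sigma.Lex.left _ _ (by exact_mod_cast h1)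
      | right a b h1 => exact Sigma.Lex.right _ _ h1
  have hsurj : Function.Surjective g := by
    rintro ⟨k, x⟩
    obtain ⟨m, rfl | rfl⟩ : ∃ m : ℕ, k = (m : ℕ) ∨ k = -1 - (m : ℕ) := by
      rcases le_or_gt 0 k with h | h
      · exact ⟨k.toNat, Or.inl (by omega)⟩
      · exact ⟨(-1 - k).toNat, Or.inr (by omega)⟩
    · exact ⟨toLex (Sum.inr ⟨m, x⟩), rfl⟩
    · exact ⟨toLex (Sum.inl ⟨toDual m, x⟩), rfl⟩
  exact ⟨StrictMono.orderIsoOfSurjective g hmono hsurj⟩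

/-- A doubly eventually periodic `ℤ`-indexed lex sum of f.d. orders is f.d. -/
lemma ZLOfd (M : ℤ → BLinOrd) (hM : ∀ k, LOfd (M k))
    (s : ℤ) (hs : 0 ≤ s) (p : ℤ) (hp : 0 < p)
    (hf : ∀ k : ℕ, Nonempty ((M (s + p + k)).carrier ≃o (M (s + k)).carrier))
    (s' : ℤ) (hs' : s' ≤ 0) (p' : ℤ) (hp' : 0 < p')
    (hb : ∀ k : ℕ, Nonempty ((M (s' - p' - k)).carrier ≃o (M (s' - k)).carrier)) :
    LOfd (BLinOrd.of (Σₗ k : ℤ, (M k).carrier)) := by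
  have hpos : LOfd (BLinOrd.of (Σₗ k : ℕ, (M (k : ℕ)).carrier)) := by
    apply NatLOfd s.toNat (fun k : ℕ => M (k : ℕ)) (fun k => hM _) p.toNat (by omega)
    intro k
    have h1 : ((s.toNat + p.toNat + k : ℕ) : ℤ) = s + p + k := by push_cast; omega
    have h2 : ((s.toNat + k : ℕ) : ℤ) = s + k := by push_cast; omega
    rw [h1, h2]
    exact hf k
  have hneg : LOfd (BLinOrd.of (Σₗ k : ℕᵒᵈ, (M (-1 - (ofDual k : ℕ))).carrier)) := by
    apply NatDualLOfd (-1 - s').toNat (fun m : ℕ => M (-1 - (m : ℤ))) (fun m => hM _)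
      p'.toNat (by omega)
    intro k
    obtain ⟨j, hj⟩ : ∃ j : ℕ, (j : ℤ) = ((-1 - s').toNat + k : ℕ) + 1 + s' :=
      ⟨(((-1 - s').toNat + k : ℕ) + 1 + s').toNat, by omega⟩
    have h1 : -1 - (((-1 - s').toNat + p'.toNat + k : ℕ) : ℤ) = s' - p' - j := by
      push_cast; push_cast at hj; omega
    have h2 : -1 - (((-1 - s').toNat + k : ℕ) : ℤ) = s' - j := by
      push_cast; push_cast at hj; omega
    rw [h1, h2]
    exact hb j
  obtain ⟨g⟩ := zSplitIso M
  exact LOfd.iso (LOfd.add hneg hpos) ⟨g⟩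

end ZPart
section Discreteness

lemma intCovBy (k : ℤ) : k ⋖ k + 1 := ⟨by omega, fun c h1 h2 => by omega⟩

lemma succInBlock {X : BLinOrd} (h : dLOfd11 X) (x : X.carrier) :
    (∃ y, x ⋖ y) ∨ ∀ w, w ≤ x := by
  obtain ⟨-, hdisc, -, mx, hmx⟩ := h
  by_cases hx : x < mx
  · exact Or.inl (hdisc.1 x ⟨mx, hx⟩)
  · exact Or.inr fun w => (hmx w).trans (le_of_not_gt hx)

lemma predInBlock {X : BLinOrd} (h : dLOfd11 X) (x : X.carrier) :
    (∃ y, y ⋖ x) ∨ ∀ w, x ≤ w := by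
  obtain ⟨-, hdisc, ⟨mn, hmn⟩, -⟩ := h
  by_cases hx : mn < x
  · exact Or.inl (hdisc.2 x ⟨mn, hx⟩)
  · exact Or.inr fun w => (le_of_not_gt hx).trans (hmn w)

lemma sigmaZSuccStep (M : ℤ → BLinOrd) {k : ℤ} (x : (M k).carrier)
    (hk : dLOfd11 (M k)) (hnext : dLOfd11 (M (k + 1))) :
    ∃ b, (toLex ⟨k, x⟩ : Σₗ k : ℤ, (M k).carrier) ⋖ b := by
  rcases succInBlock hk x with ⟨y, hy⟩ | hxmax
  · exact ⟨toLex ⟨k, y⟩, sigmaCovSame M hy⟩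
  · obtain ⟨-, -, ⟨mn, hmn⟩, -⟩ := hnext
    exact ⟨toLex ⟨k + 1, mn⟩, sigmaCovNext M (intCovBy k) hxmax hmn⟩

lemma sigmaZPredStep (M : ℤ → BLinOrd) {k : ℤ} (x : (M k).carrier)
    (hk : dLOfd11 (M k)) (hprev : dLOfd11 (M (k - 1))) :
    ∃ b, b ⋖ (toLex ⟨k, x⟩ : Σₗ k : ℤ, (M k).carrier) := by
  rcases predInBlock hk x with ⟨y, hy⟩ | hxmin
  · exact ⟨toLex ⟨k, y⟩, sigmaCovSame M hy⟩
  · obtain ⟨-, -, -, mx, hmx⟩ := hprev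
    have hcov : (k - 1 : ℤ) ⋖ k := by
      have := intCovBy (k - 1)
      rwa [show k - 1 + 1 = k by omega] at this
    exact ⟨toLex ⟨k - 1, mx⟩, sigmaCovNext M hcov hmx hxmin⟩

lemma sigmaZTopLe (M : ℤ → BLinOrd) (hemp : ∀ k : ℤ, 0 < k → IsEmpty (M k).carrier)
    {x : (M 0).carrier} (hx : ∀ w, w ≤ x) :
    ∀ z : Σₗ k : ℤ, (M k).carrier, z ≤ toLex ⟨0, x⟩ := by
  rintro ⟨k, y⟩
  rcases lt_trichotomy k 0 with h | h | h
  · exact le_of_lt (Sigma.Lex.left _ _ h)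
  · subst h
    exact Sigma.Lex.right _ _ (hx y)
  · exact ((hemp k h).false y).elim

lemma sigmaZBotLe (M : ℤ → BLinOrd) (hemp : ∀ k : ℤ, k < 0 → IsEmpty (M k).carrier)
    {x : (M 0).carrier} (hx : ∀ w, x ≤ w) :
    ∀ z : Σₗ k : ℤ, (M k).carrier, toLex ⟨0, x⟩ ≤ z := by
  rintro ⟨k, y⟩
  rcases lt_trichotomy k 0 with h | h | h
  · exact ((hemp k h).false y).elim
  · subst h
    exact Sigma.Lex.right _ _ (hx y)
  · exact le_of_lt (Sigma.Lex.left _ _ h)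

end Discreteness
/-- recursive reconstruction lemma. -/
theorem recursive_reconstruction (n : ℕ) (L : Fin (n + 2) → ℤ → BLinOrd)
    (h0cls : ∀ k : ℤ, 0 ≤ k → dLOfd11 (L 0 k))
    (h0emp : ∀ k : ℤ, k < 0 → IsEmpty (L 0 k).carrier)
    (hlastcls : ∀ k : ℤ, k ≤ 0 → dLOfd11 (L (Fin.last (n + 1)) k))
    (hlastemp : ∀ k : ℤ, 0 < k → IsEmpty (L (Fin.last (n + 1)) k).carrier)
    (hmidcls : ∀ j : Fin (n + 2), j ≠ 0 → j ≠ Fin.last (n + 1) → ∀ k : ℤ, dLOfd11 (L j k))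
    (hper : ∀ j : Fin (n + 2), j ≠ Fin.last (n + 1) →
      ∃ s : ℤ, 0 ≤ s ∧ ∃ p : ℤ, 0 < p ∧
        ∀ k : ℕ, Nonempty ((L j (s + p + k)).carrier ≃o (L j (s + k)).carrier))
    (hper' : ∀ j : Fin (n + 2), j ≠ 0 →
      ∃ s : ℤ, s ≤ 0 ∧ ∃ p : ℤ, 0 < p ∧
        ∀ k : ℕ, Nonempty ((L j (s - p - k)).carrier ≃o (L j (s - k)).carrier))
    (S : BLinOrd)
    (hS : IsShuffleOf S
      (fun j : Fin n => BLinOrd.of (Σₗ k : ℤ, (L j.succ.castSucc k).carrier))) :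
    dLOfd11 (BLinOrd.of ((Σₗ k : ℤ, (L 0 k).carrier) ⊕ₗ
      (S.carrier ⊕ₗ (Σₗ k : ℤ, (L (Fin.last (n + 1)) k).carrier)))) := by
  have hne : (0 : Fin (n + 2)) ≠ Fin.last (n + 1) := by
    intro h
    have h' : (0 : ℕ) = n + 1 := by simpa [Fin.val_last] using congrArg Fin.val h
    omega
  have hj1 : ∀ j : Fin n, (j.succ.castSucc : Fin (n + 2)) ≠ 0 := by
    intro j h
    have h' : j.val + 1 = 0 := by simpa using congrArg Fin.val h
    omega
  have hj2 : ∀ j : Fin n, (j.succ.castSucc : Fin (n + 2)) ≠ Fin.last (n + 1) := by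
    intro j h
    have h' : j.val + 1 = n + 1 := by simpa [Fin.val_last] using congrArg Fin.val h
    have := j.isLt
    omega
  -- LOfd of the three pieces
  have hA : LOfd (BLinOrd.of (Σₗ k : ℤ, (L 0 k).carrier)) := by
    obtain ⟨s, hs, p, hp, hf⟩ := hper 0 hne
    refine ZLOfd (L 0) ?_ s hs p hp hf (-1) (by omega) 1 (by omega) ?_
    · intro k
      rcases le_or_gt 0 k with h | h
      · exact (h0cls k h).1
      · exact LOfd_of_isEmpty _ (h0emp k h)
    · intro k
      exact ⟨isoOfEmpty (h0emp _ (by omega)) (h0emp _ (by omega))⟩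
  have hB : LOfd (BLinOrd.of (Σₗ k : ℤ, (L (Fin.last (n + 1)) k).carrier)) := by
    obtain ⟨s', hs', p', hp', hb⟩ := hper' (Fin.last (n + 1)) hne.symm
    refine ZLOfd _ ?_ 1 (by omega) 1 (by omega) ?_ s' hs' p' hp' hb
    · intro k
      rcases le_or_gt k 0 with h | h
      · exact (hlastcls k h).1
      · exact LOfd_of_isEmpty _ (hlastemp k h)
    · intro k
      exact ⟨isoOfEmpty (hlastemp _ (by omega)) (hlastemp _ (by omega))⟩
  have hmidL : ∀ j : Fin n,
      LOfd (BLinOrd.of (Σₗ k : ℤ, (L j.succ.castSucc k).carrier)) := by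
    intro j
    obtain ⟨s, hs, p, hp, hf⟩ := hper _ (hj2 j)
    obtain ⟨s', hs', p', hp', hb⟩ := hper' _ (hj1 j)
    exact ZLOfd _ (fun k => (hmidcls _ (hj1 j) (hj2 j) k).1) s hs p hp hf s' hs' p' hp' hb
  have hSL : LOfd S := by
    rcases hS with ⟨hn0, hSemp⟩ | ⟨f, hdense, ⟨e⟩⟩
    · exact LOfd_of_isEmpty S hSemp
    · exact LOfd.iso (LOfd.shuffle _ f hmidL hdense) ⟨e.symm⟩
  refine ⟨LOfd.add hA (LOfd.add hSL hB), ⟨?_, ?_⟩, ?_, ?_⟩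
  · -- successors
    intro a ha
    rcases a with a | a
    · obtain ⟨k, x⟩ := a
      have hk : (0 : ℤ) ≤ k := le_of_not_gt fun h => (h0emp k h).false x
      obtain ⟨b, hb⟩ := sigmaZSuccStep (L 0) x (h0cls k hk) (h0cls (k + 1) (by omega))
      exact ⟨toLex (Sum.inl b), covLexInl hb⟩
    · rcases a with a | a
      · rcases hS with ⟨hn0, hSemp⟩ | ⟨f, hdense, ⟨e⟩⟩
        · exact (hSemp.false a).elim
        · rcases hez : e a with ⟨q, y⟩
          obtain ⟨k, x⟩ := y
          obtain ⟨b, hb⟩ := sigmaZSuccStep (L (f q).succ.castSucc) x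
            (hmidcls _ (hj1 (f q)) (hj2 (f q)) k)
            (hmidcls _ (hj1 (f q)) (hj2 (f q)) (k + 1))
          have hcov : e a ⋖ toLex ⟨q, b⟩ := by
            rw [hez]
            exact sigmaCovSame _ hb
          refine ⟨toLex (Sum.inr (toLex (Sum.inl (e.symm (toLex ⟨q, b⟩))))), ?_⟩
          refine covLexInr (covLexInl ?_)
          rw [← apply_covBy_apply_iff e, e.apply_symm_apply]
          exact hcov
      · obtain ⟨k, x⟩ := a
        have hk : k ≤ 0 := le_of_not_gt fun h => (hlastemp k h).false x
        by_cases hk0 : k = 0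
        · subst hk0
          rcases succInBlock (hlastcls 0 le_rfl) x with ⟨y, hy⟩ | hxmax
          · exact ⟨toLex (Sum.inr (toLex (Sum.inr (toLex ⟨0, y⟩)))),
              covLexInr (covLexInr (sigmaCovSame _ hy))⟩
          · obtain ⟨b, hab⟩ := ha
            refine absurd hab (not_lt.2 ?_)
            rcases b with w | w
            · exact Sum.Lex.inl_le_inr _ _
            · rcases w with w | w
              · exact Sum.Lex.inr_le_inr_iff.2 (Sum.Lex.inl_le_inr _ _)
              · exact Sum.Lex.inr_le_inr_iff.2 (Sum.Lex.inr_le_inr_iff.2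
                  (sigmaZTopLe _ hlastemp hxmax w))
        · obtain ⟨b, hb⟩ := sigmaZSuccStep (L (Fin.last (n + 1))) x (hlastcls k hk)
            (hlastcls (k + 1) (by omega))
          exact ⟨toLex (Sum.inr (toLex (Sum.inr b))), covLexInr (covLexInr hb)⟩
  · -- predecessors
    intro a ha
    rcases a with a | a
    · obtain ⟨k, x⟩ := a
      have hk : (0 : ℤ) ≤ k := le_of_not_gt fun h => (h0emp k h).false x
      by_cases hk0 : k = 0
      · subst hk0
        rcases predInBlock (h0cls 0 le_rfl) x with ⟨y, hy⟩ | hxmin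
        · exact ⟨toLex (Sum.inl (toLex ⟨0, y⟩)), covLexInl (sigmaCovSame _ hy)⟩
        · obtain ⟨b, hab⟩ := ha
          refine absurd hab (not_lt.2 ?_)
          rcases b with w | w
          · exact Sum.Lex.inl_le_inl_iff.2 (sigmaZBotLe _ h0emp hxmin w)
          · exact Sum.Lex.inl_le_inr _ _
      · obtain ⟨b, hb⟩ := sigmaZPredStep (L 0) x (h0cls k hk) (h0cls (k - 1) (by omega))
        exact ⟨toLex (Sum.inl b), covLexInl hb⟩
    · rcases a with a | a
      · rcases hS with ⟨hn0, hSemp⟩ | ⟨f, hdense, ⟨e⟩⟩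
        · exact (hSemp.false a).elim
        · rcases hez : e a with ⟨q, y⟩
          obtain ⟨k, x⟩ := y
          obtain ⟨b, hb⟩ := sigmaZPredStep (L (f q).succ.castSucc) x
            (hmidcls _ (hj1 (f q)) (hj2 (f q)) k)
            (hmidcls _ (hj1 (f q)) (hj2 (f q)) (k - 1))
          have hcov : toLex ⟨q, b⟩ ⋖ e a := by
            rw [hez]
            exact sigmaCovSame _ hb
          refine ⟨toLex (Sum.inr (toLex (Sum.inl (e.symm (toLex ⟨q, b⟩))))), ?_⟩
          refine covLexInr (covLexInl ?_)
          rw [← apply_covBy_apply_iff e, e.apply_symm_apply]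
          exact hcov
      · obtain ⟨k, x⟩ := a
        have hk : k ≤ 0 := le_of_not_gt fun h => (hlastemp k h).false x
        obtain ⟨b, hb⟩ := sigmaZPredStep (L (Fin.last (n + 1))) x (hlastcls k hk)
          (hlastcls (k - 1) (by omega))
        exact ⟨toLex (Sum.inr (toLex (Sum.inr b))), covLexInr (covLexInr hb)⟩
  · -- minimum
    obtain ⟨-, -, ⟨mn, hmn⟩, -⟩ := h0cls 0 le_rfl
    refine ⟨toLex (Sum.inl (toLex ⟨0, mn⟩)), ?_⟩
    rintro (w | w)
    · exact Sum.Lex.inl_le_inl_iff.2 (sigmaZBotLe _ h0emp hmn w)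
    · exact Sum.Lex.inl_le_inr _ _
  · -- maximum
    obtain ⟨-, -, -, mx, hmx⟩ := hlastcls 0 le_rfl
    refine ⟨toLex (Sum.inr (toLex (Sum.inr (toLex ⟨0, mx⟩)))), ?_⟩
    rintro (w | w)
    · exact Sum.Lex.inl_le_inr _ _
    · rcases w with w | w
      · exact Sum.Lex.inr_le_inr_iff.2 (Sum.Lex.inl_le_inr _ _)
      · exact Sum.Lex.inr_le_inr_iff.2 (Sum.Lex.inr_le_inr_iff.2
          (sigmaZTopLe _ hlastemp hmx w))
end

section
/- Let L₀ and L₁ be functions from ℤ to linear orders such that: L₀(k) ∈ dLO_fp¹¹ for every k ≥ 0 and L₀(k) = 𝟎 for every k < 0; L₁(k) ∈ dLO_fp¹¹ for every k ≤ 0 and L₁(k) = 𝟎 for every k > 0; there exist s₀ ≥ 0 and p₀ > 0 with L₀(s₀ + p₀ + k) ≅ L₀(s₀ + k) for every k ∈ ℕ; and there exist s'₁ ≤ 0 and p'₁ > 0 with L₁(s'₁ − p'₁ − k) ≅ L₁(s'₁ − k) for every k ∈ ℕ. Then Σ_{k∈ℤ} L₀(k) + Σ_{k∈ℤ} L₁(k)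 belongs to dLO_fp¹¹. -/
/-- The class of finitely presented linear orders: the smallest class of linear orders
containing `𝟎` and `𝟏` that is closed under order isomorphism, binary order sums,
and the anti-lexicographic products `L·ω` and `L·ω*`. -/
inductive LOfp : BLinOrd → Prop
  | empty : LOfp (BLinOrd.of (Fin 0))
  | one : LOfp (BLinOrd.of (Fin 1))
  | iso {X Y : BLinOrd} : LOfp X → Nonempty (X.carrier ≃o Y.carrier) → LOfp Y
  | add {X Y : BLinOrd} : LOfp X → LOfp Y → LOfp (BLinOrd.of (X.carrier ⊕ₗ Y.carrier))
  | mulOmega {X : BLinOrd} : LOfp X → LOfp (BLinOrd.of (ℕ ×ₗ X.carrier))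
  | mulOmegaStar {X : BLinOrd} : LOfp X → LOfp (BLinOrd.of (ℕᵒᵈ ×ₗ X.carrier))

/-- Bounded discrete finitely presented linear orders: discrete members of `LOfp` with a
minimum element and a maximum element. -/
def dLOfp11 (X : BLinOrd) : Prop :=
  LOfp X ∧ IsDiscreteLO X.carrier ∧
    (∃ a : X.carrier, ∀ x, a ≤ x) ∧ (∃ a : X.carrier, ∀ x, x ≤ a)

section helpers
variable {α β : Type} [LinearOrder α] [LinearOrder β]

noncomputable def mkIso (f : α → β) (h1 : StrictMono f) (h2 : Function.Surjective f) :
    α ≃o β := StrictMono.orderIsoOfSurjective f h1 h2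

theorem IsDiscreteLO.of_iso (e : α ≃o β) (h : IsDiscreteLO α) : IsDiscreteLO β := by
  obtain ⟨h1, h2⟩ := h
  constructor
  · rintro b ⟨c, hc⟩
    obtain ⟨d, hd⟩ := h1 (e.symm b) ⟨e.symm c, e.symm.strictMono hc⟩
    exact ⟨e d, by simpa using (apply_covBy_apply_iff e).mpr hd⟩
  · rintro b ⟨c, hc⟩
    obtain ⟨d, hd⟩ := h2 (e.symm b) ⟨e.symm c, e.symm.strictMono hc⟩
    exact ⟨e d, by simpa using (apply_covBy_apply_iff e).mpr hd⟩

theorem IsDiscreteLO.dual (h : IsDiscreteLO α) : IsDiscreteLO αᵒᵈ := by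
  obtain ⟨h1, h2⟩ := h
  constructor
  · rintro a ⟨b, hb⟩
    obtain ⟨c, hc⟩ := h2 (OrderDual.ofDual a) ⟨OrderDual.ofDual b, hb⟩
    exact ⟨OrderDual.toDual c, hc.toDual⟩
  · rintro a ⟨b, hb⟩
    obtain ⟨c, hc⟩ := h1 (OrderDual.ofDual a) ⟨OrderDual.ofDual b, hb⟩
    exact ⟨OrderDual.toDual c, hc.toDual⟩

def isoEmpty (ha : IsEmpty α) (hb : IsEmpty β) : α ≃o β :=
  { toFun := fun a => ha.elim a, invFun := fun b => hb.elim b,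
    left_inv := fun a => ha.elim a, right_inv := fun b => hb.elim b,
    map_rel_iff' := fun {a} => ha.elim a }

def isoSubsingleton (e : α ≃ β) (ha : Subsingleton α) : α ≃o β :=
  { e with
    map_rel_iff' := fun {a b} =>
      ⟨fun _ => (ha.elim a b).le, fun _ => le_of_eq (congrArg e (ha.elim a b))⟩ }

noncomputable def sumLexDualIso : (βᵒᵈ ⊕ₗ αᵒᵈ) ≃o (α ⊕ₗ β)ᵒᵈ := by
  refine mkIso (fun x => OrderDual.toDual (match ofLex x with
    | Sum.inl b => toLex (Sum.inr (OrderDual.ofDual b))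
    | Sum.inr a => toLex (Sum.inl (OrderDual.ofDual a)))) ?_ ?_
  · rintro a b h
    rcases h with ⟨h⟩ | ⟨h⟩ | ⟨x, y⟩
    · exact Sum.Lex.inr h
    · exact Sum.Lex.inl h
    · exact Sum.Lex.sep _ _
  · rintro (x | x)
    · exact ⟨toLex (Sum.inr (OrderDual.toDual x)), rfl⟩
    · exact ⟨toLex (Sum.inl (OrderDual.toDual x)), rfl⟩

noncomputable def prodLexOmegaDualIso {γ : Type} [LinearOrder γ] :
    (ℕᵒᵈ ×ₗ γᵒᵈ) ≃o (ℕ ×ₗ γ)ᵒᵈ := by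
  refine mkIso (fun x => OrderDual.toDual
    (toLex ((ofLex x).1.ofDual, (ofLex x).2.ofDual))) ?_ ?_
  · rintro a b h
    rcases h with ⟨_, _, h⟩ | ⟨_, h⟩
    · exact Prod.Lex.left _ _ h
    · exact Prod.Lex.right _ h
  · rintro ⟨n, x⟩
    exact ⟨toLex (OrderDual.toDual n, OrderDual.toDual x), rfl⟩

noncomputable def prodLexOmegaStarDualIso {γ : Type} [LinearOrder γ] :
    (ℕ ×ₗ γᵒᵈ) ≃o (ℕᵒᵈ ×ₗ γ)ᵒᵈ := by
  refine mkIso (fun x => OrderDual.toDual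
    (toLex (OrderDual.toDual (ofLex x).1, (ofLex x).2.ofDual))) ?_ ?_
  · rintro a b h
    rcases h with ⟨_, _, h⟩ | ⟨_, h⟩
    · exact Prod.Lex.left _ _ h
    · exact Prod.Lex.right _ h
  · rintro ⟨n, x⟩
    exact ⟨toLex (OrderDual.ofDual n, OrderDual.toDual x), rfl⟩

theorem LOfp.dual {X : BLinOrd} (h : LOfp X) : LOfp (BLinOrd.of X.carrierᵒᵈ) := by
  induction h with
  | empty =>
      exact LOfp.iso LOfp.empty ⟨isoEmpty (inferInstanceAs (IsEmpty (Fin 0))) ⟨fun x => Fin.elim0 (OrderDual.ofDual x)⟩⟩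
  | one =>
      exact LOfp.iso LOfp.one ⟨isoSubsingleton OrderDual.toDual (inferInstanceAs (Subsingleton (Fin 1)))⟩
  | iso h e ih => exact ih.iso ⟨(Classical.choice e).dual⟩
  | @add X Y hX hY ihX ihY =>
      exact (ihY.add ihX).iso ⟨@sumLexDualIso X.carrier Y.carrier X.str Y.str⟩
  | @mulOmega X hX ih => exact ih.mulOmegaStar.iso ⟨@prodLexOmegaDualIso X.carrier X.str⟩
  | @mulOmegaStar X hX ih => exact ih.mulOmega.iso ⟨@prodLexOmegaStarDualIso X.carrier X.str⟩

theorem dLOfp11.dual {X : BLinOrd} (h : dLOfp11 X) : dLOfp11 (BLinOrd.of X.carrierᵒᵈ) := by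
  obtain ⟨h1, h2, ⟨m, hm⟩, ⟨M, hM⟩⟩ := h
  exact ⟨h1.dual, h2.dual, ⟨OrderDual.toDual M, fun x => hM x⟩, ⟨OrderDual.toDual m, fun x => hm x⟩⟩

end helpers

/-- cast along an index equality -/
def castFib {ι : Type} (L : ι → BLinOrd) {a b : ι} (h : a = b) :
    (L a).carrier ≃o (L b).carrier := h ▸ OrderIso.refl _

theorem sigma_mk_eq {ι : Type} [LinearOrder ι] (L : ι → BLinOrd) {a b : ι} (h : a = b)
    (x : (L a).carrier) :
    (toLex ⟨b, castFib L h x⟩ : Σₗ i : ι, (L i).carrier) = toLex ⟨a, x⟩ := by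
  subst h; rfl

/-- finite lexicographic sums of LOfp orders are LOfp -/
theorem finSigma_lofp (M : ℕ → BLinOrd) (hM : ∀ n, LOfp (M n)) :
    ∀ n : ℕ, LOfp (BLinOrd.of (Σₗ i : Fin n, (M i).carrier))
  | 0 => LOfp.empty.iso ⟨isoEmpty (inferInstanceAs (IsEmpty (Fin 0)))
      ⟨fun x => (ofLex x).1.elim0⟩⟩
  | n + 1 => by
    refine ((finSigma_lofp M hM n).add (hM n)).iso ⟨mkIso (fun z =>
      match ofLex z with
      | Sum.inl w => toLex ⟨Fin.castSucc (ofLex w).1, (ofLex w).2⟩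
      | Sum.inr y => toLex ⟨Fin.last n, y⟩) ?_ ?_⟩
    · rintro a b h
      rcases h with @⟨w₁, w₂, h⟩ | ⟨h⟩ | ⟨w, y⟩
      · obtain ⟨i₁, x₁⟩ := w₁; obtain ⟨i₂, x₂⟩ := w₂
        rcases Sigma.lex_iff.mp h with h1 | ⟨h1, h2⟩
        · exact Sigma.Lex.left _ _ (Fin.castSucc_lt_castSucc_iff.mpr (show i₁ < i₂ from h1))
        · cases h1; exact Sigma.Lex.right _ _ h2
      · exact Sigma.Lex.right _ _ h
      · obtain ⟨i, x⟩ := w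
        exact Sigma.Lex.left _ _ (Fin.castSucc_lt_last i)
    · rintro ⟨i, x⟩
      by_cases h : (i : ℕ) < n
      · exact ⟨toLex (Sum.inl (toLex ⟨⟨i, h⟩, x⟩)), rfl⟩
      · have hi := i.isLt
        obtain rfl : i = Fin.last n := Fin.ext (by simp only [Fin.val_last]; omega)
        exact ⟨toLex (Sum.inr x), rfl⟩

/-- split a sigma over ℕ at position s -/
noncomputable def splitIso (M : ℕ → BLinOrd) (s : ℕ) :
    ((Σₗ i : Fin s, (M i).carrier) ⊕ₗ (Σₗ n : ℕ, (M (s + n)).carrier)) ≃o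
      (Σₗ n : ℕ, (M n).carrier) := by
  refine mkIso (fun z =>
    match ofLex z with
    | Sum.inl w => toLex ⟨(ofLex w).1, (ofLex w).2⟩
    | Sum.inr w => toLex ⟨s + (ofLex w).1, (ofLex w).2⟩) ?_ ?_
  · rintro a b h
    rcases h with @⟨w₁, w₂, h⟩ | @⟨w₁, w₂, h⟩ | ⟨w₁, w₂⟩
    · obtain ⟨i₁, x₁⟩ := w₁; obtain ⟨i₂, x₂⟩ := w₂
      rcases Sigma.lex_iff.mp h with h1 | ⟨h1, h2⟩
      · exact Sigma.Lex.left _ _ h1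
      · cases h1; exact Sigma.Lex.right _ _ h2
    · obtain ⟨n₁, x₁⟩ := w₁; obtain ⟨n₂, x₂⟩ := w₂
      rcases Sigma.lex_iff.mp h with h1 | ⟨h1, h2⟩
      · have h1' : n₁ < n₂ := h1
        exact Sigma.Lex.left _ _ (show s + n₁ < s + n₂ by omega)
      · cases h1; exact Sigma.Lex.right _ _ h2
    · obtain ⟨i, x⟩ := w₁; obtain ⟨n, y⟩ := w₂
      exact Sigma.Lex.left _ _ (show (i : ℕ) < s + n by have := i.isLt; omega)
  · rintro ⟨n, x⟩
    by_cases h : n < s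
    · exact ⟨toLex (Sum.inl (toLex ⟨⟨n, h⟩, x⟩)), rfl⟩
    · obtain ⟨m, rfl⟩ := Nat.exists_eq_add_of_le (Nat.le_of_not_lt h)
      exact ⟨toLex (Sum.inr (toLex ⟨m, x⟩)), rfl⟩

section periodic
variable (N : ℕ → BLinOrd) (p : ℕ)

/-- iterate period isomorphisms -/
noncomputable def EIso (e : ∀ k : ℕ, (N (p + k)).carrier ≃o (N k).carrier) :
    ∀ m k : ℕ, (N (m * p + k)).carrier ≃o (N k).carrier
  | 0, k => castFib N (by simp)
  | m + 1, k => ((castFib N (by ring)).trans (e (m * p + k))).trans (EIso e m k)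

/-- a periodic sigma over ℕ is a product with ℕ -/
noncomputable def perIso (hp : 0 < p) (e : ∀ k : ℕ, (N (p + k)).carrier ≃o (N k).carrier) :
    (ℕ ×ₗ (Σₗ j : Fin p, (N j).carrier)) ≃o (Σₗ n : ℕ, (N n).carrier) := by
  refine mkIso (fun z =>
    toLex ⟨(ofLex z).1 * p + (ofLex (ofLex z).2).1,
      (EIso N p e (ofLex z).1 (ofLex (ofLex z).2).1).symm (ofLex (ofLex z).2).2⟩) ?_ ?_
  · rintro a b h
    rcases h with @⟨m₁, w₁, m₂, w₂, h1⟩ | @⟨m, w₁, w₂, h2⟩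
    · obtain ⟨j₁, x₁⟩ := w₁; obtain ⟨j₂, x₂⟩ := w₂
      have key : m₁ * p + (j₁ : ℕ) < m₂ * p + (j₂ : ℕ) := by
        calc m₁ * p + (j₁ : ℕ) < m₁ * p + p := Nat.add_lt_add_left j₁.isLt _
          _ = (m₁ + 1) * p := (Nat.succ_mul m₁ p).symm
          _ ≤ m₂ * p := Nat.mul_le_mul_right p (Nat.succ_le_of_lt h1)
          _ ≤ m₂ * p + (j₂ : ℕ) := Nat.le_add_right _ _
      exact Sigma.Lex.left _ _ key
    · obtain ⟨j₁, x₁⟩ := w₁; obtain ⟨j₂, x₂⟩ := w₂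
      rcases Sigma.lex_iff.mp h2 with h1 | ⟨h1, h3⟩
      · have h1' : (j₁ : ℕ) < (j₂ : ℕ) := h1
        exact Sigma.Lex.left _ _ (show m * p + (j₁ : ℕ) < m * p + (j₂ : ℕ) by omega)
      · cases h1
        exact Sigma.Lex.right _ _ ((EIso N p e m j₁).symm.strictMono h3)
  · rintro ⟨n, x⟩
    have hj : n % p < p := Nat.mod_lt _ hp
    have h : n = n / p * p + n % p := by
      simpa [Nat.mul_comm] using (Nat.div_add_mod n p).symm
    refine ⟨toLex (n / p, toLex (⟨⟨n % p, hj⟩, EIso N p e (n / p) (n % p) (castFib N h x)⟩ :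
      Sigma fun j : Fin p => (N (j : ℕ)).carrier)), ?_⟩
    show toLex (⟨n / p * p + n % p, (EIso N p e (n / p) (n % p)).symm
      (EIso N p e (n / p) (n % p) (castFib N h x))⟩ : Sigma fun n : ℕ => (N n).carrier) = toLex ⟨n, x⟩
    rw [OrderIso.symm_apply_apply]
    exact sigma_mk_eq N h x

end periodic

theorem natSigma_lofp (M : ℕ → BLinOrd) (hM : ∀ n, LOfp (M n)) (s p : ℕ) (hp : 0 < p)
    (hper : ∀ k : ℕ, Nonempty ((M (s + p + k)).carrier ≃o (M (s + k)).carrier)) :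
    LOfp (BLinOrd.of (Σₗ n : ℕ, (M n).carrier)) := by
  have e : ∀ k : ℕ, (M (s + (p + k))).carrier ≃o (M (s + k)).carrier := fun k =>
    (castFib M (by ring)).trans (hper k).some
  have tail : LOfp (BLinOrd.of (Σₗ n : ℕ, (M (s + n)).carrier)) :=
    ((finSigma_lofp (fun j => M (s + j)) (fun j => hM _) p).mulOmega).iso
      ⟨perIso (fun n => M (s + n)) p hp e⟩
  exact ((finSigma_lofp M hM s).add tail).iso ⟨splitIso M s⟩

section intSigma
variable (L : ℤ → BLinOrd)

/-- inclusion of the ℕ-indexed part into the ℤ-indexed sigma -/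
noncomputable def intIso (hemp : ∀ k : ℤ, k < 0 → IsEmpty (L k).carrier) :
    (Σₗ n : ℕ, (L (n : ℤ)).carrier) ≃o (Σₗ k : ℤ, (L k).carrier) := by
  refine mkIso (fun z => toLex ⟨((ofLex z).1 : ℤ), (ofLex z).2⟩) ?_ ?_
  · rintro ⟨n₁, x₁⟩ ⟨n₂, x₂⟩ h
    rcases Sigma.lex_iff.mp h with h1 | ⟨h1, h2⟩
    · have h1' : n₁ < n₂ := h1
      exact Sigma.Lex.left _ _ (show (n₁ : ℤ) < (n₂ : ℤ) by omega)
    · cases h1; exact Sigma.Lex.right _ _ h2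
  · rintro ⟨k, x⟩
    have hk : 0 ≤ k := le_of_not_gt fun h => (hemp k h).false x
    lift k to ℕ using hk
    exact ⟨toLex ⟨k, x⟩, rfl⟩

theorem intSigma_lofp (hcls : ∀ k : ℤ, 0 ≤ k → LOfp (L k))
    (hemp : ∀ k : ℤ, k < 0 → IsEmpty (L k).carrier)
    (hper : ∃ s : ℤ, 0 ≤ s ∧ ∃ p : ℤ, 0 < p ∧
      ∀ k : ℕ, Nonempty ((L (s + p + k)).carrier ≃o (L (s + k)).carrier)) :
    LOfp (BLinOrd.of (Σₗ k : ℤ, (L k).carrier)) := by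
  obtain ⟨s, hs, p, hp, hper⟩ := hper
  refine (natSigma_lofp (fun n => L (n : ℤ)) (fun n => hcls n (Int.ofNat_nonneg n))
    s.toNat p.toNat (by omega) (fun k => ?_)).iso ⟨intIso L hemp⟩
  have h1 : ((s.toNat + p.toNat + k : ℕ) : ℤ) = s + p + (k : ℤ) := by
    push_cast [Int.toNat_of_nonneg hs, Int.toNat_of_nonneg hp.le]; ring
  have h2 : s + (k : ℤ) = ((s.toNat + k : ℕ) : ℤ) := by
    push_cast [Int.toNat_of_nonneg hs]; ring
  exact ⟨(castFib L h1).trans ((hper k).some.trans (castFib L h2))⟩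

/-- covering pairs inside a single fibre -/
theorem cov_within {k : ℤ} {x y : (L k).carrier} (h : x ⋖ y) :
    (toLex ⟨k, x⟩ : Σₗ k : ℤ, (L k).carrier) ⋖ toLex ⟨k, y⟩ := by
  constructor
  · exact Sigma.Lex.right _ _ h.lt
  · rintro ⟨k', c⟩ hc1 hc2
    rcases Sigma.lex_iff.mp hc1 with h1 | ⟨h1, h2⟩ <;>
      rcases Sigma.lex_iff.mp hc2 with h3 | ⟨h3, h4⟩
    · exact absurd rfl (ne_of_gt (h1.trans h3))
    · cases h3; exact absurd rfl (ne_of_gt h1)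
    · cases h1; exact absurd rfl (ne_of_gt h3)
    · cases h1; exact h.2 h2 h4

/-- covering pairs across consecutive fibres -/
theorem cov_boundary {l k : ℤ} (hlk : l + 1 = k) {x : (L l).carrier} {y : (L k).carrier}
    (hx : ∀ z, z ≤ x) (hy : ∀ z, y ≤ z) :
    (toLex ⟨l, x⟩ : Σₗ k : ℤ, (L k).carrier) ⋖ toLex ⟨k, y⟩ := by
  constructor
  · exact Sigma.Lex.left _ _ (by omega)
  · rintro ⟨k', c⟩ hc1 hc2
    rcases Sigma.lex_iff.mp hc1 with h1 | ⟨h1, h2⟩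
    · rcases Sigma.lex_iff.mp hc2 with h3 | ⟨h3, h4⟩
      · have h1' : l < k' := h1
        have h3' : k' < k := h3
        omega
      · cases h3; exact absurd (hy c) (not_le.mpr h4)
    · cases h1; exact absurd (hx c) (not_le.mpr h2)

theorem intSigma_props
    (hcls : ∀ k : ℤ, 0 ≤ k → (IsDiscreteLO (L k).carrier ∧
      (∃ a : (L k).carrier, ∀ x, a ≤ x) ∧ (∃ a : (L k).carrier, ∀ x, x ≤ a)))
    (hemp : ∀ k : ℤ, k < 0 → IsEmpty (L k).carrier) :
    IsDiscreteLO (Σₗ k : ℤ, (L k).carrier) ∧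
      (∃ a : (Σₗ k : ℤ, (L k).carrier), ∀ x, a ≤ x) ∧
      (∀ a : (Σₗ k : ℤ, (L k).carrier), ∃ b, a < b) := by
  have hk0 : ∀ (k : ℤ), (L k).carrier → 0 ≤ k := fun k x =>
    le_of_not_gt fun h => (hemp k h).false x
  refine ⟨⟨?_, ?_⟩, ?_, ?_⟩
  · -- successors
    rintro ⟨k, x⟩ -
    have hk := hk0 k x
    obtain ⟨hd, -, M, hM⟩ := hcls k hk
    rcases (hM x).lt_or_eq with hlt | heq
    · obtain ⟨b, hb⟩ := hd.1 x ⟨M, hlt⟩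
      exact ⟨toLex ⟨k, b⟩, cov_within L hb⟩
    · obtain ⟨-, ⟨m', hm'⟩, -⟩ := hcls (k + 1) (by omega)
      exact ⟨toLex ⟨k + 1, m'⟩, cov_boundary L rfl (heq ▸ hM) hm'⟩
  · -- predecessors
    rintro ⟨k, x⟩ ⟨c, hc⟩
    have hk := hk0 k x
    obtain ⟨hd, ⟨m, hm⟩, -⟩ := hcls k hk
    rcases (hm x).lt_or_eq with hlt | heq
    · obtain ⟨b, hb⟩ := hd.2 x ⟨m, hlt⟩
      exact ⟨toLex ⟨k, b⟩, cov_within L hb⟩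
    · have hkpos : 0 < k := by
        obtain ⟨k', c'⟩ := c
        have hk' := hk0 k' c'
        rcases Sigma.lex_iff.mp hc with h1 | ⟨h1, h2⟩
        · have h1' : k' < k := h1
          omega
        · cases h1; exact absurd (hm c') (not_le.mpr (heq ▸ h2))
      obtain ⟨-, -, M', hM'⟩ := hcls (k - 1) (by omega)
      exact ⟨toLex ⟨k - 1, M'⟩, cov_boundary L (by omega) hM' (heq ▸ hm)⟩
  · -- minimum
    obtain ⟨-, ⟨m, hm⟩, -⟩ := hcls 0 le_rfl
    refine ⟨toLex ⟨0, m⟩, ?_⟩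
    rintro ⟨k, x⟩
    have hk := hk0 k x
    rcases hk.lt_or_eq with h | h
    · exact le_of_lt (Sigma.Lex.left _ _ h)
    · cases h; exact Sigma.Lex.right _ _ (hm x)
  · -- no maximum
    rintro ⟨k, x⟩
    obtain ⟨-, ⟨m, hm⟩, -⟩ := hcls (k + 1) (by have := hk0 k x; omega)
    exact ⟨toLex ⟨k + 1, m⟩, Sigma.Lex.left _ _ (by omega)⟩

end intSigma

section junction
variable {α β : Type} [LinearOrder α] [LinearOrder β]

theorem cov_inl {x y : α} (h : x ⋖ y) :
    (toLex (Sum.inl x) : α ⊕ₗ β) ⋖ toLex (Sum.inl y) := by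
  refine ⟨Sum.Lex.inl h.lt, ?_⟩
  rintro (c | c) hc1 hc2
  · cases hc1 with
    | inl hd1 => cases hc2 with
      | inl hd2 => exact h.2 hd1 hd2
  · cases hc2

theorem cov_inr {x y : β} (h : x ⋖ y) :
    (toLex (Sum.inr x) : α ⊕ₗ β) ⋖ toLex (Sum.inr y) := by
  refine ⟨Sum.Lex.inr h.lt, ?_⟩
  rintro (c | c) hc1 hc2
  · cases hc1
  · cases hc1 with
    | inr hd1 => cases hc2 with
      | inr hd2 => exact h.2 hd1 hd2

theorem cov_sep {x : α} {y : β} (hx : ∀ z, z ≤ x) (hy : ∀ z, y ≤ z) :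
    (toLex (Sum.inl x) : α ⊕ₗ β) ⋖ toLex (Sum.inr y) := by
  refine ⟨Sum.Lex.sep _ _, ?_⟩
  rintro (c | c) hc1 hc2
  · cases hc1 with
    | inl hd => exact absurd (hx c) (not_le.mpr hd)
  · cases hc2 with
    | inr hd => exact absurd (hy c) (not_le.mpr hd)

theorem junction (hA : LOfp (BLinOrd.of α)) (hB : LOfp (BLinOrd.of β))
    (dA : IsDiscreteLO α) (dB : IsDiscreteLO β)
    (minA : ∃ a : α, ∀ x, a ≤ x) (nomaxA : ∀ a : α, ∃ b, a < b)
    (maxB : ∃ b : β, ∀ x, x ≤ b) (nominB : ∀ b : β, ∃ c, c < b) :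
    dLOfp11 (BLinOrd.of (α ⊕ₗ β)) := by
  refine ⟨hA.add hB, ⟨?_, ?_⟩, ?_, ?_⟩
  · rintro (x | x) hex
    · obtain ⟨x', hx'⟩ := nomaxA x
      obtain ⟨b, hb⟩ := dA.1 x ⟨x', hx'⟩
      exact ⟨toLex (Sum.inl b), cov_inl hb⟩
    · obtain ⟨c, hc⟩ := hex
      rcases c with c | c
      · exact absurd hc Sum.Lex.not_inr_lt_inl
      · cases hc with
        | inr hd =>
          obtain ⟨b, hb⟩ := dB.1 x ⟨c, hd⟩
          exact ⟨toLex (Sum.inr b), cov_inr hb⟩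
  · rintro (x | x) hex
    · obtain ⟨c, hc⟩ := hex
      rcases c with c | c
      · cases hc with
        | inl hd =>
          obtain ⟨b, hb⟩ := dA.2 x ⟨c, hd⟩
          exact ⟨toLex (Sum.inl b), cov_inl hb⟩
      · cases hc
    · obtain ⟨c, hc⟩ := nominB x
      obtain ⟨b, hb⟩ := dB.2 x ⟨c, hc⟩
      exact ⟨toLex (Sum.inr b), cov_inr hb⟩
  · obtain ⟨m, hm⟩ := minA
    refine ⟨toLex (Sum.inl m), ?_⟩
    rintro (z | z)
    · exact Sum.Lex.inl (hm z)
    · exact Sum.Lex.sep _ _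
  · obtain ⟨M, hM⟩ := maxB
    refine ⟨toLex (Sum.inr M), ?_⟩
    rintro (z | z)
    · exact Sum.Lex.sep _ _
    · exact Sum.Lex.inr (hM z)

end junction


/-- the dualised, index-reversed family -/
def dualFam (L1 : ℤ → BLinOrd) : ℤ → BLinOrd := fun k => BLinOrd.of ((L1 (-k)).carrierᵒᵈ)

/-- reversal isomorphism for the dualised ℤ-indexed family -/
noncomputable def dualSigmaIso (L1 : ℤ → BLinOrd) :
    (Σₗ k : ℤ, (dualFam L1 k).carrier) ≃o (Σₗ k : ℤ, (L1 k).carrier)ᵒᵈ := by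
  refine mkIso (fun z =>
    OrderDual.toDual (toLex ⟨-(ofLex z).1, OrderDual.ofDual (ofLex z).2⟩)) ?_ ?_
  · rintro ⟨k₁, y₁⟩ ⟨k₂, y₂⟩ h
    rcases Sigma.lex_iff.mp h with h1 | ⟨h1, h2⟩
    · have h1' : k₁ < k₂ := h1
      exact Sigma.Lex.left _ _ (show -k₂ < -k₁ by omega)
    · cases h1; exact Sigma.Lex.right _ _ h2
  · intro z
    obtain ⟨m, x⟩ := z
    have h : m = - - m := (neg_neg m).symm
    refine ⟨toLex (⟨-m, OrderDual.toDual (castFib L1 h x)⟩ :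
      Sigma fun k : ℤ => (dualFam L1 k).carrier), ?_⟩
    show OrderDual.toDual (toLex (⟨- - m, castFib L1 h x⟩ : Sigma fun k : ℤ => (L1 k).carrier)) =
      OrderDual.toDual (toLex (⟨m, x⟩ : Sigma fun k : ℤ => (L1 k).carrier))
    exact congrArg OrderDual.toDual (sigma_mk_eq L1 h x)

/-- the `n = 0` (finitely presented) version of the recursive reconstruction
lemma. -/
theorem recursive_reconstruction_fp (L0 L1 : ℤ → BLinOrd)
    (h0cls : ∀ k : ℤ, 0 ≤ k → dLOfp11 (L0 k))
    (h0emp : ∀ k : ℤ, k < 0 → IsEmpty (L0 k).carrier)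
    (h1cls : ∀ k : ℤ, k ≤ 0 → dLOfp11 (L1 k))
    (h1emp : ∀ k : ℤ, 0 < k → IsEmpty (L1 k).carrier)
    (hper0 : ∃ s : ℤ, 0 ≤ s ∧ ∃ p : ℤ, 0 < p ∧
      ∀ k : ℕ, Nonempty ((L0 (s + p + k)).carrier ≃o (L0 (s + k)).carrier))
    (hper1 : ∃ s : ℤ, s ≤ 0 ∧ ∃ p : ℤ, 0 < p ∧
      ∀ k : ℕ, Nonempty ((L1 (s - p - k)).carrier ≃o (L1 (s - k)).carrier)) :
    dLOfp11 (BLinOrd.of ((Σₗ k : ℤ, (L0 k).carrier) ⊕ₗ (Σₗ k : ℤ, (L1 k).carrier))) := by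
  -- the left half
  obtain ⟨dA, minA, nomaxA⟩ :=
    intSigma_props L0 (fun k hk => ⟨(h0cls k hk).2.1, (h0cls k hk).2.2⟩) h0emp
  have lofpA : LOfp (BLinOrd.of (Σₗ k : ℤ, (L0 k).carrier)) :=
    intSigma_lofp L0 (fun k hk => (h0cls k hk).1) h0emp hper0
  -- the right half, via duality
  have h1cls' : ∀ k : ℤ, 0 ≤ k → dLOfp11 (dualFam L1 k) := fun k hk =>
    (h1cls (-k) (by omega)).dual
  have h1emp' : ∀ k : ℤ, k < 0 → IsEmpty (dualFam L1 k).carrier := fun k hk =>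
    ⟨fun x => (h1emp (-k) (by omega)).false (OrderDual.ofDual x)⟩
  have hper1' : ∃ s : ℤ, 0 ≤ s ∧ ∃ p : ℤ, 0 < p ∧
      ∀ k : ℕ, Nonempty ((dualFam L1 (s + p + k)).carrier ≃o (dualFam L1 (s + k)).carrier) := by
    obtain ⟨s, hs, p, hp, hper⟩ := hper1
    refine ⟨-s, by omega, p, hp, fun k => ?_⟩
    have h1 : -(-s + p + (k : ℤ)) = s - p - k := by ring
    have h2 : s - (k : ℤ) = -(-s + k) := by ring
    have e : (L1 (-(-s + p + (k : ℤ)))).carrier ≃o (L1 (-(-s + (k : ℤ)))).carrier :=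
      (castFib L1 h1).trans ((hper k).some.trans (castFib L1 h2))
    exact ⟨e.dual⟩
  obtain ⟨dB', minB', nomaxB'⟩ :=
    intSigma_props (dualFam L1) (fun k hk => (h1cls' k hk).2) h1emp'
  have lofpB' : LOfp (BLinOrd.of (Σₗ k : ℤ, (dualFam L1 k).carrier)) :=
    intSigma_lofp (dualFam L1) (fun k hk => (h1cls' k hk).1) h1emp' hper1'
  have Φ : (Σₗ k : ℤ, (dualFam L1 k).carrier) ≃o (Σₗ k : ℤ, (L1 k).carrier)ᵒᵈ := dualSigmaIso L1
  have lofpB : LOfp (BLinOrd.of (Σₗ k : ℤ, (L1 k).carrier)) :=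
    lofpB'.dual.iso ⟨Φ.dual.trans (OrderIso.dualDual _).symm⟩
  have dB : IsDiscreteLO (Σₗ k : ℤ, (L1 k).carrier) :=
    ((dB'.of_iso Φ).dual).of_iso (OrderIso.dualDual _).symm
  have maxB : ∃ b : (Σₗ k : ℤ, (L1 k).carrier), ∀ x, x ≤ b := by
    obtain ⟨m, hm⟩ := minB'
    refine ⟨OrderDual.ofDual (Φ m), fun x => ?_⟩
    have h2 := Φ.monotone (hm (Φ.symm (OrderDual.toDual x)))
    rw [Φ.apply_symm_apply] at h2
    exact h2
  have nominB : ∀ b : (Σₗ k : ℤ, (L1 k).carrier), ∃ c, c < b := by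
    intro b
    obtain ⟨c, hc⟩ := nomaxB' (Φ.symm (OrderDual.toDual b))
    refine ⟨OrderDual.ofDual (Φ c), ?_⟩
    have h2 := Φ.strictMono hc
    rw [Φ.apply_symm_apply] at h2
    exact h2
  exact junction lofpA lofpB dA dB minA nomaxA maxB nominB
end

section
/- Let n ≥ 1 and let L₁,…,L_n be nonempty linear orders, with a fixed partition {D₁,…,D_n} of ℚ into subsets each dense in ℚ, and Ξ(L₁,…,L_n) = Σ_{q∈ℚ} L'_q the corresponding shuffle. Then every gap (X,Y) of Ξ(L₁,…,L_n) is of one of the following four types: (G1) X = Σ_{q∈ℚ, q<r₀} L'_q and Y = Σ_{q∈ℚ, q>r₀} L'_q for some irrational real r₀; (G2) X = Σ_{q∈ℚ, q<r₀} L'_q and Y = Σ_{q∈ℚ, q≥r₀} L'_q for some r₀ ∈ D_j with L_j having no minimum; (G3) X = Σ_{q∈ℚ, q≤r₀} L'_q and Y = Σ_{q∈ℚ, q>r₀} L'_q for some r₀ ∈ D_j with L_j having no maximum; (G4) X = Σ_{q∈ℚ, q<r₀} L'_q + L_j¹ and Y = L_j² + Σ_{q∈ℚ, q>r₀} L'_q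 for some r₀ ∈ D_j and some gap (L_j¹, L_j²) of the copy L'_{r₀} of L_j. -/
/-- A Dedekind cut of a linear order: a pair `(X, Y)` of nonempty subsets covering the
order with every element of `X` below every element of `Y`. -/
def IsCut {α : Type*} [LinearOrder α] (X Y : Set α) : Prop :=
  X.Nonempty ∧ Y.Nonempty ∧ X ∪ Y = Set.univ ∧ ∀ x ∈ X, ∀ y ∈ Y, x < y

/-- A gap of a linear order: a Dedekind cut whose left part has no maximum and whose
right part has no minimum. -/
def IsGap {α : Type*} [LinearOrder α] (X Y : Set α) : Prop :=
  IsCut X Y ∧ (∀ x ∈ X, ∃ x' ∈ X, x < x') ∧ (∀ y ∈ Y, ∃ y' ∈ Y, y' < y)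

/-- every gap of the shuffle `Ξ(L₁,…,Lₙ) = Σ_{q ∈ ℚ} L (f q)` is of one of
the four types G1–G4. -/
theorem shuffle_gaps_classification {n : ℕ} (hn : 1 ≤ n) (L : Fin n → Type)
    [∀ i, LinearOrder (L i)] [∀ i, Nonempty (L i)]
    (f : ℚ → Fin n) (hf : ∀ i : Fin n, DenseQ (f ⁻¹' {i}))
    (X Y : Set (Σₗ q : ℚ, L (f q))) (hXY : IsGap X Y) :
    (∃ r₀ : ℝ, Irrational r₀ ∧
      X = {t | ((ofLex t).1 : ℝ) < r₀} ∧ Y = {t | r₀ < ((ofLex t).1 : ℝ)}) ∨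
    (∃ r₀ : ℚ, (∀ a : L (f r₀), ∃ b, b < a) ∧
      X = {t | (ofLex t).1 < r₀} ∧ Y = {t | r₀ ≤ (ofLex t).1}) ∨
    (∃ r₀ : ℚ, (∀ a : L (f r₀), ∃ b, a < b) ∧
      X = {t | (ofLex t).1 ≤ r₀} ∧ Y = {t | r₀ < (ofLex t).1}) ∨
    (∃ r₀ : ℚ, ∃ A B : Set (L (f r₀)), IsGap A B ∧
      X = {t | (ofLex t).1 < r₀} ∪ {t | ∃ a ∈ A, t = toLex ⟨r₀, a⟩} ∧
      Y = {t | r₀ < (ofLex t).1} ∪ {t | ∃ b ∈ B, t = toLex ⟨r₀, b⟩}) := by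
  obtain ⟨⟨hXne, hYne, hUnion, hlt⟩, hnomax, hnomin⟩ := hXY
  -- basic facts
  have hdisj : ∀ t, t ∈ X → t ∈ Y → False := fun t hx hy => lt_irrefl t (hlt t hx t hy)
  have hmem : ∀ t, t ∈ X ∨ t ∈ Y := by
    intro t
    have : t ∈ X ∪ Y := hUnion ▸ Set.mem_univ t
    exact this
  have hXdc : ∀ t ∈ X, ∀ s, s ≤ t → s ∈ X := by
    intro t ht s hs
    rcases hmem s with h | h
    · exact h
    · exact absurd (hlt t ht s h) (not_lt.2 hs)
  have hYuc : ∀ t ∈ Y, ∀ s, t ≤ s → s ∈ Y := by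
    intro t ht s hs
    rcases hmem s with h | h
    · exact absurd (hlt s h t ht) (not_lt.2 hs)
    · exact h
  -- lex lt facts
  have hlex : ∀ (q q' : ℚ) (a : L (f q)) (a' : L (f q')), q < q' →
      (toLex ⟨q, a⟩ : Σₗ q : ℚ, L (f q)) < toLex ⟨q', a'⟩ := by
    intro q q' a a' h
    exact Sigma.Lex.lt_def.2 (Or.inl h)
  by_cases hsplit : ∃ q₀ : ℚ, (∃ a, toLex ⟨q₀, a⟩ ∈ X) ∧ (∃ b, toLex ⟨q₀, b⟩ ∈ Y)
  · -- case G4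
    obtain ⟨q₀, ⟨a₀, ha₀⟩, ⟨b₀, hb₀⟩⟩ := hsplit
    set A : Set (L (f q₀)) := {a | toLex ⟨q₀, a⟩ ∈ X} with hA
    set B : Set (L (f q₀)) := {b | toLex ⟨q₀, b⟩ ∈ Y} with hB
    -- for t ∈ X, t.1 ≤ q₀ ; for t ∈ Y, q₀ ≤ t.1
    have hX1 : ∀ t ∈ X, (ofLex t).1 ≤ q₀ := by
      intro t ht
      by_contra h
      exact hdisj t ht (hYuc _ hb₀ t (le_of_lt (Sigma.Lex.lt_def.2 (Or.inl (not_le.1 h)))))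
    have hY1 : ∀ t ∈ Y, q₀ ≤ (ofLex t).1 := by
      intro t ht
      by_contra h
      exact hdisj t (hXdc _ ha₀ t (le_of_lt (Sigma.Lex.lt_def.2 (Or.inl (not_le.1 h))))) ht
    refine Or.inr (Or.inr (Or.inr ⟨q₀, A, B, ⟨⟨⟨a₀, ha₀⟩, ⟨b₀, hb₀⟩, ?_, ?_⟩, ?_, ?_⟩, ?_, ?_⟩))
    · ext a
      simp only [Set.mem_union, Set.mem_univ, iff_true]
      exact hmem (toLex ⟨q₀, a⟩)
    · intro a ha b hb
      have := hlt _ ha _ hb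
      rcases Sigma.Lex.lt_def.1 this with h | ⟨h, h2⟩
      · exact absurd h (lt_irrefl q₀)
      · exact h2
    · -- A no max
      intro a ha
      obtain ⟨x', hx', hlt'⟩ := hnomax _ ha
      have hle : (ofLex x').1 ≤ q₀ := hX1 x' hx'
      rcases Sigma.Lex.lt_def.1 hlt' with h | ⟨h, h2⟩
      · exact absurd h (not_lt.2 hle)
      · obtain ⟨q', a'⟩ := x'
        cases h
        exact ⟨a', hx', h2⟩
    · -- B no min
      intro b hb
      obtain ⟨y', hy', hlt'⟩ := hnomin _ hb
      have hle : q₀ ≤ (ofLex y').1 := hY1 y' hy'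
      rcases Sigma.Lex.lt_def.1 hlt' with h | ⟨h, h2⟩
      · exact absurd h (not_lt.2 hle)
      · obtain ⟨q', b'⟩ := y'
        cases h
        exact ⟨b', hy', h2⟩
    · -- X equality
      ext t
      constructor
      · intro ht
        rcases lt_or_eq_of_le (hX1 t ht) with h | h
        · exact Or.inl h
        · obtain ⟨q, a⟩ := t
          have h : q = q₀ := h
          subst h
          exact Or.inr ⟨a, ht, rfl⟩
      · rintro (h | ⟨a, ha, rfl⟩)
        · exact hXdc _ ha₀ t (le_of_lt (Sigma.Lex.lt_def.2 (Or.inl h)))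
        · exact ha
    · -- Y equality
      ext t
      constructor
      · intro ht
        rcases lt_or_eq_of_le (hY1 t ht) with h | h
        · exact Or.inl h
        · obtain ⟨q, b⟩ := t
          have h : q₀ = q := h
          subst h
          exact Or.inr ⟨b, ht, rfl⟩
      · rintro (h | ⟨b, hb, rfl⟩)
        · exact hYuc _ hb₀ t (le_of_lt (Sigma.Lex.lt_def.2 (Or.inl h)))
        · exact hb
  · -- no split fiber
    push_neg at hsplit
    set Qx : Set ℚ := {q | ∃ a, toLex ⟨q, a⟩ ∈ X} with hQx
    have hfibX : ∀ t : (Σₗ q : ℚ, L (f q)), (ofLex t).1 ∈ Qx → t ∈ X := by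
      intro t ht
      rcases hmem t with h | h
      · exact h
      · obtain ⟨q, a⟩ := t
        exact (hsplit q ht a h).elim
    have hXQ : ∀ t : (Σₗ q : ℚ, L (f q)), t ∈ X ↔ (ofLex t).1 ∈ Qx := by
      intro t
      refine ⟨fun h => ?_, hfibX t⟩
      obtain ⟨q, a⟩ := t
      exact ⟨a, h⟩
    have hYQ : ∀ t : (Σₗ q : ℚ, L (f q)), t ∈ Y ↔ (ofLex t).1 ∉ Qx := by
      intro t
      constructor
      · intro h hq
        exact hdisj t (hfibX t hq) h
      · intro h
        rcases hmem t with h' | h'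
        · exact absurd ((hXQ t).1 h') h
        · exact h'
    have hQdc : ∀ q q' : ℚ, q ≤ q' → q' ∈ Qx → q ∈ Qx := by
      intro q q' hle hq'
      obtain ⟨a', ha'⟩ := hq'
      obtain ⟨a⟩ := ‹∀ i, Nonempty (L i)› (f q)
      rcases lt_or_eq_of_le hle with h | h
      · exact ⟨a, hXdc _ ha' _ (le_of_lt (Sigma.Lex.lt_def.2 (Or.inl h)))⟩
      · subst h; exact ⟨a', ha'⟩
    have hQxne : Qx.Nonempty := by
      obtain ⟨x, hx⟩ := hXne
      exact ⟨(ofLex x).1, (hXQ x).1 hx⟩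
    have hQcne : ∃ q, q ∉ Qx := by
      obtain ⟨y, hy⟩ := hYne
      exact ⟨(ofLex y).1, (hYQ y).1 hy⟩
    by_cases hmax : ∃ q₀ ∈ Qx, ∀ q ∈ Qx, q ≤ q₀
    · -- G3
      obtain ⟨q₀, hq₀, hq₀max⟩ := hmax
      refine Or.inr (Or.inr (Or.inl ⟨q₀, ?_, ?_, ?_⟩))
      · intro a
        have ha : toLex ⟨q₀, a⟩ ∈ X := hfibX _ hq₀
        obtain ⟨x', hx', hlt'⟩ := hnomax _ ha
        have hle : (ofLex x').1 ≤ q₀ := hq₀max _ ((hXQ x').1 hx')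
        rcases Sigma.Lex.lt_def.1 hlt' with h | ⟨h, h2⟩
        · exact absurd h (not_lt.2 hle)
        · obtain ⟨q', a'⟩ := x'
          cases h
          exact ⟨a', h2⟩
      · ext t
        simp only [Set.mem_setOf_eq]
        rw [hXQ t]
        exact ⟨fun h => hq₀max _ h, fun h => hQdc _ _ h hq₀⟩
      · ext t
        simp only [Set.mem_setOf_eq]
        rw [hYQ t]
        constructor
        · intro h
          by_contra h'
          exact h (hQdc _ _ (not_lt.1 h') hq₀)
        · intro h h'
          exact absurd (hq₀max _ h') (not_le.2 h)
    · by_cases hmin : ∃ q₀, q₀ ∉ Qx ∧ ∀ q, q ∉ Qx → q₀ ≤ q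
      · -- G2
        obtain ⟨q₀, hq₀, hq₀min⟩ := hmin
        have hQlt : ∀ q ∈ Qx, q < q₀ := by
          intro q hq
          by_contra h
          exact hq₀ (hQdc _ _ (not_lt.1 h) hq)
        refine Or.inr (Or.inl ⟨q₀, ?_, ?_, ?_⟩)
        · intro a
          have ha : toLex ⟨q₀, a⟩ ∈ Y := (hYQ _).2 hq₀
          obtain ⟨y', hy', hlt'⟩ := hnomin _ ha
          have hle : q₀ ≤ (ofLex y').1 := hq₀min _ ((hYQ y').1 hy')
          rcases Sigma.Lex.lt_def.1 hlt' with h | ⟨h, h2⟩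
          · exact absurd h (not_lt.2 hle)
          · obtain ⟨q', b'⟩ := y'
            cases h
            exact ⟨b', h2⟩
        · ext t
          simp only [Set.mem_setOf_eq]
          rw [hXQ t]
          constructor
          · exact fun h => hQlt _ h
          · intro h
            by_contra h'
            exact absurd (hq₀min _ h') (not_le.2 h)
        · ext t
          simp only [Set.mem_setOf_eq]
          rw [hYQ t]
          exact ⟨fun h => hq₀min _ h, fun h h' => absurd (hQlt _ h') (not_lt.2 h)⟩
      · -- G1
        push_neg at hmax hmin
        set r₀ : ℝ := sSup ((↑) '' Qx) with hr₀
        obtain ⟨q₁, hq₁⟩ := hQcne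
        have hbdd : BddAbove (((↑) '' Qx : Set ℝ)) := by
          refine ⟨(q₁ : ℝ), ?_⟩
          rintro x ⟨q, hq, rfl⟩
          have : q < q₁ := by
            by_contra h
            exact hq₁ (hQdc _ _ (not_lt.1 h) hq)
          exact_mod_cast le_of_lt this
        have hne : (((↑) '' Qx : Set ℝ)).Nonempty := hQxne.image _
        have hinlt : ∀ q ∈ Qx, (q : ℝ) < r₀ := by
          intro q hq
          obtain ⟨q', hq', hqq'⟩ := hmax q hq
          calc (q : ℝ) < q' := by exact_mod_cast hqq'
            _ ≤ r₀ := le_csSup hbdd ⟨q', hq', rfl⟩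
        have houtgt : ∀ q, q ∉ Qx → r₀ < (q : ℝ) := by
          intro q hq
          obtain ⟨q', hq', hqq'⟩ := hmin q hq
          have hle : r₀ ≤ (q' : ℝ) := by
            apply csSup_le hne
            rintro x ⟨p, hp, rfl⟩
            have : p < q' := by
              by_contra h
              exact hq' (hQdc _ _ (not_lt.1 h) hp)
            exact_mod_cast le_of_lt this
          calc r₀ ≤ (q' : ℝ) := hle
            _ < q := by exact_mod_cast hqq'
        refine Or.inl ⟨r₀, ?_, ?_, ?_⟩
        · rintro ⟨p, hp⟩
          rcases em (p ∈ Qx) with h | h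
          · exact absurd (hp ▸ hinlt p h) (lt_irrefl _)
          · exact absurd (hp ▸ houtgt p h) (lt_irrefl _)
        · ext t
          simp only [Set.mem_setOf_eq]
          rw [hXQ t]
          constructor
          · exact fun h => hinlt _ h
          · intro h
            by_contra h'
            exact absurd (houtgt _ h') (not_lt.2 (le_of_lt h))
        · ext t
          simp only [Set.mem_setOf_eq]
          rw [hYQ t]
          constructor
          · exact fun h => houtgt _ h
          · intro h h'
            exact absurd (hinlt _ h') (not_lt.2 (le_of_lt h))
end

section
/- Let n ≥ 1 and let L₁,…,L_n be nonempty linear orders, with a fixed partition {D₁,…,D_n} of ℚ into subsets each dense in ℚ (regarded as subsets of ℝ). Then the completion of the shuffle satisfies 𝒞(Ξ(L₁,…,L_n)) ≅ Σ_{r∈ℝ} T_r, where T_r := 𝟏 ∔ 𝒞(L_j) ∔ 𝟏 whenever r ∈ D_j for some j ∈ {1,…,n}, and T_r := 𝟏 whenever r is irrational. -/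
/-- A linear order is (Dedekind) complete if every nonempty subset bounded above has a
least upper bound. -/
def IsCompleteLO (α : Type*) [LinearOrder α] : Prop :=
  ∀ s : Set α, s.Nonempty → BddAbove s → ∃ a, IsLUB s a

/-- `e : α ↪o β` exhibits `β` as a completion of `α`: `β` is complete and no proper
suborder of `β` containing (the image of) `α` is complete. -/
def IsCompletion {α β : Type*} [LinearOrder α] [LinearOrder β] (e : α ↪o β) : Prop :=
  IsCompleteLO β ∧ ∀ S : Set β, Set.range e ⊆ S → IsCompleteLO S → S = Set.univ

/-- The order `L₁ ∔ L₂` obtained from `L₁ + L₂` by identifying the maximum element of `L₁`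
with the minimum element of `L₂` when both exist (realized, up to canonical isomorphism,
by deleting the minimum of `L₂` exactly when `L₁` has a maximum and `L₂` has a minimum),
and equal to `L₁ + L₂` otherwise. -/
abbrev dotSum (α β : Type*) [LinearOrder α] [LinearOrder β] :=
  α ⊕ₗ {y : β // ¬((∃ a : α, ∀ x, x ≤ a) ∧ (∀ z, y ≤ z))}

namespace ShuffleProof

variable {α β γ : Type*} [LinearOrder α] [LinearOrder β] [LinearOrder γ]

lemma exists_isGLB (h : IsCompleteLO β) {s : Set β} (hne : s.Nonempty) (hbd : BddBelow s) :
    ∃ a, IsGLB s a := by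
  obtain ⟨l, hl⟩ := hbd
  obtain ⟨x, hx⟩ := hne
  obtain ⟨a, ha⟩ := h (lowerBounds s) ⟨l, hl⟩ ⟨x, fun y hy => hy hx⟩
  refine ⟨a, fun z hz => ha.2 fun y hy => hy hz, fun v hv => ha.1 hv⟩

/-- Least upper bound of `X` relative to an ambient subset `S`. -/
def RelLUB (S X : Set β) (v : β) : Prop :=
  v ∈ S ∧ v ∈ upperBounds X ∧ ∀ w ∈ S, w ∈ upperBounds X → v ≤ w

lemma bridge1 {S : Set β}
    (h : ∀ X ⊆ S, X.Nonempty → (∃ u ∈ S, u ∈ upperBounds X) → ∃ v, RelLUB S X v) :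
    IsCompleteLO S := by
  intro s hs hbd
  obtain ⟨u, hu⟩ := hbd
  obtain ⟨v, hvS, hvub, hvle⟩ := h (Subtype.val '' s) (by rintro x ⟨y, _, rfl⟩; exact y.2)
    (hs.image _) ⟨u, u.2, by rintro x ⟨y, hy, rfl⟩; exact Subtype.coe_le_coe.2 (hu hy)⟩
  refine ⟨⟨v, hvS⟩, fun x hx => Subtype.coe_le_coe.1 (hvub ⟨x, hx, rfl⟩), fun w hw => ?_⟩
  exact Subtype.coe_le_coe.1 <| by
    exact hvle w w.2 (by rintro x ⟨y, hy, rfl⟩; exact Subtype.coe_le_coe.2 (hw hy))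

lemma bridge2 {S : Set β} (h : IsCompleteLO S) {X : Set β} (hXS : X ⊆ S) (hne : X.Nonempty)
    (hbd : ∃ u ∈ S, u ∈ upperBounds X) : ∃ v, RelLUB S X v := by
  obtain ⟨u, huS, huub⟩ := hbd
  obtain ⟨x, hx⟩ := hne
  obtain ⟨a, ha⟩ := h {y : S | (y : β) ∈ X} ⟨⟨x, hXS hx⟩, hx⟩
    ⟨⟨u, huS⟩, fun y hy => Subtype.coe_le_coe.1 (by exact Subtype.coe_le_coe.2 (huub hy))⟩
  refine ⟨a, a.2, fun z hz => ha.1 (show (⟨z, hXS hz⟩ : S) ∈ _ from hz), fun w hwS hw => ?_⟩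
  exact ha.2 (fun y hy => Subtype.coe_le_coe.2 (hw hy) : (⟨w, hwS⟩ : S) ∈ upperBounds _)

/-- The two-sidedness property of an element relative to an embedding. -/
def TwoSided (e : α ↪o β) (b : β) : Prop :=
  (IsLUB {x | ∃ a, e a = x ∧ x < b} b ∧ ∃ a, e a < b) ∧
  (IsGLB {x | ∃ a, e a = x ∧ b < x} b ∧ ∃ a, b < e a)

/-- Lemma A: in a minimal completion every element is in the range or a two-sided limit. -/
theorem completion_mem_or_twoSided {e : α ↪o β} (h : IsCompletion e) (b : β) :
    (∃ a, e a = b) ∨ TwoSided e b := by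
  obtain ⟨hc, hmin⟩ := h
  by_cases hb : ∃ a, e a = b
  · exact Or.inl hb
  right
  push_neg at hb
  -- there is a point of the range above b
  have habove : ∃ a, b < e a := by
    by_contra hna
    push_neg at hna
    have hS : ({y | y < b} : Set β) = Set.univ := by
      refine hmin _ (by rintro x ⟨a, rfl⟩; exact (hna a).lt_of_ne (hb a)) (bridge1 ?_)
      rintro X hXS ⟨x, hx⟩ ⟨u, huS, huub⟩
      obtain ⟨s, hs⟩ := hc X ⟨x, hx⟩ ⟨u, huub⟩
      exact ⟨s, lt_of_le_of_lt (hs.2 huub) huS, hs.1, fun w hwS hw => hs.2 hw⟩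
    exact absurd (show b ∈ _ from hS.symm ▸ Set.mem_univ b) (lt_irrefl b)
  have hbelow : ∃ a, e a < b := by
    by_contra hna
    push_neg at hna
    have hS : ({y | b < y} : Set β) = Set.univ := by
      refine hmin _ (by rintro x ⟨a, rfl⟩; exact lt_of_le_of_ne (hna a) (Ne.symm (hb a))) (bridge1 ?_)
      rintro X hXS ⟨x, hx⟩ ⟨u, huS, huub⟩
      obtain ⟨s, hs⟩ := hc X ⟨x, hx⟩ ⟨u, huub⟩
      exact ⟨s, lt_of_lt_of_le (hXS hx) (hs.1 hx), hs.1, fun w hwS hw => hs.2 hw⟩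
    exact absurd (show b ∈ _ from hS.symm ▸ Set.mem_univ b) (lt_irrefl b)
  constructor
  · refine ⟨⟨fun x ⟨a, hax, hxb⟩ => le_of_lt hxb, ?_⟩, hbelow⟩
    -- b is least upper bound
    intro v hv
    by_contra hvb
    push_neg at hvb   -- v < b
    -- v is an ub of {e a < b} with v < b; contradiction with minimality
    have hS : ({y | ¬(v < y ∧ y ≤ b)} : Set β) = Set.univ := by
      refine hmin _ ?_ (bridge1 ?_)
      · rintro x ⟨a, rfl⟩ ⟨h1, h2⟩
        exact absurd (hv ⟨a, rfl, h2.lt_of_ne (hb a)⟩) (not_le_of_gt h1)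
      · rintro X hXS ⟨x, hx⟩ ⟨u, huS, huub⟩
        obtain ⟨s, hs⟩ := hc X ⟨x, hx⟩ ⟨u, huub⟩
        refine ⟨s, ?_, hs.1, fun w hwS hw => hs.2 hw⟩
        rintro ⟨h1, h2⟩
        have hyv : ∀ y ∈ X, y ≤ v := fun y hy => by
          by_contra hyv
          push_neg at hyv
          exact (hXS hy) ⟨hyv, le_trans (hs.1 hy) h2⟩
        exact absurd (hs.2 hyv) (not_le_of_gt h1)
    have := hS ▸ Set.mem_univ b
    exact this ⟨hvb, le_refl b⟩
  · refine ⟨⟨fun x ⟨a, hax, hbx⟩ => le_of_lt hbx, ?_⟩, habove⟩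
    intro v hv
    by_contra hbv
    push_neg at hbv   -- b < v
    -- c* := glb of points of range above b
    obtain ⟨a0, ha0⟩ := habove
    obtain ⟨c, hcglb⟩ := exists_isGLB hc (s := {x | ∃ a, e a = x ∧ b < x})
      ⟨e a0, a0, rfl, ha0⟩ ⟨b, fun x ⟨a, hax, hbx⟩ => le_of_lt hbx⟩
    have hbc : b < v := hbv
    have hvc : v ≤ c := hcglb.2 hv
    have hS : ({y | ¬(b ≤ y ∧ y < c)} : Set β) = Set.univ := by
      refine hmin _ ?_ (bridge1 ?_)
      · rintro x ⟨a, rfl⟩ ⟨h1, h2⟩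
        exact absurd (hcglb.1 ⟨a, rfl, h1.lt_of_ne' (hb a)⟩) (not_le_of_gt h2)
      · rintro X hXS ⟨x, hx⟩ ⟨u, huS, huub⟩
        obtain ⟨s, hs⟩ := hc X ⟨x, hx⟩ ⟨u, huub⟩
        by_cases hsmem : b ≤ s ∧ s < c
        · -- every element of X is < b, so c is the relative LUB
          refine ⟨c, fun ⟨h1, h2⟩ => absurd h2 (lt_irrefl c), fun y hy => ?_, fun w hwS hw => ?_⟩
          · exact le_trans (hs.1 hy) (le_trans hsmem.2.le (le_refl c))
          · rcases le_or_gt c w with h | h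
            · exact h
            · exact absurd ⟨le_trans hsmem.1 (hs.2 hw), h⟩ hwS
        · exact ⟨s, hsmem, hs.1, fun w hwS hw => hs.2 hw⟩
    have := hS ▸ Set.mem_univ b
    exact this ⟨le_refl b, lt_of_lt_of_le hbv hvc⟩


lemma below_of_noMin {e : α ↪o β} (h : IsCompletion e) (hnm : ∀ c : β, ∃ c', c' < c) :
    ∀ c, ∃ x, e x < c := by
  intro c
  obtain ⟨c', hc'⟩ := hnm c
  rcases completion_mem_or_twoSided h c' with ⟨x, rfl⟩ | ⟨⟨_, x, hx⟩, _⟩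
  · exact ⟨x, hc'⟩
  · exact ⟨x, hx.trans hc'⟩

lemma above_of_noMax {e : α ↪o β} (h : IsCompletion e) (hnm : ∀ c : β, ∃ c', c < c') :
    ∀ c, ∃ x, c < e x := by
  intro c
  obtain ⟨c', hc'⟩ := hnm c
  rcases completion_mem_or_twoSided h c' with ⟨x, rfl⟩ | ⟨_, ⟨_, x, hx⟩⟩
  · exact ⟨x, hc'⟩
  · exact ⟨x, hc'.trans hx⟩

/-- Lemma A': converse — completeness plus two-sidedness gives a (minimal) completion. -/
theorem isCompletion_of_twoSided {e : α ↪o β} (hc : IsCompleteLO β)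
    (hts : ∀ b, (∃ a, e a = b) ∨ TwoSided e b) : IsCompletion e := by
  refine ⟨hc, fun S hrange hS => ?_⟩
  rw [Set.eq_univ_iff_forall]
  by_contra hb
  push_neg at hb
  obtain ⟨b, hbS⟩ := hb
  have hbr : ¬∃ a, e a = b := fun ⟨a, ha⟩ => hbS (hrange ⟨a, ha⟩)
  obtain ⟨⟨hlub, a1, ha1⟩, ⟨hglb, a2, ha2⟩⟩ := (hts b).resolve_left hbr
  obtain ⟨v, hvS, hvub, hvle⟩ := bridge2 hS
    (X := {x | ∃ a, e a = x ∧ x < b})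
    (by rintro x ⟨a, rfl, _⟩; exact hrange ⟨a, rfl⟩)
    ⟨e a1, a1, rfl, ha1⟩
    ⟨e a2, hrange ⟨a2, rfl⟩, fun x ⟨a, hax, hxb⟩ => hax ▸ le_of_lt ((hax.symm ▸ hxb).trans ha2)⟩
  have hbv : b ≤ v := hlub.2 hvub
  have hbv' : b < v := hbv.lt_of_ne fun h => hbS (h ▸ hvS)
  have hnlb : ¬v ∈ lowerBounds {x | ∃ a, e a = x ∧ b < x} :=
    fun h => absurd (hglb.2 h) (not_le_of_gt hbv')
  obtain ⟨x, hxmem, hxv⟩ : ∃ x ∈ {x | ∃ a, e a = x ∧ b < x}, x < v := by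
    by_contra h
    push_neg at h
    exact hnlb fun x hx => h x hx
  obtain ⟨a3, rfl, hba3⟩ := hxmem
  have : v ≤ e a3 := hvle (e a3) (hrange ⟨a3, rfl⟩)
    (fun y ⟨a, hay, hyb⟩ => hay ▸ le_of_lt ((hay.symm ▸ hyb).trans hba3))
  exact absurd (this.trans_lt hxv) (lt_irrefl v)


section Unique

variable {e : α ↪o β} {j : α ↪o γ}

/-- The cut-matching relation between two completions. -/
def MatchRel (e : α ↪o β) (j : α ↪o γ) (b : β) (c : γ) : Prop :=
  ∀ a, (e a ≤ b ↔ j a ≤ c) ∧ (b ≤ e a ↔ c ≤ j a)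

lemma matchRel_symm {b c} (h : MatchRel e j b c) : MatchRel j e c b :=
  fun a => ⟨(h a).1.symm, (h a).2.symm⟩

lemma matchRel_exists (he : IsCompletion e) (hj : IsCompletion j) (b : β) :
    ∃ c, MatchRel e j b c := by
  by_cases hb : ∃ a, e a = b
  · obtain ⟨a0, rfl⟩ := hb
    exact ⟨j a0, fun a => by simp [e.le_iff_le, j.le_iff_le]⟩
  obtain ⟨⟨hlub, a1, ha1⟩, ⟨hglb, a2, ha2⟩⟩ := (completion_mem_or_twoSided he b).resolve_left hb
  set Jb := {x | ∃ a, j a = x ∧ e a < b} with hJb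
  have hub2 : ∀ a', b < e a' → j a' ∈ upperBounds Jb := by
    rintro a' hba' x ⟨a, rfl, hab⟩
    exact (j.le_iff_le.2 (e.le_iff_le.1 (hab.trans hba').le))
  obtain ⟨c, hclub⟩ := hj.1 Jb ⟨j a1, a1, rfl, ha1⟩ ⟨j a2, hub2 a2 ha2⟩
  have claim1 : ∀ a, e a < b → j a ≤ c := fun a ha => hclub.1 ⟨a, rfl, ha⟩
  have claim2 : ∀ a, b < e a → c ≤ j a := fun a ha => hclub.2 (hub2 a ha)
  have claim3 : ∀ a, b < e a → c < j a := by
    intro a ha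
    refine (claim2 a ha).lt_of_ne fun hcja => ?_
    have : ¬ e a ∈ lowerBounds {x | ∃ a', e a' = x ∧ b < x} := by
      intro hlb
      exact absurd (hglb.2 hlb) (not_le_of_gt ha)
    obtain ⟨x, hxmem, hxa⟩ : ∃ x ∈ {x | ∃ a', e a' = x ∧ b < x}, x < e a := by
      by_contra hcon
      push_neg at hcon
      exact this fun x hx => hcon x hx
    obtain ⟨a'', rfl, hba''⟩ := hxmem
    have h1 : c ≤ j a'' := hclub.2 (hub2 a'' hba'')
    have h2 : j a'' < j a := j.lt_iff_lt.2 (e.lt_iff_lt.1 hxa)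
    exact absurd (h1.trans_lt h2) (hcja ▸ lt_irrefl c)
  have claim4 : ∀ a, e a < b → j a < c := by
    intro a ha
    refine (claim1 a ha).lt_of_ne fun hjac => ?_
    have : ¬ e a ∈ upperBounds {x | ∃ a', e a' = x ∧ x < b} := by
      intro hubb
      exact absurd (hlub.2 hubb) (not_le_of_gt ha)
    obtain ⟨x, hxmem, hxa⟩ : ∃ x ∈ {x | ∃ a', e a' = x ∧ x < b}, e a < x := by
      by_contra hcon
      push_neg at hcon
      exact this fun x hx => hcon x hx
    obtain ⟨a'', rfl, hba''⟩ := hxmem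
    have h1 : j a'' ≤ c := claim1 a'' hba''
    have h2 : j a < j a'' := j.lt_iff_lt.2 (e.lt_iff_lt.1 hxa)
    exact absurd (h2.trans_le h1) (hjac ▸ lt_irrefl (j a))
  refine ⟨c, fun a => ⟨⟨fun h1 => ?_, fun h1 => ?_⟩, ⟨fun h1 => ?_, fun h1 => ?_⟩⟩⟩
  · exact (claim4 a (h1.lt_of_ne fun h => hb ⟨a, h⟩)).le
  · by_contra h2
    push_neg at h2
    exact absurd h1 (not_le_of_gt (claim3 a h2))
  · exact claim2 a (h1.lt_of_ne fun h => hb ⟨a, h.symm⟩)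
  · by_contra h2
    push_neg at h2
    exact absurd h1 (not_le_of_gt (claim4 a h2))

lemma matchRel_uniq (hj : IsCompletion j) {b : β} {c c' : γ}
    (h : MatchRel e j b c) (h' : MatchRel e j b c') : c = c' := by
  have aux : ∀ c c' : γ, MatchRel e j b c → MatchRel e j b c' → c < c' → False := by
    intro c c' h h' hlt
    by_cases hex : ∃ a, c ≤ j a ∧ j a ≤ c'
    · obtain ⟨a, h1, h2⟩ := hex
      have hbe : b ≤ e a := (h a).2.2 h1
      have h3 : c' ≤ j a := (h' a).2.1 hbe
      have heb : e a ≤ b := (h' a).1.2 h2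
      have h4 : j a ≤ c := (h a).1.1 heb
      exact absurd ((h3.trans h4).trans_lt hlt) (lt_irrefl c')
    push_neg at hex
    rcases completion_mem_or_twoSided hj c with ⟨a, rfl⟩ | ⟨_, ⟨hglb, a2, ha2⟩⟩
    · exact absurd (hex a le_rfl) (not_lt_of_ge hlt.le)
    · have : c' ∈ lowerBounds {x | ∃ a, j a = x ∧ c < x} := by
        rintro x ⟨a, rfl, hca⟩
        exact (hex a hca.le).le
      exact absurd (hglb.2 this) (not_le_of_gt hlt)
  rcases lt_trichotomy c c' with hlt | heq | hgt
  · exact (aux c c' h h' hlt).elim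
  · exact heq
  · exact (aux c' c h' h hgt).elim

lemma matchRel_mono (he : IsCompletion e) (hj : IsCompletion j) {b b' : β} {c c' : γ}
    (h : MatchRel e j b c) (h' : MatchRel e j b' c') (hbb : b ≤ b') : c ≤ c' := by
  by_cases hex : ∃ a, b ≤ e a ∧ e a ≤ b'
  · obtain ⟨a, h1, h2⟩ := hex
    exact ((h a).2.1 h1).trans ((h' a).1.1 h2)
  push_neg at hex
  rcases completion_mem_or_twoSided he b with ⟨a, rfl⟩ | ⟨_, ⟨hglb, a2, ha2⟩⟩
  · exact absurd (hex a le_rfl) (not_lt_of_ge hbb)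
  · have hlb : b' ∈ lowerBounds {x | ∃ a, e a = x ∧ b < x} := by
      rintro x ⟨a, rfl, hba⟩
      exact (hex a hba.le).le
    have : b' ≤ b := hglb.2 hlb
    have hbb' : b = b' := le_antisymm hbb this
    exact (matchRel_uniq hj h (hbb' ▸ h')).le

/-- Uniqueness of completions. -/
theorem completion_unique (he : IsCompletion e) (hj : IsCompletion j) :
    Nonempty (β ≃o γ) := by
  have hex := matchRel_exists he hj
  have hex' := matchRel_exists hj he
  set φ : β → γ := fun b => (hex b).choose with hφ
  have hφR : ∀ b, MatchRel e j b (φ b) := fun b => (hex b).choose_spec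
  have hsurj : Function.Surjective φ := by
    intro c
    have hb := (hex' c).choose_spec
    exact ⟨(hex' c).choose, matchRel_uniq hj (hφR _) (matchRel_symm hb)⟩
  have hmono : StrictMono φ := by
    intro b b' hlt
    refine ((matchRel_mono he hj (hφR b) (hφR b') hlt.le)).lt_of_ne fun heqc => ?_
    have : b = b' := matchRel_uniq he (matchRel_symm (hφR b)) (heqc ▸ matchRel_symm (hφR b'))
    exact absurd this hlt.ne
  exact ⟨StrictMono.orderIsoOfSurjective φ hmono hsurj⟩

end Unique


section Columns

lemma subsingleton_complete (δ : Type*) [LinearOrder δ] [Subsingleton δ] : IsCompleteLO δ := by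
  rintro s ⟨a, ha⟩ _
  exact ⟨a, fun x hx => (Subsingleton.elim x a).le, fun b hb => hb ha⟩

/-- Completeness for lexicographic sums. -/
lemma sumLex_complete {A B : Type*} [LinearOrder A] [LinearOrder B]
    (hA : IsCompleteLO A) (hB : IsCompleteLO B)
    (h3 : (∃ a : A, ∀ x, x ≤ a) ∨ (IsEmpty B ∨ ∃ b : B, ∀ y, b ≤ y)) :
    IsCompleteLO (A ⊕ₗ B) := by
  rintro X hne ⟨u, hu⟩
  by_cases hXr : ∃ b : B, toLex (Sum.inr b) ∈ X
  · obtain ⟨b1, hb1⟩ := hXr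
    -- u must be an inr
    rcases h : ofLex u with a | bu
    · exfalso
      have : toLex (Sum.inr b1) ≤ toLex (Sum.inl a) := by
        have := hu hb1
        rwa [show u = toLex (Sum.inl a) from by rw [← h]; rfl] at this
      exact Sum.Lex.not_inr_le_inl this
    have hYbd : BddAbove {b : B | toLex (Sum.inr b) ∈ X} := by
      refine ⟨bu, fun b hb => ?_⟩
      have := hu hb
      rw [show u = toLex (Sum.inr bu) from by rw [← h]; rfl] at this
      exact Sum.Lex.inr_le_inr_iff.1 this
    obtain ⟨t, ht⟩ := hB _ ⟨b1, hb1⟩ hYbd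
    refine ⟨toLex (Sum.inr t), fun x hx => ?_, fun w hw => ?_⟩
    · rcases hxo : ofLex x with a | b
      · rw [show x = toLex (Sum.inl a) from by rw [← hxo]; rfl]
        exact Sum.Lex.inl_le_inr a t
      · rw [show x = toLex (Sum.inr b) from by rw [← hxo]; rfl]
        rw [show x = toLex (Sum.inr b) from by rw [← hxo]; rfl] at hx
        exact Sum.Lex.inr_le_inr_iff.2 (ht.1 hx)
    · rcases hwo : ofLex w with a | b
      · exfalso
        have := hw hb1
        rw [show w = toLex (Sum.inl a) from by rw [← hwo]; rfl] at this
        exact Sum.Lex.not_inr_le_inl this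
      · rw [show w = toLex (Sum.inr b) from by rw [← hwo]; rfl]
        refine Sum.Lex.inr_le_inr_iff.2 (ht.2 fun y hy => ?_)
        have := hw hy
        rw [show w = toLex (Sum.inr b) from by rw [← hwo]; rfl] at this
        exact Sum.Lex.inr_le_inr_iff.1 this
  · -- X consists of inl's only
    push_neg at hXr
    have hXl : ∀ x ∈ X, ∃ a : A, x = toLex (Sum.inl a) := by
      intro x hx
      rcases hxo : ofLex x with a | b
      · exact ⟨a, by rw [← hxo]; rfl⟩
      · exact absurd (by rwa [show x = toLex (Sum.inr b) from by rw [← hxo]; rfl] at hx) (hXr b)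
    set Y := {a : A | toLex (Sum.inl a) ∈ X} with hY
    obtain ⟨x0, hx0⟩ := hne
    obtain ⟨a0, rfl⟩ := hXl x0 hx0
    by_cases hYbd : BddAbove Y
    · obtain ⟨s, hs⟩ := hA Y ⟨a0, hx0⟩ hYbd
      refine ⟨toLex (Sum.inl s), fun x hx => ?_, fun w hw => ?_⟩
      · obtain ⟨a, rfl⟩ := hXl x hx
        exact Sum.Lex.inl_le_inl_iff.2 (hs.1 hx)
      · rcases hwo : ofLex w with a | b
        · rw [show w = toLex (Sum.inl a) from by rw [← hwo]; rfl]
          refine Sum.Lex.inl_le_inl_iff.2 (hs.2 fun y hy => ?_)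
          have := hw hy
          rw [show w = toLex (Sum.inl a) from by rw [← hwo]; rfl] at this
          exact Sum.Lex.inl_le_inl_iff.1 this
        · rw [show w = toLex (Sum.inr b) from by rw [← hwo]; rfl]
          exact Sum.Lex.inl_le_inr s b
    · -- Y unbounded in A; bound u must be inr, B nonempty with min
      have hane : ¬(∃ a : A, ∀ x, x ≤ a) := by
        rintro ⟨a, ha⟩
        exact hYbd ⟨a, fun y _ => ha y⟩
      have hBne : Nonempty B := by
        rcases huo : ofLex u with a | b
        · exfalso
          refine hYbd ⟨a, fun y hy => ?_⟩
          have := hu hy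
          rw [show u = toLex (Sum.inl a) from by rw [← huo]; rfl] at this
          exact Sum.Lex.inl_le_inl_iff.1 this
        · exact ⟨b⟩
      rcases h3 with h | h | ⟨b0, hb0⟩
      · exact absurd h hane
      · exact absurd hBne (not_nonempty_iff.2 h)
      refine ⟨toLex (Sum.inr b0), fun x hx => ?_, fun w hw => ?_⟩
      · obtain ⟨a, rfl⟩ := hXl x hx
        exact Sum.Lex.inl_le_inr a b0
      · rcases hwo : ofLex w with a | b
        · exfalso
          refine hYbd ⟨a, fun y hy => ?_⟩
          have := hw hy
          rw [show w = toLex (Sum.inl a) from by rw [← hwo]; rfl] at this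
          exact Sum.Lex.inl_le_inl_iff.1 this
        · rw [show w = toLex (Sum.inr b) from by rw [← hwo]; rfl]
          exact Sum.Lex.inr_le_inr_iff.2 (hb0 b)

end Columns


lemma ofLex_eq' {σ : Type*} {x : Lex σ} {s : σ} (h : ofLex x = s) : x = toLex s := by
  rw [← h]; rfl

universe uu vv

lemma punit_top : ∀ x : PUnit.{uu+1}, x ≤ PUnit.unit := fun x => (Subsingleton.elim x PUnit.unit).le

lemma punit_max : ∃ a : PUnit.{uu+1}, ∀ x, x ≤ a := ⟨PUnit.unit, punit_top⟩

section ColumnConcrete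

variable (𝒞 : Type) [LinearOrder 𝒞]

open Classical in
/-- The canonical map from `𝒞` into `dotSum (dotSum PUnit.{uu+1} 𝒞) PUnit.{vv+1}`. -/
noncomputable def kfun (c : 𝒞) : dotSum (dotSum PUnit.{uu+1} 𝒞) PUnit.{vv+1} :=
  toLex (Sum.inl (toLex (if h : ∀ z, c ≤ z then Sum.inl PUnit.unit
    else Sum.inr ⟨c, fun hh => h hh.2⟩)))

open Classical in
lemma kfun_strictMono : StrictMono (kfun 𝒞) := by
  intro c c' hlt
  unfold kfun
  split_ifs with h h' h'
  · exact absurd (h' c) (not_le_of_gt hlt)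
  · exact Sum.Lex.inl_lt_inl_iff.2 (Sum.Lex.inl_lt_inr _ _)
  · exact absurd (h' c) (not_le_of_gt hlt)
  · exact Sum.Lex.inl_lt_inl_iff.2 (Sum.Lex.inr_lt_inr_iff.2 (Subtype.mk_lt_mk.2 hlt))

/-- The inner subtype of the dotted sum is complete when `𝒞` is. -/
lemma qsub_complete (h : IsCompleteLO 𝒞) :
    IsCompleteLO {y : 𝒞 // ¬((∃ a : PUnit.{uu+1}, ∀ x, x ≤ a) ∧ (∀ z, y ≤ z))} := by
  rintro X ⟨x0, hx0⟩ ⟨u, hu⟩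
  obtain ⟨c, hc⟩ := h (Subtype.val '' X) ⟨x0, x0, hx0, rfl⟩
    ⟨u, by rintro y ⟨z, hz, rfl⟩; exact Subtype.coe_le_coe.2 (hu hz)⟩
  have hcc : ¬((∃ a : PUnit.{uu+1}, ∀ x, x ≤ a) ∧ (∀ z, c ≤ z)) := by
    rintro ⟨-, hmin⟩
    refine x0.2 ⟨punit_max, fun z => ?_⟩
    have h1 : (x0 : 𝒞) ≤ c := hc.1 ⟨x0, hx0, rfl⟩
    have h2 : c ≤ (x0 : 𝒞) := hmin _
    exact le_of_eq (le_antisymm h1 h2) |>.trans (le_antisymm h2 h1 ▸ hmin z)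
  refine ⟨⟨c, hcc⟩, fun y hy => Subtype.coe_le_coe.1 (hc.1 ⟨y, hy, rfl⟩), fun w hw => ?_⟩
  exact Subtype.coe_le_coe.1 (hc.2 (by rintro y ⟨z, hz, rfl⟩; exact Subtype.coe_le_coe.2 (hw hz)))

open Classical in
lemma kfun_goodCol [Nonempty 𝒞] (h : IsCompleteLO 𝒞) :
    IsCompleteLO (dotSum (dotSum PUnit.{uu+1} 𝒞) PUnit.{vv+1}) ∧
    (∃ b : dotSum (dotSum PUnit.{uu+1} 𝒞) PUnit.{vv+1}, ∀ t, b ≤ t) ∧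
    (∃ b : dotSum (dotSum PUnit.{uu+1} 𝒞) PUnit.{vv+1}, ∀ t, t ≤ b) ∧
    ∀ t : dotSum (dotSum PUnit.{uu+1} 𝒞) PUnit.{vv+1},
      (∃ c, kfun 𝒞 c = t) ∨
      ((∀ t', t ≤ t') ∧ (∀ c, t < kfun 𝒞 c) ∧ ∀ c : 𝒞, ∃ c', c' < c) ∨
      ((∀ t', t' ≤ t) ∧ (∀ c, kfun 𝒞 c < t) ∧ ∀ c : 𝒞, ∃ c', c < c') := by
  have hWc : IsCompleteLO (dotSum PUnit.{uu+1} 𝒞) :=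
    sumLex_complete (subsingleton_complete PUnit.{uu+1}) (qsub_complete 𝒞 h) (Or.inl punit_max)
  have hPsub : Subsingleton {u : PUnit.{vv+1} //
      ¬((∃ a : dotSum PUnit.{uu+1} 𝒞, ∀ x, x ≤ a) ∧ (∀ z, u ≤ z))} :=
    ⟨fun a b => Subtype.ext (Subsingleton.elim _ _)⟩
  have hDc : IsCompleteLO (dotSum (dotSum PUnit.{uu+1} 𝒞) PUnit.{vv+1}) := by
    refine sumLex_complete hWc (@subsingleton_complete _ _ hPsub) (Or.inr ?_)
    rcases isEmpty_or_nonempty {u : PUnit.{vv+1} //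
        ¬((∃ a : dotSum PUnit.{uu+1} 𝒞, ∀ x, x ≤ a) ∧ (∀ z, u ≤ z))} with hE | ⟨⟨p⟩⟩
    · exact Or.inl hE
    · exact Or.inr ⟨p, fun y => (@Subsingleton.elim _ hPsub y p).le⟩
  -- minimum of W
  have hWmin : ∀ w : dotSum PUnit.{uu+1} 𝒞, toLex (Sum.inl PUnit.unit) ≤ w := by
    intro w
    rcases hw : ofLex w with u | y
    · rw [ofLex_eq' hw]
    · rw [ofLex_eq' hw]
      exact Sum.Lex.inl_le_inr _ _
  have hDmin : ∀ t : dotSum (dotSum PUnit.{uu+1} 𝒞) PUnit.{vv+1},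
      toLex (Sum.inl (toLex (Sum.inl PUnit.unit))) ≤ t := by
    intro t
    rcases ht : ofLex t with w | p
    · rw [ofLex_eq' ht]; exact Sum.Lex.inl_le_inl_iff.2 (hWmin w)
    · rw [ofLex_eq' ht]; exact Sum.Lex.inl_le_inr _ _
  refine ⟨hDc, ⟨_, hDmin⟩, ?_, ?_⟩
  · -- maximum
    by_cases hW : ∃ w : dotSum PUnit.{uu+1} 𝒞, ∀ x, x ≤ w
    · obtain ⟨w, hw⟩ := hW
      refine ⟨toLex (Sum.inl w), fun t => ?_⟩
      rcases ht : ofLex t with w' | p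
      · rw [ofLex_eq' ht]; exact Sum.Lex.inl_le_inl_iff.2 (hw w')
      · exact absurd ⟨⟨w, hw⟩, fun z => (Subsingleton.elim (p : PUnit.{vv+1}) z).le⟩ p.2
    · refine ⟨toLex (Sum.inr ⟨PUnit.unit, fun hh => hW hh.1⟩), fun t => ?_⟩
      rcases ht : ofLex t with w' | p
      · rw [ofLex_eq' ht]; exact Sum.Lex.inl_le_inr _ _
      · rw [ofLex_eq' ht]
  -- trichotomy
  intro t
  rcases ht : ofLex t with w | p
  · rcases hwo : ofLex w with u | y
    · by_cases hmn : ∃ c : 𝒞, ∀ z, c ≤ z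
      · obtain ⟨c0, hc0⟩ := hmn
        refine Or.inl ⟨c0, ?_⟩
        rw [ofLex_eq' ht, ofLex_eq' hwo, Subsingleton.elim u PUnit.unit]
        unfold kfun
        rw [dif_pos hc0]
      · push_neg at hmn
        refine Or.inr (Or.inl ⟨?_, ?_, fun c => ?_⟩)
        · rw [ofLex_eq' ht, ofLex_eq' hwo, Subsingleton.elim u PUnit.unit]
          exact hDmin
        · intro c
          rw [ofLex_eq' ht, ofLex_eq' hwo, Subsingleton.elim u PUnit.unit]
          unfold kfun
          rw [dif_neg (by push_neg; exact hmn c)]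
          exact Sum.Lex.inl_lt_inl_iff.2 (Sum.Lex.inl_lt_inr _ _)
        · obtain ⟨z, hz⟩ := hmn c
          exact ⟨z, hz⟩
    · -- middle : in range
      have hy : ¬ ∀ z, (y : 𝒞) ≤ z := fun hmin => y.2 ⟨punit_max, hmin⟩
      refine Or.inl ⟨(y : 𝒞), ?_⟩
      rw [ofLex_eq' ht, ofLex_eq' hwo]
      unfold kfun
      rw [dif_neg hy]
  · -- top part
    refine Or.inr (Or.inr ⟨?_, ?_, fun c => ?_⟩)
    · intro t'
      rw [ofLex_eq' ht]
      rcases ht' : ofLex t' with w' | p'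
      · rw [ofLex_eq' ht']; exact Sum.Lex.inl_le_inr _ _
      · rw [ofLex_eq' ht']
        exact Sum.Lex.inr_le_inr_iff.2 ((@Subsingleton.elim _ hPsub p' p).le)
    · intro c
      rw [ofLex_eq' ht]
      exact Sum.Lex.inl_lt_inr _ _
    · by_contra hcon
      push_neg at hcon
      -- then W has a maximum, contradicting p.2
      have hmaxW : ∀ x : dotSum PUnit.{uu+1} 𝒞, x ≤ toLex (if h : ∀ z, c ≤ z then Sum.inl PUnit.unit
          else Sum.inr ⟨c, fun hh => h hh.2⟩) := by
        intro x
        rcases hx : ofLex x with u' | y'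
        · rw [ofLex_eq' hx]
          split_ifs with hC
          · exact Sum.Lex.inl_le_inl_iff.2 (punit_top u')
          · exact Sum.Lex.inl_le_inr _ _
        · rw [ofLex_eq' hx]
          have hy'c : (y' : 𝒞) ≤ c := hcon (y' : 𝒞)
          split_ifs with hC
          · exfalso
            exact y'.2 ⟨punit_max, fun z => le_trans hy'c (le_trans (hC _) (le_refl _)) |>.trans
              ((le_antisymm (hC _) (le_trans hy'c (hC _))).symm ▸ hC z)⟩
          · exact Sum.Lex.inr_le_inr_iff.2 (Subtype.mk_le_mk.2 hy'c)
      exact p.2 ⟨⟨_, hmaxW⟩, fun z => (Subsingleton.elim (p : PUnit.{vv+1}) z).le⟩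

end ColumnConcrete


section Transfer

/-- All the facts we need about a column. -/
def GoodCol {C T : Type*} [LinearOrder C] [LinearOrder T] (m : C → T) : Prop :=
  IsCompleteLO T ∧ (∃ b : T, ∀ t, b ≤ t) ∧ (∃ b : T, ∀ t, t ≤ b) ∧
  ∀ t : T, (∃ c, m c = t) ∨
    ((∀ t', t ≤ t') ∧ (∀ c, t < m c) ∧ ∀ c : C, ∃ c', c' < c) ∨
    ((∀ t', t' ≤ t) ∧ (∀ c, m c < t) ∧ ∀ c : C, ∃ c', c < c')

lemma goodCol_kfun (𝒞 : Type) [LinearOrder 𝒞] [Nonempty 𝒞] (h : IsCompleteLO 𝒞) :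
    GoodCol (kfun 𝒞) := kfun_goodCol 𝒞 h

lemma complete_of_orderIso {T T' : Type*} [LinearOrder T] [LinearOrder T'] (g : T ≃o T')
    (h : IsCompleteLO T) : IsCompleteLO T' := by
  intro s hne hbd
  obtain ⟨x, hx⟩ := hne
  obtain ⟨u, hu⟩ := hbd
  obtain ⟨a, ha⟩ := h (g ⁻¹' s) ⟨g.symm x, by simpa using hx⟩
    ⟨g.symm u, fun y hy => g.le_symm_apply.2 (hu hy)⟩
  refine ⟨g a, fun x' hx' => ?_, fun b hb => ?_⟩
  · have : g.symm x' ∈ g ⁻¹' s := by simpa using hx'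
    have := ha.1 this
    calc x' = g (g.symm x') := (g.apply_symm_apply x').symm
    _ ≤ g a := g.monotone this
  · have : a ≤ g.symm b := ha.2 fun y hy => g.le_symm_apply.2 (hb hy)
    exact g.le_symm_apply.1 this

lemma goodCol_transfer {C T T' : Type*} [LinearOrder C] [LinearOrder T] [LinearOrder T']
    {m : C → T} (g : T ≃o T') (h : GoodCol m) : GoodCol (fun c => g (m c)) := by
  obtain ⟨h1, ⟨b0, hb0⟩, ⟨b1, hb1⟩, h4⟩ := h
  refine ⟨complete_of_orderIso g h1, ⟨g b0, fun t => ?_⟩, ⟨g b1, fun t => ?_⟩, fun t => ?_⟩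
  · calc g b0 ≤ g (g.symm t) := g.monotone (hb0 _)
    _ = t := g.apply_symm_apply t
  · calc t = g (g.symm t) := (g.apply_symm_apply t).symm
    _ ≤ g b1 := g.monotone (hb1 _)
  · rcases h4 (g.symm t) with ⟨c, hc⟩ | ⟨ha, hb, hc⟩ | ⟨ha, hb, hc⟩
    · exact Or.inl ⟨c, by simp only [hc, g.apply_symm_apply]⟩
    · refine Or.inr (Or.inl ⟨fun t' => ?_, fun c => ?_, hc⟩)
      · have := g.monotone (ha (g.symm t'))
        rwa [g.apply_symm_apply, g.apply_symm_apply] at this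
      · have := g.strictMono (hb c)
        rwa [g.apply_symm_apply] at this
    · refine Or.inr (Or.inr ⟨fun t' => ?_, fun c => ?_, hc⟩)
      · have := g.monotone (ha (g.symm t'))
        rwa [g.apply_symm_apply, g.apply_symm_apply] at this
      · have := g.strictMono (hb c)
        rwa [g.apply_symm_apply] at this

lemma punit_col {T : Type*} [LinearOrder T] (g : T ≃o PUnit.{uu+1}) :
    IsCompleteLO T ∧ (∃ b : T, ∀ t, b ≤ t) ∧ (∃ b : T, ∀ t, t ≤ b) ∧ Subsingleton T := by
  have : Subsingleton T := g.toEquiv.subsingleton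
  exact ⟨subsingleton_complete T, ⟨g.symm PUnit.unit, fun t => (Subsingleton.elim _ t).le⟩,
    ⟨g.symm PUnit.unit, fun t => (Subsingleton.elim t _).le⟩, this⟩

end Transfer


section SigmaLex

variable {ι : Type*} [LinearOrder ι] {κ : ι → Type*} [∀ i, LinearOrder (κ i)]

lemma sLex_le_fst {a b : Σₗ i, κ i} (h : a ≤ b) : a.1 ≤ b.1 := by
  rcases Sigma.Lex.le_def.1 h with h' | ⟨h', -⟩
  · exact h'.le
  · exact h'.le

lemma sLex_le_of_fst_lt {a b : Σₗ i, κ i} (h : a.1 < b.1) : a ≤ b :=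
  Sigma.Lex.le_def.2 (Or.inl h)

lemma sLex_lt_of_fst_lt {a b : Σₗ i, κ i} (h : a.1 < b.1) : a < b :=
  Sigma.Lex.lt_def.2 (Or.inl h)

lemma sLex_mk_le_mk {i : ι} {x y : κ i} :
    (toLex ⟨i, x⟩ : Σₗ i, κ i) ≤ toLex ⟨i, y⟩ ↔ x ≤ y := by
  constructor
  · intro h
    rcases Sigma.Lex.le_def.1 h with h' | ⟨h', h2⟩
    · exact absurd h' (lt_irrefl i)
    · exact h2
  · intro h
    exact Sigma.Lex.le_def.2 (Or.inr ⟨rfl, h⟩)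

lemma sLex_mk_lt_mk {i : ι} {x y : κ i} :
    (toLex ⟨i, x⟩ : Σₗ i, κ i) < toLex ⟨i, y⟩ ↔ x < y := by
  constructor
  · intro h
    rcases Sigma.Lex.lt_def.1 h with h' | ⟨h', h2⟩
    · exact absurd h' (lt_irrefl i)
    · exact h2
  · intro h
    exact Sigma.Lex.lt_def.2 (Or.inr ⟨rfl, h⟩)

lemma sLex_lt_cases {a b : Σₗ i, κ i} (h : a < b) :
    a.1 < b.1 ∨ ∃ (x : κ a.1) (y : κ a.1), a = toLex ⟨a.1, x⟩ ∧ b = toLex ⟨a.1, y⟩ ∧ x < y := by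
  rcases Sigma.Lex.lt_def.1 h with h' | ⟨h', h2⟩
  · exact Or.inl h'
  · obtain ⟨i, x⟩ := a
    obtain ⟨j, y⟩ := b
    dsimp at h'
    subst h'
    exact Or.inr ⟨x, y, rfl, rfl, h2⟩

/-- Completeness of a lexicographic sigma sum over a conditionally complete index,
when the index of any nonempty bounded projection has a sup attained appropriately. -/
lemma sigmaLex_complete {κ' : ℝ → Type*} [∀ r, LinearOrder (κ' r)]
    (hcol : ∀ r, IsCompleteLO (κ' r) ∧ (∃ b : κ' r, ∀ t, b ≤ t) ∧ (∃ b : κ' r, ∀ t, t ≤ b)) :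
    IsCompleteLO (Σₗ r : ℝ, κ' r) := by
  rintro X ⟨x0, hx0⟩ ⟨u, hu⟩
  set P : Set ℝ := {r | ∃ t : κ' r, toLex ⟨r, t⟩ ∈ X} with hP
  have hPne : P.Nonempty := by
    obtain ⟨r, t⟩ := x0
    exact ⟨r, t, hx0⟩
  have hPbd : BddAbove P := by
    refine ⟨(ofLex u).1, ?_⟩
    rintro r ⟨t, ht⟩
    exact sLex_le_fst (hu ht)
  set r0 : ℝ := sSup P with hr0
  have hr0lub : IsLUB P r0 := isLUB_csSup hPne hPbd
  by_cases hmem : r0 ∈ P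
  · obtain ⟨tb, htb⟩ := (hcol r0).2.2
    obtain ⟨t1, ht1⟩ := hmem
    obtain ⟨t0, ht0⟩ := (hcol r0).1 {t : κ' r0 | toLex (⟨r0, t⟩ : Σ r, κ' r) ∈ X} ⟨t1, ht1⟩ ⟨tb, fun y _ => htb y⟩
    refine ⟨toLex ⟨r0, t0⟩, ?_, ?_⟩
    · rintro x hxX
      obtain ⟨r, t⟩ := x
      rcases lt_or_eq_of_le (hr0lub.1 ⟨t, hxX⟩ : r ≤ r0) with h | h
      · exact sLex_le_of_fst_lt h
      · subst h
        exact sLex_mk_le_mk.2 (ht0.1 hxX)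
    · rintro w hw
      obtain ⟨rw, tw⟩ := w
      have hrw : r0 ≤ rw := hr0lub.2 (by rintro r ⟨t, ht⟩; exact sLex_le_fst (hw ht))
      rcases lt_or_eq_of_le hrw with h | h
      · exact sLex_le_of_fst_lt h
      · subst h
        refine sLex_mk_le_mk.2 (ht0.2 fun t ht => sLex_mk_le_mk.1 (hw ht))
  · obtain ⟨tb, htb⟩ := (hcol r0).2.1
    refine ⟨toLex ⟨r0, tb⟩, ?_, ?_⟩
    · rintro x hxX
      obtain ⟨r, t⟩ := x
      have : r ≤ r0 := hr0lub.1 ⟨t, hxX⟩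
      rcases lt_or_eq_of_le this with h | h
      · exact sLex_le_of_fst_lt h
      · exact absurd (h ▸ ⟨t, hxX⟩ : r0 ∈ P) hmem
    · rintro w hw
      obtain ⟨rw, tw⟩ := w
      have hrw : r0 ≤ rw := hr0lub.2 (by rintro r ⟨t, ht⟩; exact sLex_le_fst (hw ht))
      rcases lt_or_eq_of_le hrw with h | h
      · exact sLex_le_of_fst_lt h
      · subst h
        exact sLex_mk_le_mk.2 (htb tw)

end SigmaLex

end ShuffleProof

open ShuffleProof

/-- the completion of the shuffle `Ξ(L₁,…,Lₙ)` of nonempty linear orders is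
`Σ_{r ∈ ℝ} T_r`, where `T_r = 𝟏 ∔ 𝒞(L_j) ∔ 𝟏` when `r ∈ D_j` and `T_r = 𝟏` when `r` is
irrational. -/
theorem completion_of_shuffle {n : ℕ} (hn : 1 ≤ n) (L : Fin n → Type)
    [∀ i, LinearOrder (L i)] [∀ i, Nonempty (L i)]
    (f : ℚ → Fin n) (hf : ∀ i : Fin n, DenseQ (f ⁻¹' {i}))
    (C : Fin n → Type) [∀ i, LinearOrder (C i)]
    (e : ∀ i, L i ↪o C i) (he : ∀ i, IsCompletion (e i))
    (D : Type) [LinearOrder D] (eD : (Σₗ q : ℚ, L (f q)) ↪o D) (heD : IsCompletion eD)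
    (T : ℝ → Type) [∀ r, LinearOrder (T r)]
    (hTq : ∀ q : ℚ, Nonempty (T q ≃o dotSum (dotSum PUnit (C (f q))) PUnit))
    (hTirr : ∀ r : ℝ, Irrational r → Nonempty (T r ≃o PUnit)) :
    Nonempty (D ≃o Σₗ r : ℝ, T r) := by
  classical
  haveI hCne : ∀ i, Nonempty (C i) := fun i => ⟨e i (Classical.arbitrary (L i))⟩
  set g := fun q : ℚ => (hTq q).some with hg
  set m : ∀ q : ℚ, C (f q) → T q := fun q c => (g q).symm (kfun (C (f q)) c) with hmdef
  have hm : ∀ q, GoodCol (m q) := fun q =>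
    goodCol_transfer (g q).symm (goodCol_kfun (C (f q)) (he (f q)).1)
  have hmlt : ∀ q : ℚ, StrictMono (m q) := fun q a b hab =>
    (g q).symm.strictMono (kfun_strictMono (C (f q)) hab)
  set ι : (Σₗ q : ℚ, L (f q)) → (Σₗ r : ℝ, T r) :=
    fun p => toLex ⟨((ofLex p).1 : ℝ), m (ofLex p).1 (e (f (ofLex p).1) (ofLex p).2)⟩ with hι
  have hιmono : StrictMono ι := by
    rintro ⟨q, x⟩ ⟨q', x'⟩ h
    cases h with
    | left _ _ hq => exact sLex_lt_of_fst_lt (show (q:ℝ) < (q':ℝ) by exact_mod_cast hq)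
    | right _ _ hx => exact sLex_mk_lt_mk.2 ((hmlt _) ((e _).strictMono hx))
  set ιe : (Σₗ q : ℚ, L (f q)) ↪o (Σₗ r : ℝ, T r) := OrderEmbedding.ofStrictMono ι hιmono
    with hιe
  have hcol : ∀ r : ℝ,
      IsCompleteLO (T r) ∧ (∃ b : T r, ∀ t, b ≤ t) ∧ (∃ b : T r, ∀ t, t ≤ b) := by
    intro r
    by_cases hr : ∃ q : ℚ, (q : ℝ) = r
    · obtain ⟨q, rfl⟩ := hr
      exact ⟨(hm q).1, (hm q).2.1, (hm q).2.2.1⟩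
    · obtain ⟨h1, h2, h3, -⟩ := punit_col (hTirr r hr).some
      exact ⟨h1, h2, h3⟩
  have hBc : IsCompleteLO (Σₗ r : ℝ, T r) := sigmaLex_complete hcol
  have hsub : ∀ r : ℝ, ¬(∃ q : ℚ, (q : ℝ) = r) → ∀ a b : T r, a = b := by
    intro r hr a b
    have := (punit_col (hTirr r hr).some).2.2.2
    exact @Subsingleton.elim _ this a b
  have hts : ∀ b, (∃ a, ιe a = b) ∨ TwoSided ιe b := by
    intro b
    by_cases hbr : ∃ a, ιe a = b
    · exact Or.inl hbr
    right
    obtain ⟨r, t⟩ := b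
    have hbelow : ∃ a, ιe a < toLex ⟨r, t⟩ := by
      obtain ⟨q, hq⟩ := exists_rat_lt r
      exact ⟨toLex ⟨q, Classical.arbitrary _⟩, sLex_lt_of_fst_lt hq⟩
    have habove : ∃ a, toLex ⟨r, t⟩ < ιe a := by
      obtain ⟨q, hq⟩ := exists_rat_gt r
      exact ⟨toLex ⟨q, Classical.arbitrary _⟩, sLex_lt_of_fst_lt hq⟩
    refine ⟨⟨⟨fun x ⟨a, hax, hxb⟩ => le_of_lt hxb, ?_⟩, hbelow⟩,
      ⟨⟨fun x ⟨a, hax, hbx⟩ => le_of_lt hbx, ?_⟩, habove⟩⟩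
    · -- least upper bound property
      intro v hv
      by_contra hvb
      replace hvb := lt_of_not_ge hvb
      obtain ⟨rv, tv⟩ := v
      rcases lt_trichotomy rv r with hltr | heq | hgtr
      rotate_left 2
      · exact absurd (sLex_le_fst hvb.le) (not_le_of_gt hgtr)
      rotate_right 2
      · obtain ⟨q, hq1, hq2⟩ := exists_rat_btwn hltr
        exact absurd (hv ⟨toLex ⟨q, Classical.arbitrary _⟩, rfl, sLex_lt_of_fst_lt hq2⟩)
          (not_le_of_gt (sLex_lt_of_fst_lt hq1))
      · subst heq
        have hlt : tv < t := sLex_mk_lt_mk.1 hvb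
        by_cases hrrat : ∃ q : ℚ, (q : ℝ) = rv
        · obtain ⟨q0, rfl⟩ := hrrat
          -- find x with tv < m q0 (e _ x) and m q0 (e _ x) < t
          have key : ∃ x : L (f q0), tv < m q0 (e (f q0) x) ∧ m q0 (e (f q0) x) < t := by
            have hnotr : ∀ x : L (f q0), m q0 (e (f q0) x) ≠ t := by
              intro x hx
              exact hbr ⟨toLex ⟨q0, x⟩, show toLex (⟨((q0:ℚ):ℝ), m q0 (e (f q0) x)⟩ : Σ r : ℝ, T r) =
                toLex (⟨((q0:ℚ):ℝ), t⟩ : Σ r : ℝ, T r) from by rw [hx]⟩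
            rcases (hm q0).2.2.2 t with ⟨c, hc⟩ | ⟨hminT, -, -⟩ | ⟨-, habv, hnmaxC⟩
            · -- t = m c with c not in the range of e
              have hcr : ¬∃ x, e (f q0) x = c := by
                rintro ⟨x, rfl⟩
                exact hnotr x hc
              obtain ⟨⟨hlubC, x1, hx1⟩, ⟨hglbC, x2, hx2⟩⟩ :=
                (completion_mem_or_twoSided (he (f q0)) c).resolve_left hcr
              rcases (hm q0).2.2.2 tv with ⟨c', hc'⟩ | ⟨-, hbel, -⟩ | ⟨hmaxT, -, -⟩
              · have hcc' : c' < c := by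
                  have := hc' ▸ hc ▸ hlt
                  exact (hmlt q0).lt_iff_lt.1 this
                have : ¬ c' ∈ upperBounds {x | ∃ a, e (f q0) a = x ∧ x < c} := by
                  intro hub
                  exact absurd (hlubC.2 hub) (not_le_of_gt hcc')
                obtain ⟨y, ⟨x, rfl, hyc⟩, hy⟩ : ∃ y ∈ {x | ∃ a, e (f q0) a = x ∧ x < c}, c' < y := by
                  by_contra hcon
                  push_neg at hcon
                  exact this fun y hy => hcon y hy
                refine ⟨x, ?_, ?_⟩
                · rw [← hc']
                  exact (hmlt q0) hy
                · rw [← hc]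
                  exact (hmlt q0) hyc
              · exact ⟨x1, hbel _, by rw [← hc]; exact (hmlt q0) hx1⟩
              · exact absurd (hmaxT t) (not_le_of_gt hlt)
            · exact absurd (hminT tv) (not_le_of_gt hlt)
            · -- t is the top, not in range; C (f q0) has no max
              rcases (hm q0).2.2.2 tv with ⟨c', hc'⟩ | ⟨-, hbel, -⟩ | ⟨hmaxT, -, -⟩
              · obtain ⟨x, hx⟩ := above_of_noMax (he (f q0)) hnmaxC c'
                exact ⟨x, by rw [← hc']; exact (hmlt q0) hx, habv _⟩
              · exact ⟨Classical.arbitrary _, hbel _, habv _⟩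
              · exact absurd (hmaxT t) (not_le_of_gt hlt)
          obtain ⟨x, h1, h2⟩ := key
          exact absurd (hv ⟨toLex ⟨q0, x⟩, rfl, sLex_mk_lt_mk.2 h2⟩)
            (not_le_of_gt (sLex_mk_lt_mk.2 h1))
        · exact absurd (hsub rv hrrat tv t ▸ hlt) (lt_irrefl t)
    · -- greatest lower bound property
      intro v hv
      by_contra hbv
      replace hbv := lt_of_not_ge hbv
      obtain ⟨rv, tv⟩ := v
      rcases lt_trichotomy r rv with hltr | heq | hgtr
      rotate_left 2
      · exact absurd (sLex_le_fst hbv.le) (not_le_of_gt hgtr)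
      rotate_right 2
      · obtain ⟨q, hq1, hq2⟩ := exists_rat_btwn hltr
        exact absurd (hv ⟨toLex ⟨q, Classical.arbitrary _⟩, rfl, sLex_lt_of_fst_lt hq1⟩)
          (not_le_of_gt (sLex_lt_of_fst_lt hq2))
      · subst heq
        have hlt : t < tv := sLex_mk_lt_mk.1 hbv
        by_cases hrrat : ∃ q : ℚ, (q : ℝ) = r
        · obtain ⟨q0, rfl⟩ := hrrat
          have key : ∃ x : L (f q0), t < m q0 (e (f q0) x) ∧ m q0 (e (f q0) x) < tv := by
            have hnotr : ∀ x : L (f q0), m q0 (e (f q0) x) ≠ t := by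
              intro x hx
              exact hbr ⟨toLex ⟨q0, x⟩, show toLex (⟨((q0:ℚ):ℝ), m q0 (e (f q0) x)⟩ : Σ r : ℝ, T r) =
                toLex (⟨((q0:ℚ):ℝ), t⟩ : Σ r : ℝ, T r) from by rw [hx]⟩
            rcases (hm q0).2.2.2 t with ⟨c, hc⟩ | ⟨-, hbel, hnminC⟩ | ⟨hmaxT, -, -⟩
            · have hcr : ¬∃ x, e (f q0) x = c := by
                rintro ⟨x, rfl⟩
                exact hnotr x hc
              obtain ⟨⟨hlubC, x1, hx1⟩, ⟨hglbC, x2, hx2⟩⟩ :=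
                (completion_mem_or_twoSided (he (f q0)) c).resolve_left hcr
              rcases (hm q0).2.2.2 tv with ⟨c', hc'⟩ | ⟨hminT, -, -⟩ | ⟨-, habv', -⟩
              · have hcc' : c < c' := by
                  have := hc' ▸ hc ▸ hlt
                  exact (hmlt q0).lt_iff_lt.1 this
                have : ¬ c' ∈ lowerBounds {x | ∃ a, e (f q0) a = x ∧ c < x} := by
                  intro hlb
                  exact absurd (hglbC.2 hlb) (not_le_of_gt hcc')
                obtain ⟨y, ⟨x, rfl, hyc⟩, hy⟩ : ∃ y ∈ {x | ∃ a, e (f q0) a = x ∧ c < x}, y < c' := by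
                  by_contra hcon
                  push_neg at hcon
                  exact this fun y hy => hcon y hy
                refine ⟨x, ?_, ?_⟩
                · rw [← hc]
                  exact (hmlt q0) hyc
                · rw [← hc']
                  exact (hmlt q0) hy
              · exact absurd (hminT t) (not_le_of_gt hlt)
              · exact ⟨x2, by rw [← hc]; exact (hmlt q0) hx2, habv' _⟩
            · -- t is the bottom; C (f q0) has no min
              rcases (hm q0).2.2.2 tv with ⟨c', hc'⟩ | ⟨hminT, -, -⟩ | ⟨-, habv', -⟩
              · obtain ⟨x, hx⟩ := below_of_noMin (he (f q0)) hnminC c'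
                exact ⟨x, hbel _, by rw [← hc']; exact (hmlt q0) hx⟩
              · exact absurd (hminT t) (not_le_of_gt hlt)
              · exact ⟨Classical.arbitrary _, hbel _, habv' _⟩
            · exact absurd (hmaxT tv) (not_le_of_gt hlt)
          obtain ⟨x, h1, h2⟩ := key
          exact absurd (hv ⟨toLex ⟨q0, x⟩, rfl, sLex_mk_lt_mk.2 h1⟩)
            (not_le_of_gt (sLex_mk_lt_mk.2 h2))
        · exact absurd (hsub r hrrat tv t ▸ hlt) (lt_irrefl t)
  exact completion_unique heD (isCompletion_of_twoSided hBc hts)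
end
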